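/- arXiv:1706.09972 — 4 statements merged into one kernel-verified Lean document; each statement's English description precedes it below -/
import Mathlib

section
/- There exists a constant c > 0 such that the probability, over a pair of permutations x, y chosen independently and uniformly at random from the symmetric group S_n, that every nontrivial word w in the free group F_2 of length at most c·n^{1/3} satisfies w(x, y) ≠ 1, tends to 1 as n → ∞. -/
open Classical Filter

/-- The probability of an event `E` over a pair of permutations of `{1, …, n}` chosen
independently and uniformly at random. -/
noncomputable def probPair (n : ℕ)
    (E : Equiv.Perm (Fin n) × Equiv.Perm (Fin n) → Prop) : ℝ :=
  ((Finset.univ.filter E).card : ℝ) /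
    (Fintype.card (Equiv.Perm (Fin n) × Equiv.Perm (Fin n)) : ℝ)

namespace NSR

open Finset

abbrev PP (n : ℕ) := Equiv.Perm (Fin n) × Equiv.Perm (Fin n)
abbrev Entry (n : ℕ) := Fin 2 × Fin n × Fin n
abbrev Letter := Fin 2 × Bool

variable {n : ℕ}

/-- The pair as a function on `Fin 2`. -/
def F (p : PP n) : Fin 2 → Equiv.Perm (Fin n) := ![p.1, p.2]

/-- Classical count of pairs satisfying a predicate. -/
noncomputable def cnt (n : ℕ) (P : PP n → Prop) : ℕ :=
  (@Finset.filter _ P (Classical.decPred P) Finset.univ).card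

/-- `p` extends the partial information `H` : entry `(i,a,b)` means `F p i a = b`. -/
def Ext (p : PP n) (H : Finset (Entry n)) : Prop := ∀ e ∈ H, F p e.1 e.2.1 = e.2.2

/-- one step of the walk -/
def app (p : PP n) (s : Letter) (t : Fin n) : Fin n :=
  cond s.2 (F p s.1 t) ((F p s.1)⁻¹ t)

def walk (p : PP n) (L : List Letter) (t : Fin n) : Fin n :=
  L.foldl (fun u s => app p s u) t

/-- the entry recording `app p s t = r`. -/
def ent (s : Letter) (t r : Fin n) : Entry n := cond s.2 (s.1, t, r) (s.1, r, t)

/-- the query of letter `s` at point `t` is undetermined by `H`. -/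
def Undef (H : Finset (Entry n)) (s : Letter) (t : Fin n) : Prop :=
  cond s.2 (∀ y, (s.1, t, y) ∉ H) (∀ x, (s.1, x, t) ∉ H)

/-- all points mentioned in `H`. -/
def V (H : Finset (Entry n)) : Finset (Fin n) :=
  H.image (fun e => e.2.1) ∪ H.image (fun e => e.2.2)

/-- no cancellation between adjacent letters -/
def NC (L : List Letter) : Prop :=
  List.Chain' (fun s s' : Letter => ¬(s'.1 = s.1 ∧ s'.2 = !s.2)) L

lemma cnt_eq (P : PP n → Prop) [DecidablePred P] :
    cnt n P = (Finset.univ.filter P).card := by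
  unfold cnt; rw [Finset.filter_congr_decidable]

lemma cnt_congr {P Q : PP n → Prop} (h : ∀ p, P p ↔ Q p) : cnt n P = cnt n Q := by
  classical
  simp only [cnt_eq]
  exact congrArg Finset.card (Finset.filter_congr fun x _ => h x)

lemma cnt_mono {P Q : PP n → Prop} (h : ∀ p, P p → Q p) : cnt n P ≤ cnt n Q := by
  classical
  simp only [cnt_eq]
  exact Finset.card_le_card (Finset.monotone_filter_right _ (fun a _ => h a))

lemma cnt_eq_zero {P : PP n → Prop} (h : ∀ p, ¬ P p) : cnt n P = 0 := by
  classical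
  simp only [cnt_eq]
  rw [Finset.filter_false_of_mem fun x _ => h x]
  simp

lemma cnt_eq_sum_fiber (P : PP n → Prop) (f : PP n → Fin n) :
    cnt n P = ∑ r : Fin n, cnt n (fun p => P p ∧ f p = r) := by
  classical
  simp only [cnt_eq]
  rw [Finset.card_eq_sum_card_fiberwise (f := f) (t := Finset.univ)
    (fun x _ => Finset.mem_univ _)]
  refine Finset.sum_congr rfl fun r _ => ?_
  rw [Finset.filter_filter]

lemma sum_fiber_le (P : PP n → Prop) (f : PP n → Fin n) (R : Finset (Fin n)) :
    ∑ r ∈ R, cnt n (fun p => P p ∧ f p = r) ≤ cnt n P := by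
  classical
  calc ∑ r ∈ R, cnt n (fun p => P p ∧ f p = r)
      ≤ ∑ r : Fin n, cnt n (fun p => P p ∧ f p = r) :=
        Finset.sum_le_sum_of_subset (Finset.subset_univ R)
    _ = cnt n P := (cnt_eq_sum_fiber P f).symm

/-- update `i`-th coordinate -/
def upd (p : PP n) (i : Fin 2) (σ : Equiv.Perm (Fin n)) : PP n :=
  if i = 0 then (σ, p.2) else (p.1, σ)

lemma F_upd_same (p : PP n) (i : Fin 2) (σ : Equiv.Perm (Fin n)) : F (upd p i σ) i = σ := by
  fin_cases i <;> simp [upd, F]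

lemma F_upd_other (p : PP n) (i j : Fin 2) (σ : Equiv.Perm (Fin n)) (h : j ≠ i) :
    F (upd p i σ) j = F p j := by
  fin_cases i <;> fin_cases j <;> simp_all [upd, F]

lemma upd_upd (p : PP n) (i : Fin 2) (σ τ : Equiv.Perm (Fin n)) :
    upd (upd p i σ) i τ = upd p i τ := by
  fin_cases i <;> simp [upd]

lemma upd_F_self (p : PP n) (i : Fin 2) : upd p i (F p i) = p := by
  fin_cases i <;> simp [upd, F]

lemma cnt_fiber_swap (H : Finset (Entry n)) (i : Fin 2) (a b b' : Fin n)
    (hb : ∀ x, (i, x, b) ∉ H) (hb' : ∀ x, (i, x, b') ∉ H) :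
    cnt n (fun p => Ext p H ∧ F p i a = b) = cnt n (fun p => Ext p H ∧ F p i a = b') := by
  classical
  simp only [cnt_eq]
  set φ : PP n → PP n := fun p => upd p i (Equiv.swap b b' * F p i) with hφ
  have hFi : ∀ p : PP n, F (φ p) i = Equiv.swap b b' * F p i := fun p => F_upd_same _ _ _
  have hinv : ∀ p, φ (φ p) = p := by
    intro p
    show upd (φ p) i (Equiv.swap b b' * F (φ p) i) = p
    rw [hFi, ← mul_assoc, Equiv.swap_mul_self, one_mul, hφ, upd_upd, upd_F_self]
  have hExt : ∀ p, Ext p H → Ext (φ p) H := by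
    rintro p hE ⟨j, x, y⟩ he
    rcases eq_or_ne j i with rfl | h1
    · show F (φ p) j x = y
      rw [hFi, Equiv.Perm.mul_apply, hE _ he]
      have hy : y ≠ b := fun h => hb x (by rw [← h]; exact he)
      have hy' : y ≠ b' := fun h => hb' x (by rw [← h]; exact he)
      exact Equiv.swap_apply_of_ne_of_ne hy hy'
    · show F (φ p) j x = y
      rw [F_upd_other _ _ _ _ h1]
      exact hE _ he
  have hmem : ∀ (c c' : Fin n), Equiv.swap b b' c = c' →
      ∀ p ∈ Finset.univ.filter (fun p : PP n => Ext p H ∧ F p i a = c),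
        φ p ∈ Finset.univ.filter (fun p : PP n => Ext p H ∧ F p i a = c') := by
    intro c c' hc p hp
    rw [Finset.mem_filter] at hp ⊢
    refine ⟨Finset.mem_univ _, hExt p hp.2.1, ?_⟩
    rw [hFi, Equiv.Perm.mul_apply, hp.2.2, hc]
  exact Finset.card_nbij' φ φ
    (hmem b b' (Equiv.swap_apply_left b b'))
    (hmem b' b (Equiv.swap_apply_right b b'))
    (fun p _ => hinv p) (fun p _ => hinv p)

lemma cnt_fiber_swap' (H : Finset (Entry n)) (i : Fin 2) (a a' b : Fin n)
    (ha : ∀ y, (i, a, y) ∉ H) (ha' : ∀ y, (i, a', y) ∉ H) :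
    cnt n (fun p => Ext p H ∧ F p i a = b) = cnt n (fun p => Ext p H ∧ F p i a' = b) := by
  classical
  simp only [cnt_eq]
  set φ : PP n → PP n := fun p => upd p i (F p i * Equiv.swap a a') with hφ
  have hFi : ∀ p : PP n, F (φ p) i = F p i * Equiv.swap a a' := fun p => F_upd_same _ _ _
  have hinv : ∀ p, φ (φ p) = p := by
    intro p
    show upd (φ p) i (F (φ p) i * Equiv.swap a a') = p
    rw [hFi, mul_assoc, Equiv.swap_mul_self, mul_one, hφ, upd_upd, upd_F_self]
  have hExt : ∀ p, Ext p H → Ext (φ p) H := by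
    rintro p hE ⟨j, x, y⟩ he
    rcases eq_or_ne j i with rfl | h1
    · show F (φ p) j x = y
      have hx : x ≠ a := fun h => ha y (by rw [← h]; exact he)
      have hx' : x ≠ a' := fun h => ha' y (by rw [← h]; exact he)
      rw [hFi, Equiv.Perm.mul_apply, Equiv.swap_apply_of_ne_of_ne hx hx']
      exact hE _ he
    · show F (φ p) j x = y
      rw [F_upd_other _ _ _ _ h1]
      exact hE _ he
  have hmem : ∀ (c c' : Fin n), Equiv.swap a a' c' = c →
      ∀ p ∈ Finset.univ.filter (fun p : PP n => Ext p H ∧ F p i c = b),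
        φ p ∈ Finset.univ.filter (fun p : PP n => Ext p H ∧ F p i c' = b) := by
    intro c c' hc p hp
    rw [Finset.mem_filter] at hp ⊢
    refine ⟨Finset.mem_univ _, hExt p hp.2.1, ?_⟩
    rw [hFi, Equiv.Perm.mul_apply, hc, hp.2.2]
  exact Finset.card_nbij' φ φ
    (hmem a a' (Equiv.swap_apply_right a a'))
    (hmem a' a (Equiv.swap_apply_left a a'))
    (fun p _ => hinv p) (fun p _ => hinv p)

lemma ext_ent_iff (p : PP n) (s : Letter) (t r : Fin n) :
    F p (ent s t r).1 (ent s t r).2.1 = (ent s t r).2.2 ↔ app p s t = r := by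
  rcases s with ⟨i, d⟩
  cases d
  · show F p i r = t ↔ (F p i)⁻¹ t = r
    rw [Equiv.Perm.inv_eq_iff_eq]
    exact eq_comm
  · exact Iff.rfl

lemma ext_insert_iff (p : PP n) (e : Entry n) (H : Finset (Entry n)) :
    Ext p (insert e H) ↔ F p e.1 e.2.1 = e.2.2 ∧ Ext p H := by
  unfold Ext
  exact Finset.forall_mem_insert _ _ _

/-- Key per-entry bound: revealing one fresh entry divides the count by at least `n - M`. -/
lemma key_entry (H : Finset (Entry n)) (s : Letter) (t r : Fin n)
    (hU : Undef H s t) (M : ℕ) (hM : H.card ≤ M) :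
    (n - M) * cnt n (fun p => Ext p H ∧ app p s t = r) ≤ cnt n (fun p => Ext p H) := by
  classical
  rcases s with ⟨i, d⟩
  cases d
  · -- backward letter
    replace hU : ∀ x, (i, x, t) ∉ H := hU
    by_cases hr : ∀ y, (i, r, y) ∉ H
    · set T : Finset (Fin n) := Finset.univ.filter (fun a' => ∀ y, (i, a', y) ∉ H) with hT
      have hTcard : n - M ≤ T.card := by
        have hsub : Finset.univ \ (H.image fun e : Entry n => e.2.1) ⊆ T := by
          intro a' ha'
          rw [Finset.mem_sdiff] at ha'
          rw [hT, Finset.mem_filter]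
          exact ⟨Finset.mem_univ _, fun y hy => ha'.2 (Finset.mem_image.2 ⟨_, hy, rfl⟩)⟩
        calc n - M ≤ n - H.card := Nat.sub_le_sub_left hM n
          _ ≤ n - (H.image fun e : Entry n => e.2.1).card :=
              Nat.sub_le_sub_left Finset.card_image_le n
          _ = (Finset.univ \ (H.image fun e : Entry n => e.2.1)).card := by
              rw [Finset.card_sdiff_of_subset (Finset.subset_univ _), Finset.card_univ, Fintype.card_fin]
          _ ≤ T.card := Finset.card_le_card hsub
      have hiff : ∀ (p : PP n) (a' : Fin n), F p i a' = t ↔ (F p i)⁻¹ t = a' := by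
        intro p a'
        rw [Equiv.Perm.inv_eq_iff_eq]
        exact eq_comm
      have hmain : cnt n (fun p => Ext p H ∧ app p (i, false) t = r)
          = cnt n (fun p => Ext p H ∧ F p i r = t) :=
        cnt_congr fun p => and_congr_right fun _ => (hiff p r).symm
      calc (n - M) * cnt n (fun p => Ext p H ∧ app p (i, false) t = r)
          ≤ T.card * cnt n (fun p => Ext p H ∧ F p i r = t) := by
            rw [hmain]; exact Nat.mul_le_mul_right _ hTcard
        _ = ∑ _a' ∈ T, cnt n (fun p => Ext p H ∧ F p i r = t) := by
            rw [Finset.sum_const, smul_eq_mul]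
        _ = ∑ a' ∈ T, cnt n (fun p => Ext p H ∧ (F p i)⁻¹ t = a') := by
            refine Finset.sum_congr rfl fun a' ha' => ?_
            rw [hT, Finset.mem_filter] at ha'
            rw [← cnt_fiber_swap' H i a' r t ha'.2 hr]
            exact cnt_congr fun p => and_congr_right fun _ => hiff p a'
        _ ≤ cnt n (fun p => Ext p H) := sum_fiber_le _ (fun p => (F p i)⁻¹ t) T
    · push_neg at hr
      obtain ⟨y, hy⟩ := hr
      have h0 : cnt n (fun p => Ext p H ∧ app p (i, false) t = r) = 0 := by
        apply cnt_eq_zero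
        rintro p ⟨hE, happ⟩
        have h1 : F p i r = y := hE _ hy
        have h2 : F p i r = t := by
          have h3 : (F p i)⁻¹ t = r := happ
          rw [Equiv.Perm.inv_eq_iff_eq] at h3
          exact h3.symm
        have h4 : y = t := by rw [← h1]; exact h2
        exact hU r (by rw [← h4]; exact hy)
      rw [h0, Nat.mul_zero]
      exact Nat.zero_le _
  · -- forward letter
    replace hU : ∀ y, (i, t, y) ∉ H := hU
    by_cases hr : ∀ x, (i, x, r) ∉ H
    · set T : Finset (Fin n) := Finset.univ.filter (fun b' => ∀ x, (i, x, b') ∉ H) with hT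
      have hTcard : n - M ≤ T.card := by
        have hsub : Finset.univ \ (H.image fun e : Entry n => e.2.2) ⊆ T := by
          intro b' hb'
          rw [Finset.mem_sdiff] at hb'
          rw [hT, Finset.mem_filter]
          exact ⟨Finset.mem_univ _, fun x hx => hb'.2 (Finset.mem_image.2 ⟨_, hx, rfl⟩)⟩
        calc n - M ≤ n - H.card := Nat.sub_le_sub_left hM n
          _ ≤ n - (H.image fun e : Entry n => e.2.2).card :=
              Nat.sub_le_sub_left Finset.card_image_le n
          _ = (Finset.univ \ (H.image fun e : Entry n => e.2.2)).card := by
              rw [Finset.card_sdiff_of_subset (Finset.subset_univ _), Finset.card_univ, Fintype.card_fin]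
          _ ≤ T.card := Finset.card_le_card hsub
      calc (n - M) * cnt n (fun p => Ext p H ∧ app p (i, true) t = r)
          ≤ T.card * cnt n (fun p => Ext p H ∧ F p i t = r) := by
            exact Nat.mul_le_mul_right _ hTcard
        _ = ∑ _b' ∈ T, cnt n (fun p => Ext p H ∧ F p i t = r) := by
            rw [Finset.sum_const, smul_eq_mul]
        _ = ∑ b' ∈ T, cnt n (fun p => Ext p H ∧ F p i t = b') := by
            refine Finset.sum_congr rfl fun b' hb' => ?_
            rw [hT, Finset.mem_filter] at hb'
            exact cnt_fiber_swap H i t r b' hr hb'.2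
        _ ≤ cnt n (fun p => Ext p H) := sum_fiber_le _ (fun p => F p i t) T
    · push_neg at hr
      obtain ⟨x, hx⟩ := hr
      have h0 : cnt n (fun p => Ext p H ∧ app p (i, true) t = r) = 0 := by
        apply cnt_eq_zero
        rintro p ⟨hE, happ⟩
        have h1 : F p i x = r := hE _ hx
        have h2 : F p i t = r := happ
        have h4 : x = t := (F p i).injective (by rw [h1, h2])
        exact hU r (by rw [← h4]; exact hx)
      rw [h0, Nat.mul_zero]
      exact Nat.zero_le _

lemma card_V_le (H : Finset (Entry n)) : (V H).card ≤ 2 * H.card := by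
  classical
  calc (V H).card ≤ (H.image fun e => e.2.1).card + (H.image fun e => e.2.2).card :=
        Finset.card_union_le _ _
    _ ≤ H.card + H.card := Nat.add_le_add Finset.card_image_le Finset.card_image_le
    _ = 2 * H.card := (two_mul _).symm

lemma undef_of_not_mem_V (H : Finset (Entry n)) (s : Letter) (t : Fin n) (h : t ∉ V H) :
    Undef H s t := by
  rcases s with ⟨i, d⟩
  cases d
  · intro x hx
    exact h (Finset.mem_union_right _ (Finset.mem_image.2 ⟨(i, x, t), hx, rfl⟩))
  · intro y hy
    exact h (Finset.mem_union_left _ (Finset.mem_image.2 ⟨(i, t, y), hy, rfl⟩))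

lemma undef_step (H : Finset (Entry n)) (s s' : Letter) (t r : Fin n)
    (hrV : r ∉ V H) (hrt : r ≠ t) (hss' : ¬(s'.1 = s.1 ∧ s'.2 = !s.2)) :
    Undef (insert (ent s t r) H) s' r := by
  have hr1 : ∀ i z, (i, r, z) ∉ H := fun i z hz =>
    hrV (Finset.mem_union_left _ (Finset.mem_image.2 ⟨_, hz, rfl⟩))
  have hr2 : ∀ i z, (i, z, r) ∉ H := fun i z hz =>
    hrV (Finset.mem_union_right _ (Finset.mem_image.2 ⟨_, hz, rfl⟩))
  rcases s with ⟨i, d⟩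
  rcases s' with ⟨i', d'⟩
  simp only at hss'
  cases d <;> cases d'
  · -- s backward, s' backward : ent = (i, r, t), goal : ∀ z, (i', z, r) ∉ insert
    intro z hz
    rcases Finset.mem_insert.1 hz with h | h
    · simp only [ent, cond_false, Prod.mk.injEq] at h
      exact hrt h.2.2
    · exact hr2 i' z h
  · -- s backward, s' forward : ent = (i, r, t), goal : ∀ z, (i', r, z) ∉ insert
    intro z hz
    rcases Finset.mem_insert.1 hz with h | h
    · simp only [ent, cond_false, Prod.mk.injEq] at h
      exact hss' ⟨h.1, rfl⟩
    · exact hr1 i' z h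
  · -- s forward, s' backward : ent = (i, t, r), goal : ∀ z, (i', z, r) ∉ insert
    intro z hz
    rcases Finset.mem_insert.1 hz with h | h
    · simp only [ent, cond_true, Prod.mk.injEq] at h
      exact hss' ⟨h.1, rfl⟩
    · exact hr2 i' z h
  · -- s forward, s' forward : ent = (i, t, r), goal : ∀ z, (i', r, z) ∉ insert
    intro z hz
    rcases Finset.mem_insert.1 hz with h | h
    · simp only [ent, cond_true, Prod.mk.injEq] at h
      exact hrt h.2.1
    · exact hr1 i' z h

/-- Inner induction: the walk from `t` along a reduced word, inside history `H`,
reaches `q` with (relative) probability at most `|L| (2M+2)/(n-M)`, even after reserving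
the event `W` which will be used with budget `k`. -/
lemma inner (W : PP n → Prop) (ℓ k M : ℕ)
    (IH : ∀ H : Finset (Entry n), H.card + k * ℓ ≤ M →
      2 ^ k * cnt n (fun p => Ext p H ∧ W p) ≤ cnt n (fun p => Ext p H)) :
    ∀ (L : List Letter) (H : Finset (Entry n)) (t q : Fin n),
      NC L → (∀ s ∈ L.head?, Undef H s t) → (t = q → L ≠ []) →
      H.card + L.length + k * ℓ ≤ M →
      (n - M) * (2 ^ k * cnt n (fun p => Ext p H ∧ W p ∧ walk p L t = q)) ≤
        L.length * (2 * M + 2) * cnt n (fun p => Ext p H) := by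
  intro L
  induction L with
  | nil =>
    intro H t q _ _ htq _
    have h0 : cnt n (fun p => Ext p H ∧ W p ∧ walk p [] t = q) = 0 := by
      apply cnt_eq_zero
      rintro p ⟨_, _, hw⟩
      exact htq hw rfl
    rw [h0]
    simp
  | cons s L' ih =>
    intro H t q hNC hU htq hcard
    have hcard' : H.card + (L'.length + 1) + k * ℓ ≤ M := by simpa using hcard
    have hHM : H.card ≤ M := by omega
    have hNC' := List.isChain_cons.1 hNC
    set B : Finset (Fin n) := V H ∪ {t, q} with hB
    have hBcard : B.card ≤ 2 * M + 2 := by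
      calc B.card ≤ (V H).card + ({t, q} : Finset (Fin n)).card := Finset.card_union_le _ _
        _ ≤ 2 * H.card + 2 := by
            refine Nat.add_le_add (card_V_le H) ?_
            calc ({t, q} : Finset (Fin n)).card ≤ ({q} : Finset (Fin n)).card + 1 :=
                Finset.card_insert_le _ _
              _ = 2 := by rw [Finset.card_singleton]
        _ ≤ 2 * M + 2 := by omega
    -- the history extended by the first step landing at r
    have h3 : ∀ r : Fin n, cnt n (fun p => Ext p (insert (ent s t r) H)) =
        cnt n (fun p => Ext p H ∧ app p s t = r) := by
      intro r
      refine cnt_congr fun p => ?_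
      rw [ext_insert_iff, ext_ent_iff]
      exact and_comm
    -- bound for collision steps
    have hbad : ∀ r ∈ B,
        (n - M) * (2 ^ k *
          cnt n (fun p => (Ext p H ∧ W p ∧ walk p (s :: L') t = q) ∧ app p s t = r)) ≤
        cnt n (fun p => Ext p H) := by
      intro r _
      have h1 : cnt n (fun p => (Ext p H ∧ W p ∧ walk p (s :: L') t = q) ∧ app p s t = r)
          ≤ cnt n (fun p => Ext p (insert (ent s t r) H) ∧ W p) := by
        apply cnt_mono
        rintro p ⟨⟨hE, hW, _⟩, happ⟩
        exact ⟨(ext_insert_iff p _ H).2 ⟨(ext_ent_iff p s t r).2 happ, hE⟩, hW⟩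
      have h2 := IH (insert (ent s t r) H) (by
        have := Finset.card_insert_le (ent s t r) H
        omega)
      have h4 := key_entry H s t r (hU s rfl) M hHM
      calc (n - M) * (2 ^ k *
            cnt n (fun p => (Ext p H ∧ W p ∧ walk p (s :: L') t = q) ∧ app p s t = r))
          ≤ (n - M) * (2 ^ k * cnt n (fun p => Ext p (insert (ent s t r) H) ∧ W p)) :=
            Nat.mul_le_mul_left _ (Nat.mul_le_mul_left _ h1)
        _ ≤ (n - M) * cnt n (fun p => Ext p (insert (ent s t r) H)) :=
            Nat.mul_le_mul_left _ h2
        _ = (n - M) * cnt n (fun p => Ext p H ∧ app p s t = r) := by rw [h3 r]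
        _ ≤ cnt n (fun p => Ext p H) := h4
    -- bound for fresh steps
    have hgood : ∀ r ∈ Finset.univ \ B,
        (n - M) * (2 ^ k *
          cnt n (fun p => (Ext p H ∧ W p ∧ walk p (s :: L') t = q) ∧ app p s t = r)) ≤
        L'.length * (2 * M + 2) * cnt n (fun p => Ext p H ∧ app p s t = r) := by
      intro r hr
      rw [Finset.mem_sdiff, hB, Finset.mem_union, Finset.mem_insert, Finset.mem_singleton] at hr
      push_neg at hr
      have hrV : r ∉ V H := hr.2.1
      have hrt : r ≠ t := hr.2.2.1
      have hrq : r ≠ q := hr.2.2.2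
      have h1 : cnt n (fun p => (Ext p H ∧ W p ∧ walk p (s :: L') t = q) ∧ app p s t = r)
          ≤ cnt n (fun p => Ext p (insert (ent s t r) H) ∧ W p ∧ walk p L' r = q) := by
        apply cnt_mono
        rintro p ⟨⟨hE, hW, hwalk⟩, happ⟩
        refine ⟨(ext_insert_iff p _ H).2 ⟨(ext_ent_iff p s t r).2 happ, hE⟩, hW, ?_⟩
        rw [← happ]
        exact hwalk
      have h2 := ih (insert (ent s t r) H) r q hNC'.2
        (fun s' hs' => undef_step H s s' t r hrV hrt (hNC'.1 s' hs'))
        (fun h => absurd h hrq)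
        (by have := Finset.card_insert_le (ent s t r) H; omega)
      calc (n - M) * (2 ^ k *
            cnt n (fun p => (Ext p H ∧ W p ∧ walk p (s :: L') t = q) ∧ app p s t = r))
          ≤ (n - M) * (2 ^ k *
            cnt n (fun p => Ext p (insert (ent s t r) H) ∧ W p ∧ walk p L' r = q)) :=
            Nat.mul_le_mul_left _ (Nat.mul_le_mul_left _ h1)
        _ ≤ L'.length * (2 * M + 2) * cnt n (fun p => Ext p (insert (ent s t r) H)) := h2
        _ = L'.length * (2 * M + 2) * cnt n (fun p => Ext p H ∧ app p s t = r) := by rw [h3 r]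
    -- assemble
    have hdec := cnt_eq_sum_fiber (fun p => Ext p H ∧ W p ∧ walk p (s :: L') t = q)
      (fun p => app p s t)
    calc (n - M) * (2 ^ k * cnt n (fun p => Ext p H ∧ W p ∧ walk p (s :: L') t = q))
        = ∑ r : Fin n, (n - M) * (2 ^ k *
            cnt n (fun p => (Ext p H ∧ W p ∧ walk p (s :: L') t = q) ∧ app p s t = r)) := by
          rw [hdec, Finset.mul_sum, Finset.mul_sum]
      _ = (∑ r ∈ Finset.univ \ B, (n - M) * (2 ^ k *
            cnt n (fun p => (Ext p H ∧ W p ∧ walk p (s :: L') t = q) ∧ app p s t = r)))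
          + ∑ r ∈ B, (n - M) * (2 ^ k *
            cnt n (fun p => (Ext p H ∧ W p ∧ walk p (s :: L') t = q) ∧ app p s t = r)) :=
          (Finset.sum_sdiff (Finset.subset_univ B)).symm
      _ ≤ L'.length * (2 * M + 2) * cnt n (fun p => Ext p H)
          + (2 * M + 2) * cnt n (fun p => Ext p H) := by
          refine Nat.add_le_add ?_ ?_
          · calc ∑ r ∈ Finset.univ \ B, (n - M) * (2 ^ k *
                cnt n (fun p => (Ext p H ∧ W p ∧ walk p (s :: L') t = q) ∧ app p s t = r))
                ≤ ∑ r ∈ Finset.univ \ B, L'.length * (2 * M + 2) *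
                    cnt n (fun p => Ext p H ∧ app p s t = r) :=
                  Finset.sum_le_sum hgood
              _ = L'.length * (2 * M + 2) * ∑ r ∈ Finset.univ \ B,
                    cnt n (fun p => Ext p H ∧ app p s t = r) := by rw [Finset.mul_sum]
              _ ≤ L'.length * (2 * M + 2) * cnt n (fun p => Ext p H) :=
                  Nat.mul_le_mul_left _ (sum_fiber_le _ _ _)
          · calc ∑ r ∈ B, (n - M) * (2 ^ k *
                cnt n (fun p => (Ext p H ∧ W p ∧ walk p (s :: L') t = q) ∧ app p s t = r))
                ≤ ∑ _r ∈ B, cnt n (fun p => Ext p H) := Finset.sum_le_sum hbad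
              _ = B.card * cnt n (fun p => Ext p H) := by
                  rw [Finset.sum_const, smul_eq_mul]
              _ ≤ (2 * M + 2) * cnt n (fun p => Ext p H) :=
                  Nat.mul_le_mul_right _ hBcard
      _ = (s :: L').length * (2 * M + 2) * cnt n (fun p => Ext p H) := by
          simp only [List.length_cons]
          ring

lemma prod_walk (p : PP n) (L : List Letter) (q : Fin n) :
    (L.map fun x : Letter => cond x.2 (F p x.1) (F p x.1)⁻¹).prod q = walk p L.reverse q := by
  induction L generalizing q with
  | nil => rfl
  | cons x L ihL =>
    rw [List.map_cons, List.prod_cons, Equiv.Perm.mul_apply, ihL, List.reverse_cons]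
    unfold walk
    rw [List.foldl_append]
    rcases x with ⟨i, d⟩
    cases d <;> rfl

lemma walk_lift (p : PP n) (w : FreeGroup (Fin 2)) (q : Fin n) :
    (FreeGroup.lift (F p) w) q = walk p w.toWord.reverse q := by
  conv_lhs => rw [← FreeGroup.mk_toWord (x := w)]
  rw [FreeGroup.lift_mk]
  exact prod_walk p w.toWord q

lemma noPat (w : FreeGroup (Fin 2)) (L₁ L₂ : List Letter) (x : Fin 2) (b : Bool) :
    w.toWord ≠ L₁ ++ (x, b) :: (x, !b) :: L₂ := by
  intro h
  have h2 : FreeGroup.reduce w.toWord = L₁ ++ (x, b) :: (x, !b) :: L₂ := by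
    rw [FreeGroup.reduce_toWord]; exact h
  exact FreeGroup.reduce.not h2

lemma chain'_of_noPat : ∀ L : List Letter,
    (∀ (L₁ L₂ : List Letter) (x : Fin 2) (b : Bool), L ≠ L₁ ++ (x, b) :: (x, !b) :: L₂) →
    List.Chain' (fun s s' : Letter => ¬(s'.1 = s.1 ∧ s'.2 = !s.2)) L := by
  intro L
  induction L with
  | nil => intro _; exact List.isChain_nil
  | cons a l ih =>
    intro h
    refine List.isChain_cons.2 ?_
    constructor
    · intro c hc hac
      cases l with
      | nil => simp at hc
      | cons b' l' =>
        have hbb : b' = c := by simpa using hc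
        subst hbb
        obtain ⟨h1, h2⟩ := hac
        have hb' : b' = (a.1, !a.2) := Prod.ext h1 h2
        refine h [] l' a.1 a.2 ?_
        rw [List.nil_append, Prod.mk.eta, ← hb']
    · apply ih
      intro L₁ L₂ x b hl
      exact h (a :: L₁) L₂ x b (by rw [List.cons_append, hl])

lemma NC_steps (w : FreeGroup (Fin 2)) : NC w.toWord.reverse := by
  apply chain'_of_noPat
  intro L₁ L₂ x b h
  apply noPat w L₂.reverse L₁.reverse x (!b)
  have h2 := congrArg List.reverse h
  rw [List.reverse_reverse] at h2
  rw [h2]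
  simp [List.reverse_append, Bool.not_not, List.append_assoc]

/-- Main counting estimate: for nontrivial `w` and `9 k ‖w‖² ≤ n`,
at most a `2^{-k}` fraction of pairs satisfy `w(x,y) = 1`. -/
lemma outer (w : FreeGroup (Fin 2)) (hw : w ≠ 1) (k : ℕ)
    (hn : 9 * k * (FreeGroup.norm w) ^ 2 ≤ n) :
    2 ^ k * cnt n (fun p => FreeGroup.lift (F p) w = 1) ≤ cnt n (fun _ => True) := by
  classical
  set ℓ := FreeGroup.norm w with hℓ
  have hℓ1 : 1 ≤ ℓ := by
    rcases Nat.eq_zero_or_pos ℓ with h | h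
    · exact absurd (FreeGroup.norm_eq_zero.1 h) hw
    · exact h
  rcases Nat.eq_zero_or_pos k with rfl | hk
  · simpa using cnt_mono (n := n)
      (P := fun p => FreeGroup.lift (F p) w = 1) (Q := fun _ => True) (fun p _ => trivial)
  set W : PP n → Prop := fun p => FreeGroup.lift (F p) w = 1 with hWdef
  set M := k * ℓ with hM
  have hn' : 9 * k * (ℓ * ℓ) ≤ n := by rw [← pow_two]; exact hn
  have hn'' : 9 * (k * (ℓ * ℓ)) ≤ n := by linarith [hn']
  have hXY : k * ℓ ≤ k * (ℓ * ℓ) := Nat.mul_le_mul_left _ (Nat.le_mul_of_pos_left ℓ hℓ1)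
  have hX1 : 1 ≤ k * ℓ := Nat.mul_pos hk hℓ1
  have hℓY : ℓ ≤ k * (ℓ * ℓ) :=
    le_trans (Nat.le_mul_of_pos_left ℓ hℓ1) (Nat.le_mul_of_pos_left _ hk)
  have hnum1 : 2 * M + 1 ≤ n := by rw [hM]; linarith
  have hnum2 : 2 * (ℓ * (2 * M + 2)) + M ≤ n := by
    have key : 2 * (ℓ * (2 * M + 2)) + M = 4 * (k * (ℓ * ℓ)) + 4 * ℓ + k * ℓ := by
      rw [hM]; ring
    rw [key]
    linarith
  set steps := w.toWord.reverse with hsteps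
  have hlen : steps.length = ℓ := by
    rw [hsteps, List.length_reverse]
    rfl
  have hne : steps ≠ [] := by
    intro h0
    rw [h0] at hlen
    simp at hlen
    omega
  have main : ∀ j : ℕ, ∀ H : Finset (Entry n), H.card + j * ℓ ≤ M →
      2 ^ j * cnt n (fun p => Ext p H ∧ W p) ≤ cnt n (fun p => Ext p H) := by
    intro j
    induction j with
    | zero =>
      intro H _
      simpa using cnt_mono (n := n) (P := fun p => Ext p H ∧ W p)
        (Q := fun p => Ext p H) (fun p h => h.1)
    | succ j ihj =>
      intro H hH
      have hHM : H.card ≤ M := le_trans (Nat.le_add_right _ _) hH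
      have hVlt : (V H).card < n := by
        have := card_V_le H
        omega
      obtain ⟨q, hq⟩ : ∃ q : Fin n, q ∉ V H := by
        have hne' : (Finset.univ \ V H).Nonempty := by
          rw [← Finset.card_pos, Finset.card_sdiff_of_subset (Finset.subset_univ _), Finset.card_univ,
            Fintype.card_fin]
          omega
        obtain ⟨q, hq⟩ := hne'
        rw [Finset.mem_sdiff] at hq
        exact ⟨q, hq.2⟩
      have h1 : cnt n (fun p => Ext p H ∧ W p)
          ≤ cnt n (fun p => Ext p H ∧ W p ∧ walk p steps q = q) := by
        apply cnt_mono
        rintro p ⟨hE, hWp⟩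
        refine ⟨hE, hWp, ?_⟩
        rw [hsteps, ← walk_lift p w q]
        rw [show FreeGroup.lift (F p) w = 1 from hWp]
        rfl
      have h2 := inner W ℓ j M ihj steps H q q (by rw [hsteps]; exact NC_steps w)
        (fun s _ => undef_of_not_mem_V H s q hq)
        (fun _ => hne)
        (by rw [hlen]; have : (j + 1) * ℓ = j * ℓ + ℓ := by ring
            omega)
      have hMn : M < n := by omega
      have hpos : 0 < n - M := by omega
      refine Nat.le_of_mul_le_mul_left ?_ hpos
      calc (n - M) * (2 ^ (j + 1) * cnt n (fun p => Ext p H ∧ W p))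
          ≤ (n - M) * (2 ^ (j + 1) * cnt n (fun p => Ext p H ∧ W p ∧ walk p steps q = q)) :=
            Nat.mul_le_mul_left _ (Nat.mul_le_mul_left _ h1)
        _ = 2 * ((n - M) * (2 ^ j * cnt n (fun p => Ext p H ∧ W p ∧ walk p steps q = q))) := by
            rw [pow_succ]; ring
        _ ≤ 2 * (steps.length * (2 * M + 2) * cnt n (fun p => Ext p H)) :=
            Nat.mul_le_mul_left _ h2
        _ = 2 * (ℓ * (2 * M + 2)) * cnt n (fun p => Ext p H) := by rw [hlen]; ring
        _ ≤ (n - M) * cnt n (fun p => Ext p H) := by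
            refine Nat.mul_le_mul_right _ ?_
            omega
  have hfin := main k ∅ (by simp [hM])
  have e1 : cnt n (fun p => Ext p (∅ : Finset (Entry n)) ∧ W p) = cnt n W := by
    refine cnt_congr fun p => ?_
    constructor
    · exact fun h => h.2
    · exact fun h => ⟨fun e he => absurd he (Finset.notMem_empty e), h⟩
  have e2 : cnt n (fun p => Ext p (∅ : Finset (Entry n))) = cnt n (fun _ => True) := by
    refine cnt_congr fun p => ?_
    constructor
    · exact fun _ => trivial
    · exact fun _ e he => absurd he (Finset.notMem_empty e)
  rw [e1, e2] at hfin
  exact hfin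

lemma words_finset (m : ℕ) : ∃ S : Finset (FreeGroup (Fin 2)),
    S.card ≤ 4 ^ (m + 1) ∧ (∀ w ∈ S, FreeGroup.norm w ≤ m) ∧
    ∀ w : FreeGroup (Fin 2), FreeGroup.norm w ≤ m → w ∈ S := by
  classical
  refine ⟨(Finset.range (m + 1)).biUnion (fun j =>
    (Finset.univ : Finset (List.Vector Letter j)).image
      (fun v => FreeGroup.mk v.toList)), ?_, ?_, ?_⟩
  · calc ((Finset.range (m + 1)).biUnion (fun j =>
        (Finset.univ : Finset (List.Vector Letter j)).image
          (fun v => FreeGroup.mk v.toList))).card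
        ≤ ∑ j ∈ Finset.range (m + 1),
            ((Finset.univ : Finset (List.Vector Letter j)).image
              (fun v => FreeGroup.mk v.toList)).card := Finset.card_biUnion_le
      _ ≤ ∑ j ∈ Finset.range (m + 1), 4 ^ j := by
          refine Finset.sum_le_sum fun j _ => ?_
          calc ((Finset.univ : Finset (List.Vector Letter j)).image
                (fun v => FreeGroup.mk v.toList)).card
              ≤ (Finset.univ : Finset (List.Vector Letter j)).card := Finset.card_image_le
            _ = 4 ^ j := by
                rw [Finset.card_univ, card_vector]
                norm_num
      _ ≤ 4 ^ (m + 1) :=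
          le_of_lt (Nat.geomSum_lt (by norm_num) (fun j hj => Finset.mem_range.1 hj))
  · intro w hw
    rw [Finset.mem_biUnion] at hw
    obtain ⟨j, hj, hw⟩ := hw
    rw [Finset.mem_image] at hw
    obtain ⟨v, _, rfl⟩ := hw
    calc FreeGroup.norm (FreeGroup.mk v.toList) ≤ v.toList.length := FreeGroup.norm_mk_le
      _ = j := v.toList_length
      _ ≤ m := Nat.lt_succ_iff.1 (Finset.mem_range.1 hj)
  · intro w hw
    rw [Finset.mem_biUnion]
    refine ⟨w.toWord.length, Finset.mem_range.2 (Nat.lt_succ_of_le hw), ?_⟩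
    rw [Finset.mem_image]
    exact ⟨⟨w.toWord, rfl⟩, Finset.mem_univ _, FreeGroup.mk_toWord⟩

lemma cnt_exists_le (S : Finset (FreeGroup (Fin 2))) (Q : FreeGroup (Fin 2) → PP n → Prop) :
    cnt n (fun p => ∃ w ∈ S, Q w p) ≤ ∑ w ∈ S, cnt n (Q w) := by
  classical
  simp only [cnt_eq]
  calc (Finset.univ.filter fun p : PP n => ∃ w ∈ S, Q w p).card
      ≤ (S.biUnion fun w => Finset.univ.filter (Q w)).card := by
        apply Finset.card_le_card
        intro p hp
        rw [Finset.mem_filter] at hp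
        obtain ⟨-, w, hwS, hq⟩ := hp
        exact Finset.mem_biUnion.2 ⟨w, hwS, Finset.mem_filter.2 ⟨Finset.mem_univ _, hq⟩⟩
    _ ≤ ∑ w ∈ S, (Finset.univ.filter (Q w)).card := Finset.card_biUnion_le

lemma bad_cnt (m k : ℕ) (h : 9 * k * m ^ 2 ≤ n) :
    2 ^ k * cnt n (fun p => ∃ w : FreeGroup (Fin 2),
        w ≠ 1 ∧ FreeGroup.norm w ≤ m ∧ FreeGroup.lift (F p) w = 1) ≤
      4 ^ (m + 1) * cnt n (fun _ => True) := by
  classical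
  obtain ⟨S, hScard, hSnorm, hSmem⟩ := words_finset m
  set S' := S.filter (fun w => w ≠ 1) with hS'
  have h1 : cnt n (fun p => ∃ w : FreeGroup (Fin 2), w ≠ 1 ∧ FreeGroup.norm w ≤ m ∧
      FreeGroup.lift (F p) w = 1) ≤ ∑ w ∈ S',
      cnt n (fun p => FreeGroup.lift (F p) w = 1) := by
    refine le_trans (cnt_mono ?_) (cnt_exists_le S' _)
    rintro p ⟨w, hw1, hwm, hwl⟩
    exact ⟨w, Finset.mem_filter.2 ⟨hSmem w hwm, hw1⟩, hwl⟩
  calc 2 ^ k * cnt n (fun p => ∃ w : FreeGroup (Fin 2),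
        w ≠ 1 ∧ FreeGroup.norm w ≤ m ∧ FreeGroup.lift (F p) w = 1)
      ≤ 2 ^ k * ∑ w ∈ S', cnt n (fun p => FreeGroup.lift (F p) w = 1) :=
        Nat.mul_le_mul_left _ h1
    _ = ∑ w ∈ S', 2 ^ k * cnt n (fun p => FreeGroup.lift (F p) w = 1) := Finset.mul_sum _ _ _
    _ ≤ ∑ _w ∈ S', cnt n (fun _ => True) := by
        refine Finset.sum_le_sum fun w hw => ?_
        rw [hS', Finset.mem_filter] at hw
        refine outer w hw.2 k (le_trans ?_ h)
        exact Nat.mul_le_mul_left _ (Nat.pow_le_pow_left (hSnorm w hw.1) 2)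
    _ = S'.card * cnt n (fun _ => True) := by rw [Finset.sum_const, smul_eq_mul]
    _ ≤ 4 ^ (m + 1) * cnt n (fun _ => True) := by
        refine Nat.mul_le_mul_right _ (le_trans ?_ hScard)
        exact Finset.card_filter_le _ _

lemma cnt_true (n : ℕ) : cnt n (fun _ => True) = Fintype.card (PP n) := by
  classical
  rw [cnt_eq, Finset.filter_true, Finset.card_univ]

end NSR

theorem no_short_relations_whp :
    ∃ c > (0 : ℝ),
      Tendsto (fun n : ℕ =>
          probPair n (fun p =>
            ∀ w : FreeGroup (Fin 2), w ≠ 1 →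
              (FreeGroup.norm w : ℝ) ≤ c * (n : ℝ) ^ ((1 : ℝ) / 3) →
              FreeGroup.lift ![p.1, p.2] w ≠ 1))
        atTop (nhds 1) := by
  classical
  refine ⟨1/10, by norm_num, ?_⟩
  have c3 : ∀ n : ℕ, (0:ℝ) ≤ (1/10 : ℝ) * (n : ℝ) ^ ((1:ℝ)/3) := fun n => by positivity
  set m : ℕ → ℕ := fun n => ⌊(1/10 : ℝ) * (n : ℝ) ^ ((1:ℝ)/3)⌋₊ with hmdef
  set K : ℕ → ℕ := fun n => n / (9 * (m n)^2) with hKdef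
  set Bad : (n : ℕ) → NSR.PP n → Prop := fun n p => ∃ w : FreeGroup (Fin 2),
      w ≠ 1 ∧ FreeGroup.norm w ≤ m n ∧ FreeGroup.lift (NSR.F p) w = 1 with hBdef
  set β : ℕ → ℝ := fun n =>
    (NSR.cnt n (Bad n) : ℝ) / (Fintype.card (NSR.PP n) : ℝ) with hβdef
  have htotpos : ∀ n : ℕ, (0:ℝ) < (Fintype.card (NSR.PP n) : ℝ) := by
    intro n
    exact_mod_cast Fintype.card_pos
  have hble : ∀ n : ℕ, NSR.cnt n (Bad n) ≤ Fintype.card (NSR.PP n) := by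
    intro n
    rw [← NSR.cnt_true]
    exact NSR.cnt_mono fun p _ => trivial
  -- the probability equals 1 - β n
  have hprob : ∀ n : ℕ, probPair n (fun p =>
      ∀ w : FreeGroup (Fin 2), w ≠ 1 →
        (FreeGroup.norm w : ℝ) ≤ (1/10 : ℝ) * (n : ℝ) ^ ((1 : ℝ) / 3) →
        FreeGroup.lift ![p.1, p.2] w ≠ 1) = 1 - β n := by
    intro n
    have hEiff : ∀ p : NSR.PP n, (∀ w : FreeGroup (Fin 2), w ≠ 1 →
        (FreeGroup.norm w : ℝ) ≤ (1/10 : ℝ) * (n : ℝ) ^ ((1 : ℝ) / 3) →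
        FreeGroup.lift ![p.1, p.2] w ≠ 1) ↔ ¬ Bad n p := by
      intro p
      constructor
      · rintro h ⟨w, hw1, hwm, hwl⟩
        exact h w hw1 ((Nat.le_floor_iff (c3 n)).1 hwm) hwl
      · intro hnb w hw1 hwr hwl
        exact hnb ⟨w, hw1, Nat.le_floor hwr, hwl⟩
    have hcard : (Finset.univ.filter (fun p : NSR.PP n =>
        ∀ w : FreeGroup (Fin 2), w ≠ 1 →
          (FreeGroup.norm w : ℝ) ≤ (1/10 : ℝ) * (n : ℝ) ^ ((1 : ℝ) / 3) →
          FreeGroup.lift ![p.1, p.2] w ≠ 1)).card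
        = Fintype.card (NSR.PP n) - NSR.cnt n (Bad n) := by
      rw [NSR.cnt_eq]
      rw [show (Finset.univ.filter (fun p : NSR.PP n =>
          ∀ w : FreeGroup (Fin 2), w ≠ 1 →
            (FreeGroup.norm w : ℝ) ≤ (1/10 : ℝ) * (n : ℝ) ^ ((1 : ℝ) / 3) →
            FreeGroup.lift ![p.1, p.2] w ≠ 1))
          = Finset.univ.filter (fun p : NSR.PP n => ¬ Bad n p) from
        Finset.filter_congr fun p _ => hEiff p]
      rw [Finset.filter_not, Finset.card_sdiff_of_subset (Finset.filter_subset _ _), Finset.card_univ]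
    unfold probPair
    rw [hcard, Nat.cast_sub (hble n), sub_div, div_self (ne_of_gt (htotpos n))]
  -- m tends to infinity
  have hm_tendsto : Filter.Tendsto m Filter.atTop Filter.atTop := by
    have h1 : Filter.Tendsto (fun x : ℝ => (1/10 : ℝ) * x ^ ((1:ℝ)/3))
        Filter.atTop Filter.atTop :=
      (tendsto_rpow_atTop (by norm_num)).const_mul_atTop (by norm_num)
    have h2 : Filter.Tendsto (fun nn : ℕ => (1/10 : ℝ) * (nn : ℝ) ^ ((1:ℝ)/3))
        Filter.atTop Filter.atTop := h1.comp tendsto_natCast_atTop_atTop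
    exact tendsto_nat_floor_atTop.comp h2
  -- eventual bound on β
  have hev : ∀ᶠ n in Filter.atTop, β n ≤ (1/2 : ℝ) ^ (m n) := by
    filter_upwards [hm_tendsto.eventually_ge_atTop 1] with n hm1
    -- the cube bound
    have hcube : 1000 * (m n)^3 ≤ n := by
      have h1 : (m n : ℝ) ≤ (1/10 : ℝ) * (n : ℝ) ^ ((1:ℝ)/3) := Nat.floor_le (c3 n)
      have h2 : (10 * (m n : ℝ)) ≤ (n : ℝ) ^ ((1:ℝ)/3) := by linarith
      have h3 : (10 * (m n : ℝ)) ^ (3:ℕ) ≤ ((n : ℝ) ^ ((1:ℝ)/3)) ^ (3:ℕ) :=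
        pow_le_pow_left₀ (by positivity) h2 3
      have h4 : ((n : ℝ) ^ ((1:ℝ)/3)) ^ (3:ℕ) = (n : ℝ) := by
        rw [← Real.rpow_natCast ((n : ℝ) ^ ((1:ℝ)/3)) 3, ← Real.rpow_mul (Nat.cast_nonneg n)]
        norm_num
      have h5 : ((1000 * (m n)^3 : ℕ) : ℝ) ≤ (n : ℝ) := by
        push_cast
        calc (1000:ℝ) * (m n : ℝ)^3 = (10 * (m n : ℝ)) ^ (3:ℕ) := by ring
          _ ≤ ((n : ℝ) ^ ((1:ℝ)/3)) ^ (3:ℕ) := h3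
          _ = (n : ℝ) := h4
      exact_mod_cast h5
    have hmpos : 0 < 9 * (m n)^2 := by positivity
    have h9 : 9 * K n * (m n)^2 ≤ n := by
      calc 9 * K n * (m n)^2 = K n * (9 * (m n)^2) := by ring
        _ ≤ n := Nat.div_mul_le_self _ _
    have hKlarge : 3 * m n + 2 ≤ K n := by
      rw [hKdef]
      refine (Nat.le_div_iff_mul_le hmpos).2 ?_
      have e23 : (m n)^2 ≤ (m n)^3 := Nat.pow_le_pow_right hm1 (by norm_num)
      have expand : (3 * m n + 2) * (9 * (m n)^2) = 27 * (m n)^3 + 18 * (m n)^2 := by ring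
      rw [expand]
      linarith
    have hb := NSR.bad_cnt (n := n) (m n) (K n) h9
    rw [NSR.cnt_true] at hb
    have hr : (2:ℝ)^(K n) * (NSR.cnt n (Bad n) : ℝ)
        ≤ (4:ℝ)^(m n + 1) * (Fintype.card (NSR.PP n) : ℝ) := by
      exact_mod_cast hb
    have h2K : (0:ℝ) < 2^(K n) := by positivity
    have hfrac : (4:ℝ)^(m n + 1) ≤ (1/2 : ℝ)^(m n) * 2^(K n) := by
      have e1 : ((1:ℝ)/2)^(m n) * 2^(K n) = 2^(K n) / 2^(m n) := by
        rw [one_div, inv_pow, inv_mul_eq_div]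
      rw [e1, le_div_iff₀ (by positivity)]
      have e2 : (4:ℝ)^(m n + 1) * 2^(m n) = 2^(3 * m n + 2) := by
        rw [show (4:ℝ) = 2^2 by norm_num, ← pow_mul, ← pow_add]
        ring_nf
      rw [e2]
      exact pow_le_pow_right₀ (by norm_num) (by omega)
    rw [hβdef]
    rw [div_le_iff₀ (htotpos n)]
    calc (NSR.cnt n (Bad n) : ℝ)
        = (2:ℝ)^(K n) * (NSR.cnt n (Bad n) : ℝ) / 2^(K n) := by field_simp
      _ ≤ (4:ℝ)^(m n + 1) * (Fintype.card (NSR.PP n) : ℝ) / 2^(K n) := by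
          exact (div_le_div_iff_of_pos_right h2K).2 hr
      _ = (4:ℝ)^(m n + 1) / 2^(K n) * (Fintype.card (NSR.PP n) : ℝ) := by ring
      _ ≤ (1/2 : ℝ)^(m n) * (Fintype.card (NSR.PP n) : ℝ) := by
          refine mul_le_mul_of_nonneg_right ?_ (le_of_lt (htotpos n))
          rw [div_le_iff₀ h2K]
          exact hfrac
  have hhalf : Filter.Tendsto (fun n => (1/2 : ℝ)^(m n)) Filter.atTop (nhds 0) :=
    (tendsto_pow_atTop_nhds_zero_of_lt_one (by norm_num) (by norm_num)).comp hm_tendsto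
  have hβ0 : Filter.Tendsto β Filter.atTop (nhds 0) :=
    squeeze_zero' (Filter.Eventually.of_forall fun n =>
        div_nonneg (Nat.cast_nonneg _) (Nat.cast_nonneg _)) hev hhalf
  have hfinal := hβ0.const_sub (1:ℝ)
  rw [sub_zero] at hfinal
  exact (Filter.tendsto_congr hprob).2 hfinal
end

section
/- Fix an integer d ≥ 2. There exists a constant c > 0 (which may be taken independent of d) such that the probability, over permutations π_1, …, π_d chosen independently and uniformly at random from the symmetric group S_n, that every nontrivial word w in the free group F_d of length at most c·(n / log(2d−1))^{1/3} satisfies w(π_1, …, π_d) ≠ 1, tends to 1 as n → ∞. -/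
open Classical Filter Finset

namespace NSRaux

variable {n d : ℕ}

/-- sum over union is at most sum of sums, for nonneg functions -/
lemma sum_union_le {β : Type*} [DecidableEq β] (s t : Finset β) (f : β → ℝ)
    (hf : ∀ x, 0 ≤ f x) : ∑ x ∈ s ∪ t, f x ≤ ∑ x ∈ s, f x + ∑ x ∈ t, f x := by
  have h := Finset.sum_union_inter (s₁ := s) (s₂ := t) (f := f)
  have h2 : 0 ≤ ∑ x ∈ s ∩ t, f x := Finset.sum_nonneg fun x _ => hf x
  linarith

lemma sum_biUnion_le {α β : Type*} [DecidableEq β] (s : Finset α) (g : α → Finset β)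
    (f : β → ℝ) (hf : ∀ x, 0 ≤ f x) :
    ∑ x ∈ s.biUnion g, f x ≤ ∑ a ∈ s, ∑ x ∈ g a, f x := by
  induction s using Finset.induction_on with
  | empty => simp
  | insert _ _ hnot ih =>
    rename_i a s
    rw [Finset.biUnion_insert, Finset.sum_insert hnot]
    exact le_trans (sum_union_le _ _ f hf) (by linarith)

lemma sum_image_le {α β : Type*} [DecidableEq β] (s : Finset α) (h : α → β)
    (f : β → ℝ) (hf : ∀ x, 0 ≤ f x) :
    ∑ x ∈ s.image h, f x ≤ ∑ a ∈ s, f (h a) := by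
  induction s using Finset.induction_on with
  | empty => simp
  | insert _ _ hnot ih =>
    rename_i a s
    rw [Finset.image_insert, Finset.sum_insert hnot]
    by_cases hm : h a ∈ s.image h
    · rw [Finset.insert_eq_self.2 hm]; linarith [hf (h a)]
    · rw [Finset.sum_insert hm]; linarith

/-- apply one letter -/
def ap (π : Fin d → Equiv.Perm (Fin n)) (p : Fin d × Bool) (y : Fin n) : Fin n :=
  if p.2 then π p.1 y else (π p.1)⁻¹ y

/-- walk along a list of letters -/
def wk (π : Fin d → Equiv.Perm (Fin n)) (L : List (Fin d × Bool)) (y : Fin n) : Fin n :=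
  L.foldl (fun z p => ap π p z) y

@[simp] lemma wk_nil (π : Fin d → Equiv.Perm (Fin n)) (y : Fin n) : wk π [] y = y := rfl

lemma wk_cons (π : Fin d → Equiv.Perm (Fin n)) (p : Fin d × Bool) (L : List (Fin d × Bool))
    (y : Fin n) : wk π (p :: L) y = wk π L (ap π p y) := rfl

/-- the set of tuples compatible with a constraint system -/
noncomputable def AS (σ : Fin d → Finset (Fin n × Fin n)) :
    Finset (Fin d → Equiv.Perm (Fin n)) :=
  univ.filter fun π => ∀ i, ∀ q ∈ σ i, π i q.1 = q.2

lemma mem_AS {σ : Fin d → Finset (Fin n × Fin n)} {π : Fin d → Equiv.Perm (Fin n)} :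
    π ∈ AS σ ↔ ∀ i, ∀ q ∈ σ i, π i q.1 = q.2 := by simp [AS]

def Cons (σ : Fin d → Finset (Fin n × Fin n)) : Prop :=
  ∀ i, ∀ p ∈ σ i, ∀ q ∈ σ i, (p.1 = q.1 ↔ p.2 = q.2)

def tot (σ : Fin d → Finset (Fin n × Fin n)) : ℕ := ∑ i, (σ i).card

def Pts (σ : Fin d → Finset (Fin n × Fin n)) : Finset (Fin n) :=
  univ.biUnion fun i => (σ i).image Prod.fst ∪ (σ i).image Prod.snd

lemma card_Pts_le (σ : Fin d → Finset (Fin n × Fin n)) : (Pts σ).card ≤ 2 * tot σ := by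
  refine le_trans Finset.card_biUnion_le ?_
  rw [tot, Finset.mul_sum]
  refine Finset.sum_le_sum fun i _ => ?_
  refine le_trans (Finset.card_union_le _ _) ?_
  have h1 := Finset.card_image_le (s := σ i) (f := Prod.fst)
  have h2 := Finset.card_image_le (s := σ i) (f := Prod.snd)
  omega

def Free (σ : Fin d → Finset (Fin n × Fin n)) (p : Fin d × Bool) (y : Fin n) : Prop :=
  ∀ q ∈ σ p.1, (if p.2 then q.1 else q.2) ≠ y

lemma free_of_not_mem_Pts {σ : Fin d → Finset (Fin n × Fin n)} {y : Fin n}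
    (hy : y ∉ Pts σ) (p : Fin d × Bool) : Free σ p y := by
  intro q hq
  have h1 : q.1 ∈ Pts σ := by
    simp only [Pts, Finset.mem_biUnion, Finset.mem_univ, Finset.mem_union, Finset.mem_image]
    exact ⟨p.1, trivial, Or.inl ⟨q, hq, rfl⟩⟩
  have h2 : q.2 ∈ Pts σ := by
    simp only [Pts, Finset.mem_biUnion, Finset.mem_univ, Finset.mem_union, Finset.mem_image]
    exact ⟨p.1, trivial, Or.inr ⟨q, hq, rfl⟩⟩
  cases p.2 <;> simp <;> rintro rfl <;> [exact hy h2; exact hy h1]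

def con (p : Fin d × Bool) (y z : Fin n) : Fin n × Fin n := if p.2 then (y, z) else (z, y)

noncomputable def ext (σ : Fin d → Finset (Fin n × Fin n)) (p : Fin d × Bool) (y z : Fin n) :
    Fin d → Finset (Fin n × Fin n) :=
  Function.update σ p.1 (insert (con p y z) (σ p.1))

noncomputable def avail (σ : Fin d → Finset (Fin n × Fin n)) (p : Fin d × Bool) :
    Finset (Fin n) :=
  univ \ ((σ p.1).image (if p.2 then Prod.snd else Prod.fst))

lemma ap_eq_iff {π : Fin d → Equiv.Perm (Fin n)} {p : Fin d × Bool} {y z : Fin n} :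
    ap π p y = z ↔ π p.1 (con p y z).1 = (con p y z).2 := by
  rcases p with ⟨i, b⟩
  cases b
  · show (π i)⁻¹ y = z ↔ π i z = y
    constructor
    · intro h; rw [← h]; simp
    · intro h; rw [← h]; simp
  · show π i y = z ↔ π i y = z
    rfl

lemma AS_ext_eq (σ : Fin d → Finset (Fin n × Fin n)) (p : Fin d × Bool) (y z : Fin n) :
    AS (ext σ p y z) = (AS σ).filter (fun π => ap π p y = z) := by
  ext π
  simp only [mem_AS, Finset.mem_filter, ap_eq_iff, ext]
  constructor
  · intro h
    have hnew : π p.1 (con p y z).1 = (con p y z).2 :=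
      h p.1 _ (by rw [Function.update_self]; exact Finset.mem_insert_self _ _)
    refine ⟨?_, hnew⟩
    intro i q hq
    by_cases hip : i = p.1
    · subst hip
      exact h p.1 q (by rw [Function.update_self]; exact Finset.mem_insert_of_mem hq)
    · exact h i q (by rw [Function.update_of_ne hip]; exact hq)
  · rintro ⟨h1, h2⟩
    intro i q hq
    by_cases hip : i = p.1
    · subst hip
      rw [Function.update_self] at hq
      rcases Finset.mem_insert.1 hq with rfl | hq
      · exact h2
      · exact h1 _ q hq
    · rw [Function.update_of_ne hip] at hq
      exact h1 _ q hq

lemma mem_avail_of {σ : Fin d → Finset (Fin n × Fin n)} {π : Fin d → Equiv.Perm (Fin n)}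
    {p : Fin d × Bool} {y : Fin n} (hπ : π ∈ AS σ) (hf : Free σ p y) :
    ap π p y ∈ avail σ p := by
  rcases p with ⟨i, b⟩
  have hπ' := mem_AS.1 hπ
  cases b
  · simp only [avail, Finset.mem_sdiff, Finset.mem_univ, true_and, Finset.mem_image]
    rintro ⟨q, hq, hq1⟩
    have : π i q.1 = q.2 := hπ' i q hq
    have h2 : (π i)⁻¹ y = q.1 := hq1.symm
    have : π i q.1 = y := by rw [← h2]; simp
    have : q.2 = y := by rw [← hπ' i q hq, this]
    exact hf q hq this
  · simp only [avail, Finset.mem_sdiff, Finset.mem_univ, true_and, Finset.mem_image]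
    rintro ⟨q, hq, hq2⟩
    have h1 : π i q.1 = q.2 := hπ' i q hq
    have h2 : π i y = q.2 := hq2.symm
    have : q.1 = y := (π i).injective (by rw [h1, h2])
    exact hf q hq this

lemma AS_partition {σ : Fin d → Finset (Fin n × Fin n)} {p : Fin d × Bool} {y : Fin n}
    (hf : Free σ p y) :
    AS σ = (avail σ p).biUnion (fun z => AS (ext σ p y z)) := by
  ext π
  simp only [Finset.mem_biUnion, AS_ext_eq, Finset.mem_filter]
  constructor
  · intro hπ
    exact ⟨ap π p y, mem_avail_of hπ hf, hπ, rfl⟩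
  · rintro ⟨z, _, hπ, _⟩
    exact hπ

lemma AS_ext_disjoint (σ : Fin d → Finset (Fin n × Fin n)) (p : Fin d × Bool) (y : Fin n)
    {z z' : Fin n} (hzz : z ≠ z') :
    Disjoint (AS (ext σ p y z)) (AS (ext σ p y z')) := by
  rw [Finset.disjoint_left]
  intro π h1 h2
  rw [AS_ext_eq, Finset.mem_filter] at h1 h2
  exact hzz (h1.2.symm.trans h2.2)

lemma card_AS_ext_const (σ : Fin d → Finset (Fin n × Fin n)) (p : Fin d × Bool) (y : Fin n)
    {z z' : Fin n} (hz : z ∈ avail σ p) (hz' : z' ∈ avail σ p) :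
    (AS (ext σ p y z)).card = (AS (ext σ p y z')).card := by
  rcases p with ⟨i, b⟩
  have havail : ∀ {w : Fin n}, w ∈ avail σ (i, b) →
      ∀ q ∈ σ i, (if b then q.2 else q.1) ≠ w := by
    intro w hw q hq
    simp only [avail, Finset.mem_sdiff, Finset.mem_univ, true_and, Finset.mem_image] at hw
    intro hc
    cases b
    · exact hw ⟨q, hq, by simpa using hc⟩
    · exact hw ⟨q, hq, by simpa using hc⟩
  have key : ∀ {u u' : Fin n}, u ∈ avail σ (i, b) → u' ∈ avail σ (i, b) →
      ∀ π ∈ AS (ext σ (i, b) y u),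
        Function.update π i (if b then Equiv.swap u u' * π i else π i * Equiv.swap u u')
          ∈ AS (ext σ (i, b) y u') := by
    intro u u' hu hu' π hπ
    rw [AS_ext_eq, Finset.mem_filter] at hπ ⊢
    obtain ⟨hπA, hπv⟩ := hπ
    have hπA' := mem_AS.1 hπA
    constructor
    · rw [mem_AS]
      intro j q hq
      by_cases hji : j = i
      · subst hji
        rw [Function.update_self]
        cases b
        · have h1 : q.1 ≠ u := havail hu q hq
          have h2 : q.1 ≠ u' := havail hu' q hq
          show (π j) (Equiv.swap u u' q.1) = q.2
          rw [Equiv.swap_apply_of_ne_of_ne h1 h2]; exact hπA' j q hq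
        · have h1 : q.2 ≠ u := havail hu q hq
          have h2 : q.2 ≠ u' := havail hu' q hq
          show Equiv.swap u u' (π j q.1) = q.2
          rw [hπA' j q hq, Equiv.swap_apply_of_ne_of_ne h1 h2]
      · rw [Function.update_of_ne hji]; exact hπA' j q hq
    · cases b
      · have hv : (π i)⁻¹ y = u := hπv
        show (Function.update π i (π i * Equiv.swap u u') i)⁻¹ y = u'
        rw [Function.update_self, mul_inv_rev]
        show (Equiv.swap u u')⁻¹ ((π i)⁻¹ y) = u'
        rw [hv, Equiv.swap_inv, Equiv.swap_apply_left]
      · have hv : π i y = u := hπv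
        show (Function.update π i (Equiv.swap u u' * π i) i) y = u'
        rw [Function.update_self]
        show Equiv.swap u u' (π i y) = u'
        rw [hv, Equiv.swap_apply_left]
  have hinv : ∀ (a a' : Fin n) (π : Fin d → Equiv.Perm (Fin n)),
      Function.update (Function.update π i
        (if b then Equiv.swap a a' * π i else π i * Equiv.swap a a')) i
        (if b then Equiv.swap a' a * (Function.update π i
          (if b then Equiv.swap a a' * π i else π i * Equiv.swap a a') i)
         else (Function.update π i
          (if b then Equiv.swap a a' * π i else π i * Equiv.swap a a') i) * Equiv.swap a' a)
        = π := by
    intro a a' π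
    funext j
    by_cases hji : j = i
    · subst hji
      rw [Function.update_self, Function.update_self]
      cases b
      · simp [mul_assoc, Equiv.swap_comm a' a]
      · simp [← mul_assoc, Equiv.swap_comm a' a]
    · rw [Function.update_of_ne hji, Function.update_of_ne hji]
  refine Finset.card_bij'
    (fun π _ => Function.update π i (if b then Equiv.swap z z' * π i else π i * Equiv.swap z z'))
    (fun π _ => Function.update π i (if b then Equiv.swap z' z * π i else π i * Equiv.swap z' z))
    (fun π hπ => key hz hz' π hπ)
    (fun π hπ => key hz' hz π hπ) ?_ ?_
  · intro π hπ
    exact hinv z z' π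
  · intro π hπ
    exact hinv z' z π

lemma card_avail {σ : Fin d → Finset (Fin n × Fin n)} (hc : Cons σ) (p : Fin d × Bool) :
    (avail σ p).card = n - (σ p.1).card := by
  have himg : ((σ p.1).image (if p.2 then Prod.snd else Prod.fst)).card = (σ p.1).card := by
    apply Finset.card_image_of_injOn
    intro q hq q' hq' he
    have := hc p.1 q hq q' hq'
    cases hb : p.2
    · rw [hb] at he; simp only [Bool.false_eq_true, if_false] at he
      exact Prod.ext he (this.1 he)
    · rw [hb] at he; simp only [if_true] at he
      exact Prod.ext (this.2 he) he
  rw [avail, Finset.card_sdiff_of_subset (Finset.subset_univ _), himg, Finset.card_univ, Fintype.card_fin]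

lemma sum_card_parts {σ : Fin d → Finset (Fin n × Fin n)} {p : Fin d × Bool} {y : Fin n}
    (hf : Free σ p y) :
    ∑ z ∈ avail σ p, (AS (ext σ p y z)).card = (AS σ).card := by
  rw [AS_partition hf (p := p) (y := y)]
  exact (Finset.card_biUnion fun z _ z' _ hzz => AS_ext_disjoint σ p y hzz).symm

lemma card_part_le {σ : Fin d → Finset (Fin n × Fin n)} {p : Fin d × Bool} {y : Fin n}
    (hc : Cons σ) (hf : Free σ p y) {z : Fin n} (hz : z ∈ avail σ p) :
    (n - tot σ) * (AS (ext σ p y z)).card ≤ (AS σ).card := by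
  have hsum := sum_card_parts (σ := σ) (p := p) (y := y) hf
  have hconst : ∀ z' ∈ avail σ p, (AS (ext σ p y z')).card = (AS (ext σ p y z)).card :=
    fun z' hz' => card_AS_ext_const σ p y hz' hz
  rw [Finset.sum_congr rfl hconst, Finset.sum_const, smul_eq_mul, card_avail hc] at hsum
  rw [← hsum]
  apply Nat.mul_le_mul_right
  have : (σ p.1).card ≤ tot σ := Finset.single_le_sum (f := fun i => (σ i).card)
    (fun i _ => Nat.zero_le _) (Finset.mem_univ p.1)
  omega

lemma con_not_mem {σ : Fin d → Finset (Fin n × Fin n)} {p : Fin d × Bool} {y z : Fin n}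
    (hf : Free σ p y) : con p y z ∉ σ p.1 := by
  intro hmem
  have := hf _ hmem
  cases hb : p.2 <;> rw [hb] at this <;> simp only [con, hb] at this <;> simp at this

lemma tot_ext {σ : Fin d → Finset (Fin n × Fin n)} {p : Fin d × Bool} {y z : Fin n}
    (hf : Free σ p y) : tot (ext σ p y z) = tot σ + 1 := by
  unfold tot ext
  rw [← Finset.add_sum_erase _ _ (Finset.mem_univ p.1),
      ← Finset.add_sum_erase _ (fun i => (σ i).card) (Finset.mem_univ p.1)]
  rw [Function.update_self, Finset.card_insert_of_notMem (con_not_mem hf)]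
  have : ∀ i ∈ Finset.univ.erase p.1,
      (Function.update σ p.1 (insert (con p y z) (σ p.1)) i).card = (σ i).card := by
    intro i hi
    rw [Function.update_of_ne (Finset.ne_of_mem_erase hi)]
  rw [Finset.sum_congr rfl this]
  omega

lemma mem_avail_ne {σ : Fin d → Finset (Fin n × Fin n)} {p : Fin d × Bool} {z : Fin n}
    (hz : z ∈ avail σ p) : ∀ q ∈ σ p.1, (if p.2 then q.2 else q.1) ≠ z := by
  intro q hq hc
  simp only [avail, Finset.mem_sdiff, Finset.mem_univ, true_and, Finset.mem_image] at hz
  apply hz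
  cases hb : p.2 <;> rw [hb] at hc <;> simp only [Bool.false_eq_true, if_false, if_true] at hc
  · exact ⟨q, hq, by simp [hb] at hc ⊢; exact hc⟩
  · exact ⟨q, hq, by simp [hb] at hc ⊢; exact hc⟩

lemma cons_ext {σ : Fin d → Finset (Fin n × Fin n)} {p : Fin d × Bool} {y z : Fin n}
    (hc : Cons σ) (hf : Free σ p y) (hz : z ∈ avail σ p) : Cons (ext σ p y z) := by
  intro i q hq r hr
  by_cases hip : i = p.1
  · subst hip
    rw [ext, Function.update_self] at hq hr
    have hfree : ∀ q ∈ σ p.1, (if p.2 then q.1 else q.2) ≠ y := hf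
    have hav : ∀ q ∈ σ p.1, (if p.2 then q.2 else q.1) ≠ z := mem_avail_ne hz
    rcases Finset.mem_insert.1 hq with rfl | hq <;> rcases Finset.mem_insert.1 hr with h | hr
    · rw [h]; simp
    · -- q = con, r ∈ σ
      have h1 := hfree r hr
      have h2 := hav r hr
      cases hb : p.2 <;> rw [hb] at h1 h2 <;> simp only [con, hb] at * <;>
        constructor <;> intro he <;> simp_all
    · have h1 := hfree q hq
      have h2 := hav q hq
      cases hb : p.2 <;> rw [hb] at h1 h2 <;> simp only [con, hb] at * <;>
        constructor <;> intro he <;> simp_all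
    · exact hc p.1 q hq r hr
  · rw [ext, Function.update_of_ne hip] at hq hr
    exact hc i q hq r hr

/-- reduced-word compatibility of adjacent letters -/
def Rd (p q : Fin d × Bool) : Prop := p.1 = q.1 → q.2 = p.2

/-- the head letter (if any) is a free query at `y` -/
def HF (σ : Fin d → Finset (Fin n × Fin n)) (L : List (Fin d × Bool)) (y : Fin n) : Prop :=
  ∀ p ∈ L.head?, Free σ p y

lemma mem_Pts_of_coord {σ : Fin d → Finset (Fin n × Fin n)} {i : Fin d} {q : Fin n × Fin n}
    (hq : q ∈ σ i) : q.1 ∈ Pts σ ∧ q.2 ∈ Pts σ := by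
  constructor <;>
  · simp only [Pts, Finset.mem_biUnion, Finset.mem_univ, Finset.mem_union, Finset.mem_image]
    exact ⟨i, trivial, by first | exact Or.inl ⟨q, hq, rfl⟩ | exact Or.inr ⟨q, hq, rfl⟩⟩

lemma hf_ext {σ : Fin d → Finset (Fin n × Fin n)} {p : Fin d × Bool} {y z : Fin n}
    {r : Fin d × Bool} (hz : z ∉ Pts σ) (hzy : z ≠ y) (hrd : Rd p r) :
    Free (ext σ p y z) r z := by
  intro q hq
  by_cases hip : r.1 = p.1
  · rw [ext, hip, Function.update_self] at hq
    rcases Finset.mem_insert.1 hq with rfl | hq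
    · -- q = con p y z
      cases hb : p.2 <;> cases hb' : r.2 <;> simp only [con, hb, hb'] <;>
        simp only [Bool.false_eq_true, if_false, if_true]
      · exact hzy.symm
      · -- p.2 = false, r.2 = true : need (con).1 = z ≠ z impossible; use Rd
        exact absurd (hrd hip.symm) (by rw [hb, hb']; simp)
      · exact absurd (hrd hip.symm) (by rw [hb, hb']; simp)
      · exact hzy.symm
    · intro hcoord
      apply hz
      rcases mem_Pts_of_coord hq with ⟨h1, h2⟩
      cases hb' : r.2 <;> rw [hb'] at hcoord <;> simp only [Bool.false_eq_true, if_false,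
        if_true] at hcoord <;> rw [← hcoord] <;> assumption
  · rw [ext, Function.update_of_ne hip] at hq
    intro hcoord
    apply hz
    rcases mem_Pts_of_coord hq with ⟨h1, h2⟩
    cases hb' : r.2 <;> rw [hb'] at hcoord <;> simp only [Bool.false_eq_true, if_false,
      if_true] at hcoord <;> rw [← hcoord] <;> assumption

/-- the per-step probability bound recursion -/
noncomputable def gbd (n : ℕ) : ℕ → ℕ → ℝ
  | 0, _ => 0
  | t + 1, M => (2 * M + 2) / ((n : ℝ) - M) + gbd n t (M + 1)

lemma gbd_nonneg : ∀ (t M : ℕ), M + t ≤ n → 0 ≤ gbd n t M := by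
  intro t
  induction t with
  | zero => intro M _; simp [gbd]
  | succ t ih =>
    intro M hM
    have h1 : (M : ℝ) < n := by
      have : M < n := by omega
      exact_mod_cast this
    have h2 : 0 ≤ (2 * (M : ℝ) + 2) / ((n : ℝ) - M) := by
      apply div_nonneg <;> [positivity; linarith]
    have h3 := ih (M + 1) (by omega)
    simp only [gbd]
    push_cast
    push_cast at h2 h3
    linarith

lemma gbd_le : ∀ (t M s : ℕ), M + t ≤ s → s < n →
    gbd n t M ≤ t * ((2 * s + 2) / ((n : ℝ) - s)) := by
  intro t
  induction t with
  | zero => intro M s _ _; simp [gbd]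
  | succ t ih =>
    intro M s hMs hsn
    have hsn' : (s : ℝ) < n := by exact_mod_cast hsn
    have hMn : (M : ℝ) ≤ s := by exact_mod_cast (by omega : M ≤ s)
    have h1 : (2 * (M : ℝ) + 2) / ((n : ℝ) - M) ≤ (2 * s + 2) / ((n : ℝ) - s) := by
      rw [div_le_div_iff₀ (by linarith) (by linarith)]
      nlinarith
    have h2 := ih (M + 1) s (by omega) hsn
    simp only [gbd]
    push_cast
    push_cast at h1 h2
    linarith

lemma walk_lemma (x : Fin n) :
    ∀ L : List (Fin d × Bool), ∀ (σ : Fin d → Finset (Fin n × Fin n)) (y : Fin n),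
      Cons σ → tot σ + L.length < n → L.Chain' Rd → HF σ L y → (L = [] → y ≠ x) →
      ∃ T : Finset (Fin d → Finset (Fin n × Fin n)),
        (∀ σ' ∈ T, Cons σ' ∧ tot σ' ≤ tot σ + L.length) ∧
        (∀ π ∈ AS σ, wk π L y = x → ∃ σ' ∈ T, π ∈ AS σ') ∧
        ∑ σ' ∈ T, ((AS σ').card : ℝ) ≤ gbd n L.length (tot σ) * ((AS σ).card : ℝ) := by
  intro L
  induction L with
  | nil =>
    intro σ y _ _ _ _ hne
    refine ⟨∅, by simp, ?_, by simp [gbd]⟩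
    intro π _ hw
    exact absurd hw (by simpa using hne rfl)
  | cons p rest ih =>
    intro σ y hc hlen hch hhf _
    have hfree : Free σ p y := hhf p rfl
    have hlenc : tot σ + (rest.length + 1) < n := by simpa [List.length_cons] using hlen
    have hlt : tot σ < n := by omega
    set M := tot σ with hM
    set bad : Finset (Fin n) := (Pts σ ∪ {x, y}) ∩ avail σ p with hbad
    set good : Finset (Fin n) := avail σ p \ (Pts σ ∪ {x, y}) with hgood
    have key : ∀ z ∈ good, ∃ T : Finset (Fin d → Finset (Fin n × Fin n)),
        (∀ σ' ∈ T, Cons σ' ∧ tot σ' ≤ (M + 1) + rest.length) ∧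
        (∀ π ∈ AS (ext σ p y z), wk π rest z = x → ∃ σ' ∈ T, π ∈ AS σ') ∧
        ∑ σ' ∈ T, ((AS σ').card : ℝ) ≤
          gbd n rest.length (M + 1) * ((AS (ext σ p y z)).card : ℝ) := by
      intro z hz
      have hzav : z ∈ avail σ p := (Finset.mem_sdiff.1 hz).1
      have hzn : z ∉ Pts σ ∪ {x, y} := (Finset.mem_sdiff.1 hz).2
      have hzP : z ∉ Pts σ := fun h => hzn (Finset.mem_union_left _ h)
      have hzx : z ≠ x := fun h => hzn (Finset.mem_union_right _ (by simp [h]))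
      have hzy : z ≠ y := fun h => hzn (Finset.mem_union_right _ (by simp [h]))
      have hres := ih (ext σ p y z) z (cons_ext hc hfree hzav)
        (by rw [tot_ext hfree]; omega)
        ((List.isChain_cons.1 hch).2)
        (fun r hr => hf_ext hzP hzy ((List.isChain_cons.1 hch).1 r hr))
        (fun _ => hzx)
      rw [tot_ext hfree] at hres
      exact hres
    choose Tf hTf using key
    refine ⟨(bad.image (fun z => ext σ p y z)) ∪
      good.attach.biUnion (fun z => Tf z z.2), ?_, ?_, ?_⟩
    · intro σ' hσ'
      rcases Finset.mem_union.1 hσ' with h | h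
      · obtain ⟨z, hzb, rfl⟩ := Finset.mem_image.1 h
        have hzav : z ∈ avail σ p := (Finset.mem_inter.1 hzb).2
        exact ⟨cons_ext hc hfree hzav, by rw [tot_ext hfree]; simp [List.length_cons]; omega⟩
      · obtain ⟨z, _, hz2⟩ := Finset.mem_biUnion.1 h
        obtain ⟨h1, h2⟩ := (hTf z z.2).1 σ' hz2
        exact ⟨h1, by simpa [List.length_cons] using le_trans h2 (by omega)⟩
    · intro π hπ hw
      have hzav : ap π p y ∈ avail σ p := mem_avail_of hπ hfree
      have hwz : wk π rest (ap π p y) = x := hw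
      have hπz : π ∈ AS (ext σ p y (ap π p y)) := by
        rw [AS_ext_eq, Finset.mem_filter]; exact ⟨hπ, rfl⟩
      by_cases hzb : ap π p y ∈ Pts σ ∪ {x, y}
      · exact ⟨ext σ p y (ap π p y), Finset.mem_union_left _
          (Finset.mem_image_of_mem _ (Finset.mem_inter.2 ⟨hzb, hzav⟩)), hπz⟩
      · have hzg : ap π p y ∈ good := Finset.mem_sdiff.2 ⟨hzav, hzb⟩
        obtain ⟨σ', hσ'T, hσ'⟩ := (hTf _ hzg).2.1 π hπz hwz
        exact ⟨σ', Finset.mem_union_right _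
          (Finset.mem_biUnion.2 ⟨⟨_, hzg⟩, Finset.mem_attach _ _, hσ'T⟩), hσ'⟩
    · have hnn : ∀ σ' : Fin d → Finset (Fin n × Fin n), (0:ℝ) ≤ ((AS σ').card : ℝ) :=
        fun _ => Nat.cast_nonneg _
      have hpos : (0:ℝ) < (n:ℝ) - M := by
        have : (M : ℝ) < n := by exact_mod_cast hlt
        linarith
      refine le_trans (sum_union_le _ _ _ hnn) ?_
      have hbad1 : ∑ σ' ∈ bad.image (fun z => ext σ p y z), ((AS σ').card:ℝ)
          ≤ ∑ z ∈ bad, ((AS (ext σ p y z)).card : ℝ) := sum_image_le _ _ _ hnn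
      have hbad2 : ∀ z ∈ bad, ((AS (ext σ p y z)).card : ℝ) ≤ ((AS σ).card : ℝ) / ((n:ℝ) - M) := by
        intro z hzb
        have hzav : z ∈ avail σ p := (Finset.mem_inter.1 hzb).2
        have hnat := card_part_le hc hfree hzav
        rw [le_div_iff₀ hpos]
        have hcast : ((n - M : ℕ) : ℝ) = (n:ℝ) - M := by
          rw [Nat.cast_sub (le_of_lt hlt)]
        calc ((AS (ext σ p y z)).card : ℝ) * ((n:ℝ) - M)
            = (((n - M) * (AS (ext σ p y z)).card : ℕ) : ℝ) := by
              push_cast [hcast]; ring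
          _ ≤ ((AS σ).card : ℝ) := by exact_mod_cast hnat
      have hbadcard : (bad.card : ℝ) ≤ 2 * M + 2 := by
        have h1 : bad.card ≤ (Pts σ ∪ {x, y}).card := Finset.card_le_card Finset.inter_subset_left
        have h2 : (Pts σ ∪ ({x, y} : Finset (Fin n))).card ≤ (Pts σ).card + 2 := by
          refine le_trans (Finset.card_union_le _ _) ?_
          have : ({x, y} : Finset (Fin n)).card ≤ 2 := Finset.card_insert_le _ _ |>.trans (by simp)
          omega
        have h3 := card_Pts_le σ
        have : (bad.card : ℕ) ≤ 2 * M + 2 := by omega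
        exact_mod_cast this
      have hbadsum : ∑ z ∈ bad, ((AS (ext σ p y z)).card : ℝ)
          ≤ (2 * M + 2) * (((AS σ).card : ℝ) / ((n:ℝ) - M)) := by
        refine le_trans (Finset.sum_le_card_nsmul _ _ (((AS σ).card : ℝ) / ((n:ℝ) - M)) hbad2) ?_
        rw [nsmul_eq_mul]
        have hdiv : (0:ℝ) ≤ ((AS σ).card : ℝ) / ((n:ℝ) - M) := by positivity
        exact mul_le_mul_of_nonneg_right hbadcard hdiv
      have hbisum : ∑ σ' ∈ good.attach.biUnion (fun z => Tf z z.2), ((AS σ').card : ℝ)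
          ≤ gbd n rest.length (M + 1) * ((AS σ).card : ℝ) := by
        refine le_trans (sum_biUnion_le _ _ _ hnn) ?_
        have h1 : ∀ z ∈ good.attach, ∑ σ' ∈ Tf z z.2, ((AS σ').card : ℝ)
            ≤ gbd n rest.length (M + 1) * ((AS (ext σ p y z.1)).card : ℝ) :=
          fun z _ => (hTf z z.2).2.2
        refine le_trans (Finset.sum_le_sum h1) ?_
        rw [← Finset.mul_sum]
        have hgn : 0 ≤ gbd n rest.length (M + 1) := gbd_nonneg _ _ (by omega)
        refine mul_le_mul_of_nonneg_left ?_ hgn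
        rw [Finset.sum_attach good (fun z => ((AS (ext σ p y z)).card : ℝ))]
        have hsub : good ⊆ avail σ p := Finset.sdiff_subset
        have := sum_card_parts (σ := σ) (p := p) (y := y) hfree
        calc ∑ z ∈ good, ((AS (ext σ p y z)).card : ℝ)
            ≤ ∑ z ∈ avail σ p, ((AS (ext σ p y z)).card : ℝ) :=
              Finset.sum_le_sum_of_subset_of_nonneg hsub (fun _ _ _ => Nat.cast_nonneg _)
          _ = ((AS σ).card : ℝ) := by exact_mod_cast congrArg (Nat.cast : ℕ → ℝ) this
      have hgbd : gbd n (p :: rest).length M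
          = (2 * M + 2) / ((n:ℝ) - M) + gbd n rest.length (M + 1) := by
        simp [List.length_cons, gbd]
      rw [hgbd]
      have : (2 * (M:ℝ) + 2) * (((AS σ).card : ℝ) / ((n:ℝ) - M))
          = (2 * M + 2) / ((n:ℝ) - M) * ((AS σ).card : ℝ) := by ring
      rw [this] at hbadsum
      calc _ ≤ _ + _ := add_le_add (le_trans hbad1 hbadsum) hbisum
        _ = ((2 * M + 2) / ((n:ℝ) - M) + gbd n rest.length (M + 1)) * ((AS σ).card : ℝ) := by
            ring

lemma exists_fresh {σ : Fin d → Finset (Fin n × Fin n)} (h : (Pts σ).card < n) :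
    ∃ x : Fin n, x ∉ Pts σ := by
  by_contra hcon
  push_neg at hcon
  have : (Finset.univ : Finset (Fin n)) ⊆ Pts σ := fun x _ => hcon x
  have := Finset.card_le_card this
  simp [Finset.card_univ] at this
  omega

lemma fix_lemma (L : List (Fin d × Bool)) (hne : L ≠ []) (hch : L.Chain' Rd) (K : ℕ)
    (hK : 2 * (L.length * K) < n) :
    ∀ (k : ℕ) (σ : Fin d → Finset (Fin n × Fin n)), Cons σ →
      tot σ + L.length * k ≤ L.length * K →
      (((AS σ).filter (fun π => ∀ v, wk π L v = v)).card : ℝ)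
        ≤ ((L.length : ℝ) * ((2 * (L.length * K : ℕ) + 2) / ((n:ℝ) - (L.length * K : ℕ)))) ^ k
          * ((AS σ).card : ℝ) := by
  have hlpos : 0 < L.length := List.length_pos_iff.2 hne
  have hKn : (L.length * K : ℕ) < n := by omega
  have hKnr : ((L.length * K : ℕ) : ℝ) < (n : ℝ) := by exact_mod_cast hKn
  have hDnn : 0 ≤ (L.length : ℝ) * ((2 * (L.length * K : ℕ) + 2) / ((n:ℝ) - (L.length * K : ℕ))) := by
    apply mul_nonneg (Nat.cast_nonneg _)
    apply div_nonneg (by positivity) (by linarith)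
  intro k
  induction k with
  | zero =>
    intro σ _ _
    rw [pow_zero, one_mul]
    exact_mod_cast Finset.card_le_card (Finset.filter_subset _ _)
  | succ k ih =>
    intro σ hc htot
    have hkK : k + 1 ≤ K := by
      have h1 : L.length * (k+1) ≤ L.length * K := le_trans (Nat.le_add_left _ _) htot
      exact Nat.le_of_mul_le_mul_left h1 hlpos
    have htotle : tot σ + L.length ≤ L.length * K := by
      have : L.length * 1 ≤ L.length * (k+1) := Nat.mul_le_mul_left _ (by omega)
      omega
    have hPts : (Pts σ).card < n := by
      have := card_Pts_le σ
      omega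
    obtain ⟨x, hx⟩ := exists_fresh hPts
    obtain ⟨T, hT1, hT2, hT3⟩ := walk_lemma x L σ x hc (by omega) hch
      (fun p _ => free_of_not_mem_Pts hx p) (fun h => absurd h hne)
    have hcover : (AS σ).filter (fun π => ∀ v, wk π L v = v) ⊆
        T.biUnion (fun σ' => (AS σ').filter (fun π => ∀ v, wk π L v = v)) := by
      intro π hπ
      rw [Finset.mem_filter] at hπ
      obtain ⟨σ', hσ'T, hσ'⟩ := hT2 π hπ.1 (hπ.2 x)
      exact Finset.mem_biUnion.2 ⟨σ', hσ'T, Finset.mem_filter.2 ⟨hσ', hπ.2⟩⟩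
    have hcard : (((AS σ).filter (fun π => ∀ v, wk π L v = v)).card : ℝ)
        ≤ ∑ σ' ∈ T, (((AS σ').filter (fun π => ∀ v, wk π L v = v)).card : ℝ) := by
      have h1 := Finset.card_le_card hcover
      have h2 := Finset.card_biUnion_le (s := T)
        (t := fun σ' => (AS σ').filter (fun π => ∀ v, wk π L v = v))
      exact_mod_cast le_trans h1 h2
    set D : ℝ := (L.length : ℝ) * ((2 * (L.length * K : ℕ) + 2) / ((n:ℝ) - (L.length * K : ℕ)))
      with hD
    have hstep : ∀ σ' ∈ T, (((AS σ').filter (fun π => ∀ v, wk π L v = v)).card : ℝ)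
        ≤ D ^ k * ((AS σ').card : ℝ) := by
      intro σ' hσ'
      obtain ⟨hc', htot'⟩ := hT1 σ' hσ'
      have hmul : L.length * (k+1) = L.length * k + L.length := by ring
      exact ih σ' hc' (by omega)
    have hgbd : gbd n L.length (tot σ) ≤ D := by
      rw [hD]
      have := gbd_le L.length (tot σ) (L.length * K) htotle hKn
      exact this
    calc (((AS σ).filter (fun π => ∀ v, wk π L v = v)).card : ℝ)
        ≤ ∑ σ' ∈ T, (((AS σ').filter (fun π => ∀ v, wk π L v = v)).card : ℝ) := hcard
      _ ≤ ∑ σ' ∈ T, D ^ k * ((AS σ').card : ℝ) := Finset.sum_le_sum hstep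
      _ = D ^ k * ∑ σ' ∈ T, ((AS σ').card : ℝ) := by rw [Finset.mul_sum]
      _ ≤ D ^ k * (gbd n L.length (tot σ) * ((AS σ).card : ℝ)) := by
          exact mul_le_mul_of_nonneg_left hT3 (pow_nonneg hDnn k)
      _ ≤ D ^ k * (D * ((AS σ).card : ℝ)) := by
          refine mul_le_mul_of_nonneg_left ?_ (pow_nonneg hDnn k)
          exact mul_le_mul_of_nonneg_right hgbd (Nat.cast_nonneg _)
      _ = D ^ (k+1) * ((AS σ).card : ℝ) := by ring

lemma AS_empty : AS (fun _ : Fin d => (∅ : Finset (Fin n × Fin n))) = Finset.univ := by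
  ext π; simp [mem_AS]

lemma count_bound (L : List (Fin d × Bool)) (hne : L ≠ []) (hch : L.Chain' Rd)
    (hn : 100 ≤ n) (hL : 100 * L.length ^ 2 ≤ n) :
    (((Finset.univ : Finset (Fin d → Equiv.Perm (Fin n))).filter
        (fun π => ∀ v, wk π L v = v)).card : ℝ)
      ≤ (1/2 : ℝ) ^ (n / (100 * L.length ^ 2)) *
        (Fintype.card (Fin d → Equiv.Perm (Fin n)) : ℝ) := by
  set ℓ := L.length with hℓ
  have hlpos : 0 < ℓ := List.length_pos_iff.2 hne
  set K : ℕ := n / (100 * ℓ ^ 2) with hKdef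
  have hdiv : K * (100 * ℓ ^ 2) ≤ n := Nat.div_mul_le_self n _
  have h100 : 100 * (ℓ * (ℓ * K)) ≤ n := by
    calc 100 * (ℓ * (ℓ * K)) = K * (100 * ℓ ^ 2) := by ring
    _ ≤ n := hdiv
  have hℓℓ : ℓ ≤ ℓ * ℓ := Nat.le_mul_of_pos_left ℓ hlpos
  have h100ℓ : 100 * ℓ ≤ n := by
    calc 100 * ℓ ≤ 100 * ℓ^2 := by nlinarith
    _ ≤ n := hL
  have hℓK : 100 * (ℓ * K) ≤ n := by nlinarith
  have hK2 : 2 * (ℓ * K) < n := by omega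
  have hres := fix_lemma L hne hch K hK2 K (fun _ => ∅)
    (fun i q hq => absurd hq (Finset.notMem_empty q))
    (by simp [tot])
  rw [AS_empty] at hres
  rw [Finset.card_univ] at hres
  refine le_trans hres ?_
  refine mul_le_mul_of_nonneg_right ?_ (Nat.cast_nonneg _)
  refine pow_le_pow_left₀ ?_ ?_ K
  · apply mul_nonneg (Nat.cast_nonneg _)
    apply div_nonneg (by positivity)
    have : ((ℓ * K : ℕ) : ℝ) < (n : ℝ) := by exact_mod_cast (by omega : ℓ * K < n)
    linarith
  · -- D ≤ 1/2
    have h1 : ((ℓ * K : ℕ) : ℝ) * 100 ≤ (n : ℝ) := by exact_mod_cast (by omega : (ℓ * K) * 100 ≤ n)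
    have h2 : (ℓ : ℝ) * 100 ≤ (n : ℝ) := by exact_mod_cast (by omega : ℓ * 100 ≤ n)
    have h3 : (ℓ : ℝ) * ((ℓ * K : ℕ) : ℝ) * 100 ≤ (n : ℝ) := by
      exact_mod_cast (by nlinarith : (ℓ * (ℓ * K)) * 100 ≤ n)
    have hnpos : (0:ℝ) < (n:ℝ) := by positivity
    have hden : (0:ℝ) < (n:ℝ) - ((ℓ * K : ℕ) : ℝ) := by linarith
    rw [mul_div_assoc'] -- maybe not needed
    rw [div_le_iff₀ hden]
    push_cast
    push_cast at h1 h2 h3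
    nlinarith

lemma perm_prod_apply (l : List (Equiv.Perm (Fin n))) (v : Fin n) :
    l.prod v = l.foldr (fun g w => g w) v := by
  induction l with
  | nil => simp
  | cons g l ih => simp [List.prod_cons, ih]

lemma lift_eq_walk (π : Fin d → Equiv.Perm (Fin n)) (w : FreeGroup (Fin d)) (v : Fin n) :
    (FreeGroup.lift π w) v = wk π w.toWord.reverse v := by
  conv_lhs => rw [← FreeGroup.mk_toWord (x := w)]
  rw [FreeGroup.lift_mk, perm_prod_apply, wk, List.foldl_reverse]
  have : ∀ L : List (Fin d × Bool),
      (List.map (fun x => cond x.2 (π x.1) (π x.1)⁻¹) L).foldr (fun g w => g w) v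
        = L.foldr (fun p z => ap π p z) v := by
    intro L
    induction L with
    | nil => rfl
    | cons p L ih =>
      simp only [List.map_cons, List.foldr_cons, ih]
      rcases p with ⟨i, b⟩
      cases b <;> rfl
  exact this _

lemma not_chain'_decomp {α : Type*} (R : α → α → Prop) :
    ∀ L : List α, ¬ L.Chain' R → ∃ (l₁ : List α) (a b : α) (l₂ : List α),
      L = l₁ ++ a :: b :: l₂ ∧ ¬ R a b := by
  intro L
  induction L with
  | nil => intro h; exact absurd List.isChain_nil h
  | cons a L ih =>
    intro h
    cases L with
    | nil => exact absurd (List.isChain_singleton a) h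
    | cons b L =>
      simp only [List.Chain', List.isChain_cons_cons] at h
      push_neg at h
      by_cases hab : R a b
      · obtain ⟨l₁, a', b', l₂, heq, hnr⟩ := ih (h hab)
        exact ⟨a :: l₁, a', b', l₂, by rw [heq]; rfl, hnr⟩
      · exact ⟨[], a, b, L, rfl, hab⟩

lemma chain'_toWord (w : FreeGroup (Fin d)) : w.toWord.Chain' Rd := by
  by_contra h
  obtain ⟨l₁, a, b, l₂, heq, hnr⟩ := not_chain'_decomp Rd w.toWord h
  unfold Rd at hnr
  push_neg at hnr
  obtain ⟨h1, h2⟩ := hnr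
  have hb : b = (a.1, !a.2) := by
    rcases a with ⟨i, c⟩; rcases b with ⟨j, e⟩
    simp only at h1 h2
    subst h1
    cases c <;> cases e <;> simp_all
  have : FreeGroup.reduce w.toWord = l₁ ++ (a.1, a.2) :: (a.1, !a.2) :: l₂ := by
    rw [FreeGroup.reduce_toWord, heq, hb]
  exact FreeGroup.reduce.not this

lemma chain'_toWord_rev (w : FreeGroup (Fin d)) : w.toWord.reverse.Chain' Rd := by
  refine List.isChain_reverse.2 ?_
  show List.Chain' (flip Rd) w.toWord
  have : (flip Rd : (Fin d × Bool) → (Fin d × Bool) → Prop) = fun p q => Rd p q := by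
    funext p q
    simp only [flip, Rd, eq_iff_iff]
    constructor
    · intro h hpq; exact (h hpq.symm).symm
    · intro h hpq; exact (h hpq.symm).symm
  rw [this]
  exact chain'_toWord w

/-- union bound: counting tuples killed by some short word -/
lemma main_count (Λ : ℕ) (hd : 1 ≤ d) (hn : 100 ≤ n) (hΛn : 100 * Λ ^ 2 ≤ n) :
    (((Finset.univ : Finset (Fin d → Equiv.Perm (Fin n))).filter
        (fun π => ∃ w : FreeGroup (Fin d), w ≠ 1 ∧ FreeGroup.norm w ≤ Λ ∧
          FreeGroup.lift π w = 1)).card : ℝ)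
      ≤ (Λ + 1) * ((2 * d : ℕ) : ℝ) ^ Λ * (1/2 : ℝ) ^ (n / (100 * Λ ^ 2)) *
        (Fintype.card (Fin d → Equiv.Perm (Fin n)) : ℝ) := by
  classical
  set Ev : ∀ ℓ : ℕ, List.Vector (Fin d × Bool) ℓ → Finset (Fin d → Equiv.Perm (Fin n)) :=
    fun ℓ v => Finset.univ.filter (fun π => ∀ x, wk π v.toList x = x) with hEv
  set W : ∀ ℓ : ℕ, Finset (List.Vector (Fin d × Bool) ℓ) :=
    fun ℓ => (Finset.univ : Finset (List.Vector (Fin d × Bool) ℓ)).filter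
      (fun v => v.toList ≠ [] ∧ v.toList.Chain' Rd) with hW
  set F : ℕ → Finset (Fin d → Equiv.Perm (Fin n)) :=
    fun ℓ => (W ℓ).biUnion (fun v => Ev ℓ v) with hF
  set bd : ℝ := (1/2 : ℝ) ^ (n / (100 * Λ ^ 2)) *
    (Fintype.card (Fin d → Equiv.Perm (Fin n)) : ℝ) with hbd
  have hcover : (Finset.univ : Finset (Fin d → Equiv.Perm (Fin n))).filter
        (fun π => ∃ w : FreeGroup (Fin d), w ≠ 1 ∧ FreeGroup.norm w ≤ Λ ∧
          FreeGroup.lift π w = 1)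
      ⊆ (Finset.range (Λ + 1)).biUnion F := by
    intro π hπ
    rw [Finset.mem_filter] at hπ
    obtain ⟨-, w, hw1, hw2, hw3⟩ := hπ
    have hlen : w.toWord.reverse.length = FreeGroup.norm w := by
      rw [List.length_reverse]; rfl
    refine Finset.mem_biUnion.2 ⟨FreeGroup.norm w, Finset.mem_range.2 (by omega), ?_⟩
    refine Finset.mem_biUnion.2 ⟨(⟨w.toWord.reverse, hlen⟩ : List.Vector (Fin d × Bool) (FreeGroup.norm w)), ?_, ?_⟩
    · rw [hW]; refine Finset.mem_filter.2 ?_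
      refine ⟨Finset.mem_univ _, ?_, chain'_toWord_rev w⟩
      simp only [List.Vector.toList_mk]
      intro hnil
      rw [List.reverse_eq_nil_iff] at hnil
      exact hw1 (FreeGroup.toWord_eq_nil_iff.1 hnil)
    · rw [hEv]; refine Finset.mem_filter.2 ?_
      refine ⟨Finset.mem_univ _, fun x => ?_⟩
      simp only [List.Vector.toList_mk]
      rw [← lift_eq_walk, hw3]
      rfl
  have hinner : ∀ ℓ ∈ Finset.range (Λ + 1),
      ((F ℓ).card : ℝ) ≤ ((2 * d : ℕ) : ℝ) ^ Λ * bd := by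
    intro ℓ hℓ
    rw [Finset.mem_range] at hℓ
    have hℓΛ : ℓ ≤ Λ := by omega
    have hone : ∀ v ∈ W ℓ, ((Ev ℓ v).card : ℝ) ≤ bd := by
      intro v hv
      rw [hW, Finset.mem_filter] at hv
      obtain ⟨-, hv1, hv2⟩ := hv
      have hlen : v.toList.length = ℓ := v.2
      have hℓpos : 0 < ℓ := by rw [← hlen]; exact List.length_pos_iff.2 hv1
      have hb := count_bound v.toList hv1 hv2 hn (by rw [hlen]; nlinarith)
      refine le_trans hb ?_
      rw [hbd]
      refine mul_le_mul_of_nonneg_right ?_ (Nat.cast_nonneg _)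
      refine pow_le_pow_of_le_one (by norm_num) (by norm_num) ?_
      rw [hlen]
      exact Nat.div_le_div_left (by nlinarith) (Nat.mul_pos (by norm_num) (pow_pos hℓpos 2))
    calc ((F ℓ).card : ℝ)
        ≤ ∑ v ∈ W ℓ, ((Ev ℓ v).card : ℝ) := by
          rw [hF]
          have := Finset.card_biUnion_le (s := W ℓ) (t := fun v => Ev ℓ v)
          calc ((W ℓ).biUnion (fun v => Ev ℓ v)).card
              ≤ ((∑ v ∈ W ℓ, (Ev ℓ v).card : ℕ) : ℝ) := by exact_mod_cast this
            _ = ∑ v ∈ W ℓ, ((Ev ℓ v).card : ℝ) := by push_cast; rfl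
      _ ≤ ((W ℓ).card : ℝ) * bd := by
          refine le_trans (Finset.sum_le_card_nsmul _ _ _ hone) ?_
          rw [nsmul_eq_mul]
      _ ≤ ((2 * d : ℕ) : ℝ) ^ Λ * bd := by
          refine mul_le_mul_of_nonneg_right ?_ (by positivity)
          have h1 : (W ℓ).card ≤ Fintype.card (List.Vector (Fin d × Bool) ℓ) := by
            rw [← Finset.card_univ]
            exact Finset.card_le_card (Finset.filter_subset _ _)
          have h2 : Fintype.card (List.Vector (Fin d × Bool) ℓ) = (2 * d) ^ ℓ := by
            rw [card_vector, Fintype.card_prod, Fintype.card_fin, Fintype.card_bool]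
            ring_nf
          have h3 : ((2 * d) ^ ℓ : ℕ) ≤ (2 * d) ^ Λ := Nat.pow_le_pow_right (by omega : 1 ≤ 2*d) hℓΛ
          calc ((W ℓ).card : ℝ) ≤ (((2 * d) ^ Λ : ℕ) : ℝ) := by
                rw [h2] at h1
                exact_mod_cast le_trans h1 h3
            _ = ((2 * d : ℕ) : ℝ) ^ Λ := by push_cast; ring
  have hc1 := Finset.card_le_card hcover
  have hc2 := Finset.card_biUnion_le (s := Finset.range (Λ + 1)) (t := F)
  have hchain : (((Finset.univ : Finset (Fin d → Equiv.Perm (Fin n))).filter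
        (fun π => ∃ w : FreeGroup (Fin d), w ≠ 1 ∧ FreeGroup.norm w ≤ Λ ∧
          FreeGroup.lift π w = 1)).card : ℝ)
      ≤ ∑ ℓ ∈ Finset.range (Λ + 1), ((F ℓ).card : ℝ) := by
    calc (((Finset.univ : Finset (Fin d → Equiv.Perm (Fin n))).filter
        (fun π => ∃ w : FreeGroup (Fin d), w ≠ 1 ∧ FreeGroup.norm w ≤ Λ ∧
          FreeGroup.lift π w = 1)).card : ℝ)
        ≤ (((Finset.range (Λ + 1)).biUnion F).card : ℝ) := by exact_mod_cast hc1
      _ ≤ ((∑ ℓ ∈ Finset.range (Λ + 1), (F ℓ).card : ℕ) : ℝ) := by exact_mod_cast hc2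
      _ = ∑ ℓ ∈ Finset.range (Λ + 1), ((F ℓ).card : ℝ) := by push_cast; rfl
  refine le_trans hchain ?_
  refine le_trans (Finset.sum_le_sum hinner) ?_
  rw [Finset.sum_const, Finset.card_range, nsmul_eq_mul, hbd]
  push_cast
  ring_nf
  exact le_refl _

lemma rpow_third_sq (x : ℝ) (hx : 0 ≤ x) :
    (x ^ ((1:ℝ)/3)) ^ 2 = x ^ ((2:ℝ)/3) := by
  rw [← Real.rpow_natCast (x ^ ((1:ℝ)/3)) 2, ← Real.rpow_mul hx]
  norm_num

lemma rpow_third_cube (x : ℝ) (hx : 0 ≤ x) :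
    (x ^ ((1:ℝ)/3)) ^ 3 = x := by
  rw [← Real.rpow_natCast (x ^ ((1:ℝ)/3)) 3, ← Real.rpow_mul hx]
  norm_num [Real.rpow_one]

end NSRaux

open NSRaux


open Classical Filter

/-- The probability of an event `E` over a tuple of `d` permutations of `{1, …, n}`
chosen independently and uniformly at random. -/
noncomputable def probTuple (n d : ℕ)
    (E : (Fin d → Equiv.Perm (Fin n)) → Prop) : ℝ :=
  ((Finset.univ.filter E).card : ℝ) /
    (Fintype.card (Fin d → Equiv.Perm (Fin n)) : ℝ)

set_option maxHeartbeats 1000000 in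
theorem no_short_relations_whp_d :
    ∃ c > (0 : ℝ), ∀ d : ℕ, 2 ≤ d →
      Tendsto (fun n : ℕ =>
          probTuple n d (fun π =>
            ∀ w : FreeGroup (Fin d), w ≠ 1 →
              (FreeGroup.norm w : ℝ) ≤
                c * ((n : ℝ) / Real.log (2 * (d : ℝ) - 1)) ^ ((1 : ℝ) / 3) →
              FreeGroup.lift π w ≠ 1))
        atTop (nhds 1) := by
  refine ⟨1/100, by norm_num, ?_⟩
  intro d hd
  set lg : ℝ := Real.log (2 * (d : ℝ) - 1) with hlgdef
  have hd2 : (2:ℝ) ≤ (d:ℝ) := by exact_mod_cast hd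
  have hq3 : (3:ℝ) ≤ 2 * (d:ℝ) - 1 := by linarith
  have hlg1 : 1 ≤ lg := by
    have h3 : Real.exp 1 < 3 := lt_trans Real.exp_one_lt_d9 (by norm_num)
    have h := Real.log_le_log (Real.exp_pos 1) (le_of_lt (lt_of_lt_of_le h3 hq3))
    rw [Real.log_exp] at h
    exact h
  have hlgpos : (0:ℝ) < lg := by linarith
  set B : ℕ → ℝ := fun n => 1/100 * ((n:ℝ)/lg) ^ ((1:ℝ)/3) with hBdef
  have hB0 : ∀ n, 0 ≤ B n := by
    intro n
    have h1 : (0:ℝ) ≤ ((n:ℝ)/lg) ^ ((1:ℝ)/3) := Real.rpow_nonneg (by positivity) _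
    rw [hBdef]
    simp only
    linarith
  set Λ : ℕ → ℕ := fun n => ⌊B n⌋₊ with hΛdef
  set total : ℕ → ℝ := fun n => (Fintype.card (Fin d → Equiv.Perm (Fin n)) : ℝ) with htotaldef
  have htotpos : ∀ n, (0:ℝ) < total n := by
    intro n
    rw [htotaldef]
    simp only
    exact_mod_cast Fintype.card_pos
  set bad : ℕ → ℝ := fun n => (((Finset.univ : Finset (Fin d → Equiv.Perm (Fin n))).filter
      (fun π => ∃ w : FreeGroup (Fin d), w ≠ 1 ∧ FreeGroup.norm w ≤ Λ n ∧
        FreeGroup.lift π w = 1)).card : ℝ) with hbaddef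
  -- pointwise formula for the probability
  have hpoint : ∀ n : ℕ, probTuple n d (fun π =>
      ∀ w : FreeGroup (Fin d), w ≠ 1 →
        (FreeGroup.norm w : ℝ) ≤ 1/100 * ((n : ℝ) / lg) ^ ((1 : ℝ) / 3) →
        FreeGroup.lift π w ≠ 1) = 1 - bad n / total n := by
    intro n
    have hneg : (Finset.univ : Finset (Fin d → Equiv.Perm (Fin n))).filter
        (fun π => ¬ (∀ w : FreeGroup (Fin d), w ≠ 1 →
          (FreeGroup.norm w : ℝ) ≤ 1/100 * ((n : ℝ) / lg) ^ ((1 : ℝ) / 3) →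
          FreeGroup.lift π w ≠ 1))
        = (Finset.univ : Finset (Fin d → Equiv.Perm (Fin n))).filter
          (fun π => ∃ w : FreeGroup (Fin d), w ≠ 1 ∧ FreeGroup.norm w ≤ Λ n ∧
            FreeGroup.lift π w = 1) := by
      apply Finset.filter_congr
      intro π _
      constructor
      · intro h
        push_neg at h
        obtain ⟨w, h1, h2, h3⟩ := h
        exact ⟨w, h1, (Nat.le_floor_iff (hB0 n)).2 h2, h3⟩
      · rintro ⟨w, h1, h2, h3⟩
        push_neg
        exact ⟨w, h1, (Nat.le_floor_iff (hB0 n)).1 h2, h3⟩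
    have hsplit := Finset.card_filter_add_card_filter_not
      (s := (Finset.univ : Finset (Fin d → Equiv.Perm (Fin n))))
      (p := fun π => ∀ w : FreeGroup (Fin d), w ≠ 1 →
        (FreeGroup.norm w : ℝ) ≤ 1/100 * ((n : ℝ) / lg) ^ ((1 : ℝ) / 3) →
        FreeGroup.lift π w ≠ 1)
    rw [hneg, Finset.card_univ] at hsplit
    have hgood : ((((Finset.univ : Finset (Fin d → Equiv.Perm (Fin n))).filter
        (fun π => ∀ w : FreeGroup (Fin d), w ≠ 1 →
          (FreeGroup.norm w : ℝ) ≤ 1/100 * ((n : ℝ) / lg) ^ ((1 : ℝ) / 3) →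
          FreeGroup.lift π w ≠ 1)).card) : ℝ) = total n - bad n := by
      rw [htotaldef, hbaddef]
      simp only
      have := hsplit
      push_cast [← this]
      ring
    rw [probTuple, hgood]
    rw [sub_div, div_self (ne_of_gt (htotpos n))]
  -- the bound `100 Λ² ≤ n`
  have he2 : ∀ n : ℕ, 1 ≤ n → 100 * (Λ n)^2 ≤ n := by
    intro n hn1
    have hn1r : (1:ℝ) ≤ (n:ℝ) := by exact_mod_cast hn1
    have hf : (Λ n : ℝ) ≤ B n := Nat.floor_le (hB0 n)
    have hsq : ((Λ n : ℝ))^2 ≤ (B n)^2 := by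
      apply pow_le_pow_left₀ (Nat.cast_nonneg _) hf
    have hBsq : (B n)^2 = (1/10000) * (((n:ℝ)/lg) ^ ((1:ℝ)/3))^2 := by
      rw [hBdef]; simp only; ring
    have hpow : (((n:ℝ)/lg) ^ ((1:ℝ)/3))^2 = ((n:ℝ)/lg) ^ ((2:ℝ)/3) :=
      rpow_third_sq _ (by positivity)
    have hdl : ((n:ℝ)/lg) ≤ (n:ℝ) := by
      apply div_le_self (Nat.cast_nonneg _) hlg1
    have hmono : ((n:ℝ)/lg) ^ ((2:ℝ)/3) ≤ ((n:ℝ)) ^ ((2:ℝ)/3) :=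
      Real.rpow_le_rpow (by positivity) hdl (by norm_num)
    have hlast : ((n:ℝ)) ^ ((2:ℝ)/3) ≤ (n:ℝ) := by
      have := Real.rpow_le_rpow_of_exponent_le hn1r (by norm_num : (2:ℝ)/3 ≤ 1)
      rwa [Real.rpow_one] at this
    have : (100 * (Λ n : ℝ)^2) ≤ (n:ℝ) := by
      calc 100 * (Λ n : ℝ)^2 ≤ 100 * (B n)^2 := by linarith
        _ = (1/100) * (((n:ℝ)/lg) ^ ((1:ℝ)/3))^2 := by rw [hBsq]; ring
        _ ≤ ((n:ℝ)/lg) ^ ((2:ℝ)/3) := by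
            have hX0 : (0:ℝ) ≤ ((n:ℝ)/lg) ^ ((2:ℝ)/3) := Real.rpow_nonneg (by positivity) _
            rw [hpow]
            linarith
        _ ≤ (n:ℝ) := le_trans hmono hlast
    exact_mod_cast this
  -- eventual bound on the bad ratio
  set a : ℕ → ℝ := fun n => ((Λ n : ℝ) + 1) * ((2 * d : ℕ) : ℝ) ^ (Λ n) *
      (1/2 : ℝ) ^ (n / (100 * (Λ n)^2)) with hadef
  have hbound : ∀ᶠ n in atTop, bad n / total n ≤ a n := by
    rw [eventually_atTop]
    refine ⟨100, fun n hn => ?_⟩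
    have hmc := main_count (n := n) (d := d) (Λ n) (by omega) hn (he2 n (by omega))
    rw [div_le_iff₀ (htotpos n)]
    rw [hbaddef, hadef, htotaldef]
    simp only
    refine le_trans hmc ?_
    exact le_of_eq (by ring)
  -- `B` tends to infinity, hence eventually `1 ≤ Λ`
  have hBtop : Tendsto B atTop atTop := by
    rw [hBdef]
    apply Tendsto.const_mul_atTop (by norm_num : (0:ℝ) < 1/100)
    exact (tendsto_rpow_atTop (by norm_num : (0:ℝ) < 1/3)).comp
      (tendsto_natCast_atTop_atTop.atTop_div_const hlgpos)
  have hΛ1 : ∀ᶠ n in atTop, 1 ≤ Λ n := by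
    filter_upwards [hBtop.eventually_ge_atTop 1] with n hn
    exact Nat.le_floor (by exact_mod_cast hn)
  -- core inequality
  set g : ℕ → ℝ := fun n => 3 * ((n:ℝ) ^ ((1:ℝ)/3) + 1) * Real.exp (-(n:ℝ) ^ ((1:ℝ)/3))
    with hgdef
  have hcore : ∀ n : ℕ, 1 ≤ Λ n → 1 ≤ n → a n ≤ g n := by
    intro n hΛn hn1
    have hn1r : (1:ℝ) ≤ (n:ℝ) := by exact_mod_cast hn1
    have hnpos : (0:ℝ) < (n:ℝ) := by linarith
    set t : ℝ := (n:ℝ) ^ ((1:ℝ)/3) with htdef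
    set L : ℝ := lg ^ ((1:ℝ)/3) with hLdef
    set y : ℝ := t * lg ^ ((2:ℝ)/3) with hydef
    have ht1 : 1 ≤ t := by
      rw [htdef]
      calc (1:ℝ) = (1:ℝ) ^ ((1:ℝ)/3) := (Real.one_rpow _).symm
        _ ≤ (n:ℝ) ^ ((1:ℝ)/3) := Real.rpow_le_rpow (by norm_num) hn1r (by norm_num)
    have ht0 : (0:ℝ) < t := by linarith
    have hL1 : 1 ≤ L := by
      rw [hLdef]
      calc (1:ℝ) = (1:ℝ) ^ ((1:ℝ)/3) := (Real.one_rpow _).symm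
        _ ≤ lg ^ ((1:ℝ)/3) := Real.rpow_le_rpow (by norm_num) hlg1 (by norm_num)
    have hlg23 : 1 ≤ lg ^ ((2:ℝ)/3) := by
      calc (1:ℝ) = (1:ℝ) ^ ((2:ℝ)/3) := (Real.one_rpow _).symm
        _ ≤ lg ^ ((2:ℝ)/3) := Real.rpow_le_rpow (by norm_num) hlg1 (by norm_num)
    have hyt : t ≤ y := by
      rw [hydef]; nlinarith
    have hy0 : (0:ℝ) ≤ y := by linarith
    have hdiv : ((n:ℝ)/lg) ^ ((1:ℝ)/3) = t / L := by
      rw [htdef, hLdef]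
      exact Real.div_rpow (Nat.cast_nonneg _) (le_of_lt hlgpos) _
    have hBeq : B n = 1/100 * (t / L) := by
      rw [hBdef]; simp only; rw [hdiv]
    have hΛB : (Λ n : ℝ) ≤ B n := Nat.floor_le (hB0 n)
    have hΛ1r : (1:ℝ) ≤ (Λ n : ℝ) := by exact_mod_cast hΛn
    have hBt : B n ≤ t := by
      rw [hBeq]
      have h1 : t / L ≤ t := div_le_self (le_of_lt ht0) hL1
      nlinarith
    -- the log (2d) bound
    have h2dpos : (0:ℝ) < ((2 * d : ℕ) : ℝ) := by
      have : (0:ℕ) < 2 * d := by omega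
      exact_mod_cast this
    have hlog2d0 : 0 ≤ Real.log ((2 * d : ℕ) : ℝ) := by
      apply Real.log_nonneg
      have : (1:ℕ) ≤ 2 * d := by omega
      exact_mod_cast this
    have hlog2d : Real.log ((2 * d : ℕ) : ℝ) ≤ 2 * lg := by
      have hsq : ((2 * d : ℕ) : ℝ) ≤ (2 * (d:ℝ) - 1)^2 := by push_cast; nlinarith
      have h := Real.log_le_log h2dpos hsq
      rw [Real.log_pow] at h
      rw [hlgdef]
      calc Real.log ((2 * d : ℕ) : ℝ) ≤ (2:ℕ) * Real.log (2 * (d:ℝ) - 1) := h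
        _ = 2 * Real.log (2 * (d:ℝ) - 1) := by norm_num
    have hpow2d : ((2 * d : ℕ) : ℝ) ^ (Λ n) =
        Real.exp ((Λ n : ℝ) * Real.log ((2 * d : ℕ) : ℝ)) := by
      rw [Real.exp_nat_mul, Real.exp_log h2dpos]
    have hL23 : lg ^ ((2:ℝ)/3) = lg / L := by
      rw [hLdef]
      have h23 : (2:ℝ)/3 = 1 - 1/3 := by norm_num
      rw [h23, Real.rpow_sub hlgpos, Real.rpow_one]
    have hexp1 : (Λ n : ℝ) * Real.log ((2 * d : ℕ) : ℝ) ≤ (1/50) * y := by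
      have h1 : (Λ n : ℝ) * Real.log ((2 * d : ℕ) : ℝ) ≤ B n * (2 * lg) :=
        mul_le_mul hΛB hlog2d hlog2d0 (hB0 n)
      have h2 : B n * (2 * lg) = (1/50) * (t * (lg / L)) := by
        rw [hBeq]; ring
      rw [h2, ← hL23] at h1
      calc (Λ n : ℝ) * Real.log ((2 * d : ℕ) : ℝ) ≤ (1/50) * (t * lg ^ ((2:ℝ)/3)) := h1
        _ = (1/50) * y := by rw [hydef]
    -- the K bound
    set K : ℕ := n / (100 * (Λ n)^2) with hKdef
    have hm : 0 < 100 * (Λ n)^2 := by positivity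
    have hmr : (0:ℝ) < 100 * (Λ n : ℝ)^2 := by positivity
    have hKlow : (n:ℝ) / (100 * (Λ n : ℝ)^2) - 1 ≤ (K:ℝ) := by
      have h0 : 100 * (Λ n)^2 * K + n % (100 * (Λ n)^2) = n := by
        rw [hKdef]; exact Nat.div_add_mod n _
      have h2 : n % (100 * (Λ n)^2) < 100 * (Λ n)^2 := Nat.mod_lt n hm
      have h1 : n < 100 * (Λ n)^2 * K + 100 * (Λ n)^2 := by omega
      have h1r : (n:ℝ) < 100 * (Λ n : ℝ)^2 * (K:ℝ) + 100 * (Λ n : ℝ)^2 := by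
        exact_mod_cast h1
      rw [sub_le_iff_le_add, div_le_iff₀ hmr]
      nlinarith
    have ht3 : t ^ 3 = (n:ℝ) := rpow_third_cube _ (Nat.cast_nonneg _)
    have hL2 : L ^ 2 = lg ^ ((2:ℝ)/3) := by
      rw [hLdef]; exact rpow_third_sq _ (le_of_lt hlgpos)
    have hBpos : 0 < B n := lt_of_lt_of_le (by linarith) hΛB
    have hyK : 100 * y ≤ (n:ℝ) / (100 * (Λ n : ℝ)^2) := by
      have hΛsq : (Λ n : ℝ)^2 ≤ (B n)^2 := pow_le_pow_left₀ (Nat.cast_nonneg _) hΛB 2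
      have h1 : (n:ℝ) / (100 * (B n)^2) ≤ (n:ℝ) / (100 * (Λ n : ℝ)^2) :=
        div_le_div_of_nonneg_left (Nat.cast_nonneg _) hmr (by nlinarith)
      refine le_trans (le_of_eq ?_) h1
      rw [hBeq]
      have hLne : L ≠ 0 := by linarith
      have htne : t ≠ 0 := ne_of_gt ht0
      have hL3 : L ^ 3 = lg := by
        rw [hLdef]; exact rpow_third_cube _ (le_of_lt hlgpos)
      rw [hydef, hL23]
      rw [← ht3]
      field_simp
      rw [← hL3]
    have hKge : 100 * y - 1 ≤ (K:ℝ) := by linarith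
    have hhalf : ((1:ℝ)/2) ^ K = Real.exp ((K:ℝ) * (-(Real.log 2))) := by
      rw [Real.exp_nat_mul, Real.exp_neg, Real.exp_log (by norm_num : (0:ℝ) < 2)]
      norm_num
    -- put it together
    have hlog2lo : (0.6931471803 : ℝ) < Real.log 2 := Real.log_two_gt_d9
    have hlog2hi : Real.log 2 < 1 := by
      have h2e : (2:ℝ) < Real.exp 1 := lt_trans (by norm_num) Real.exp_one_gt_d9
      have h := Real.log_lt_log (by norm_num : (0:ℝ) < 2) h2e
      rwa [Real.log_exp] at h
    have hexpo : (Λ n : ℝ) * Real.log ((2 * d : ℕ) : ℝ) + (K:ℝ) * (-(Real.log 2)) ≤ 1 - y := by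
      have h1 : (100 * y - 1) * Real.log 2 ≤ (K:ℝ) * Real.log 2 :=
        mul_le_mul_of_nonneg_right hKge (by linarith)
      nlinarith
    have haeq : a n = ((Λ n : ℝ) + 1) *
        Real.exp ((Λ n : ℝ) * Real.log ((2 * d : ℕ) : ℝ) + (K:ℝ) * (-(Real.log 2))) := by
      rw [hadef]
      simp only
      rw [← hKdef, hpow2d, hhalf, Real.exp_add, mul_assoc]
    have hfin1 : Real.exp ((Λ n : ℝ) * Real.log ((2 * d : ℕ) : ℝ) + (K:ℝ) * (-(Real.log 2)))
        ≤ Real.exp 1 * Real.exp (-t) := by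
      rw [← Real.exp_add]
      apply Real.exp_le_exp.2
      linarith
    have hexp13 : Real.exp 1 ≤ 3 := le_of_lt (lt_trans Real.exp_one_lt_d9 (by norm_num))
    have hΛt : (Λ n : ℝ) + 1 ≤ t + 1 := by linarith [le_trans hΛB hBt]
    rw [haeq, hgdef]
    simp only
    calc ((Λ n : ℝ) + 1) *
        Real.exp ((Λ n : ℝ) * Real.log ((2 * d : ℕ) : ℝ) + (K:ℝ) * (-(Real.log 2)))
        ≤ (t + 1) * (Real.exp 1 * Real.exp (-t)) := by
          apply mul_le_mul hΛt hfin1 (Real.exp_pos _).le (by linarith)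
      _ ≤ (t + 1) * (3 * Real.exp (-t)) := by
          apply mul_le_mul_of_nonneg_left ?_ (by linarith)
          exact mul_le_mul_of_nonneg_right hexp13 (Real.exp_pos _).le
      _ = 3 * (t + 1) * Real.exp (-t) := by ring
  -- a tends to zero
  have hbad0 : ∀ n, (0:ℝ) ≤ bad n := by
    intro n
    rw [hbaddef]
    exact Nat.cast_nonneg _
  have ha0 : ∀ n, 0 ≤ a n := by
    intro n
    rw [hadef]
    positivity
  have hg0 : Tendsto g atTop (nhds 0) := by
    have h1 : Tendsto (fun x : ℝ => 3 * (x ^ (1:ℕ) * Real.exp (-x)) + 3 * Real.exp (-x))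
        atTop (nhds 0) := by
      have ha' := (Real.tendsto_pow_mul_exp_neg_atTop_nhds_zero 1).const_mul (3:ℝ)
      have hb' := Real.tendsto_exp_neg_atTop_nhds_zero.const_mul (3:ℝ)
      simpa using ha'.add hb'
    have h2 : Tendsto (fun n : ℕ => (n:ℝ) ^ ((1:ℝ)/3)) atTop atTop :=
      (tendsto_rpow_atTop (by norm_num : (0:ℝ) < 1/3)).comp tendsto_natCast_atTop_atTop
    have h3 := h1.comp h2
    refine Tendsto.congr ?_ h3
    intro n
    simp only [Function.comp]
    rw [hgdef]
    simp only
    ring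
  have haten : Tendsto a atTop (nhds 0) := by
    apply tendsto_of_tendsto_of_tendsto_of_le_of_le' tendsto_const_nhds hg0
    · exact Eventually.of_forall ha0
    · filter_upwards [hΛ1, eventually_ge_atTop 1] with n h1 h2
      exact hcore n h1 h2
  have hratio : Tendsto (fun n => bad n / total n) atTop (nhds 0) := by
    apply tendsto_of_tendsto_of_tendsto_of_le_of_le' tendsto_const_nhds haten
    · exact Eventually.of_forall (fun n => div_nonneg (hbad0 n) (le_of_lt (htotpos n)))
    · exact hbound
  have hfinal : Tendsto (fun n => 1 - bad n / total n) atTop (nhds 1) := by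
    have h := (tendsto_const_nhds (x := (1:ℝ)) (f := (atTop : Filter ℕ))).sub hratio
    simpa using h
  exact Tendsto.congr (fun n => (hpoint n).symm) hfinal
end

section
/- Let d ≥ 1 and let w ∈ F_d be a nontrivial word of length k > 0. Then for every positive integer m with m·k < n, the probability P_{S_n}(w) that w(π_1, …, π_d) = 1, over π_1, …, π_d chosen independently and uniformly at random from S_n, satisfies P_{S_n}(w) ≤ (m·k² / (n − m·k))^m. -/
open Classical Filter

namespace ProbAux

open Finset

variable {n d : ℕ}

/-- Apply one letter `ℓ` (a generator index with an orientation) to a point. -/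
def ap (π : Fin d → Equiv.Perm (Fin n)) (ℓ : Fin d × Bool) (x : Fin n) : Fin n :=
  if ℓ.2 then π ℓ.1 x else (π ℓ.1)⁻¹ x

/-- The pair recording the constraint `ap π ℓ a = b`. -/
def pr (ℓ : Fin d × Bool) (a b : Fin n) : Fin n × Fin n :=
  if ℓ.2 then (a, b) else (b, a)

/-- `π` is compatible with the revealed constraints `F`. -/
def Comp (F : Fin d → Finset (Fin n × Fin n)) (π : Fin d → Equiv.Perm (Fin n)) : Prop :=
  ∀ i, ∀ p ∈ F i, π i p.1 = p.2

instance (F : Fin d → Finset (Fin n × Fin n)) (π : Fin d → Equiv.Perm (Fin n)) :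
    Decidable (Comp F π) :=
  inferInstanceAs (Decidable (∀ i, ∀ p ∈ F i, π i p.1 = p.2))

/-- `F` is a family of partial injections. -/
def PI (F : Fin d → Finset (Fin n × Fin n)) : Prop :=
  ∀ i, ∀ p ∈ F i, ∀ q ∈ F i, (p.1 = q.1 ↔ p.2 = q.2)

/-- Points whose image under the step `ℓ` is already constrained. -/
def dm (F : Fin d → Finset (Fin n × Fin n)) (ℓ : Fin d × Bool) : Finset (Fin n) :=
  (F ℓ.1).image fun p => if ℓ.2 then p.1 else p.2

/-- Points that are already constrained as values of the step `ℓ`. -/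
def rn (F : Fin d → Finset (Fin n × Fin n)) (ℓ : Fin d × Bool) : Finset (Fin n) :=
  (F ℓ.1).image fun p => if ℓ.2 then p.2 else p.1

/-- Add the constraint `ap π ℓ a = b` to the family `F`. -/
def ins (F : Fin d → Finset (Fin n × Fin n)) (ℓ : Fin d × Bool) (a b : Fin n) :
    Fin d → Finset (Fin n × Fin n) :=
  Function.update F ℓ.1 (insert (pr ℓ a b) (F ℓ.1))

/-- Number of compatible tuples satisfying the extra condition `Q`. -/
def cnt (Q : (Fin d → Equiv.Perm (Fin n)) → Prop) [DecidablePred Q]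
    (F : Fin d → Finset (Fin n × Fin n)) : ℕ :=
  (Finset.univ.filter fun π => Comp F π ∧ Q π).card

/-- Number of compatible tuples. -/
def NN (F : Fin d → Finset (Fin n × Fin n)) : ℕ :=
  (Finset.univ.filter fun π => Comp F π).card

lemma ap_eq_iff (π : Fin d → Equiv.Perm (Fin n)) (ℓ : Fin d × Bool) (a b : Fin n) :
    π ℓ.1 (pr ℓ a b).1 = (pr ℓ a b).2 ↔ ap π ℓ a = b := by
  rcases ℓ with ⟨i, b2⟩
  cases b2 <;> simp [pr, ap, Equiv.Perm.inv_eq_iff_eq, Equiv.Perm.eq_inv_iff_eq, eq_comm]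
    <;> rw [Equiv.eq_symm_apply, eq_comm]

lemma comp_ins {F : Fin d → Finset (Fin n × Fin n)} {ℓ : Fin d × Bool} {a b : Fin n}
    {π : Fin d → Equiv.Perm (Fin n)} :
    Comp (ins F ℓ a b) π ↔ Comp F π ∧ ap π ℓ a = b := by
  constructor
  · intro h
    refine ⟨fun i p hp => ?_, ?_⟩
    · apply h i
      unfold ins
      rcases eq_or_ne i ℓ.1 with rfl | hne
      · rw [Function.update_self]; exact mem_insert_of_mem hp
      · rw [Function.update_of_ne hne]; exact hp
    · rw [← ap_eq_iff]
      apply h ℓ.1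
      unfold ins
      rw [Function.update_self]
      exact mem_insert_self _ _
  · rintro ⟨h1, h2⟩ i p hp
    unfold ins at hp
    rcases eq_or_ne i ℓ.1 with rfl | hne
    · rw [Function.update_self] at hp
      rcases mem_insert.1 hp with rfl | hp
      · exact (ap_eq_iff ..).2 h2
      · exact h1 _ _ hp
    · rw [Function.update_of_ne hne] at hp
      exact h1 _ _ hp

lemma cnt_partition (Q : (Fin d → Equiv.Perm (Fin n)) → Prop) [DecidablePred Q]
    (F : Fin d → Finset (Fin n × Fin n)) (ℓ : Fin d × Bool) (a : Fin n) :
    cnt Q F = ∑ b : Fin n, cnt Q (ins F ℓ a b) := by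
  unfold cnt
  rw [Finset.card_eq_sum_card_fiberwise
    (f := fun π => ap π ℓ a) (t := Finset.univ) (fun x _ => mem_univ _)]
  refine Finset.sum_congr rfl fun b _ => ?_
  rw [Finset.filter_filter]
  congr 1
  ext π
  simp only [mem_filter, comp_ins]
  tauto

lemma NN_partition (F : Fin d → Finset (Fin n × Fin n)) (ℓ : Fin d × Bool) (a : Fin n) :
    NN F = ∑ b : Fin n, NN (ins F ℓ a b) := by
  have h := cnt_partition (fun _ => True) F ℓ a
  simpa [cnt, NN] using h

lemma cnt_le_NN (Q : (Fin d → Equiv.Perm (Fin n)) → Prop) [DecidablePred Q]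
    (F : Fin d → Finset (Fin n × Fin n)) : cnt Q F ≤ NN F := by
  apply Finset.card_le_card
  intro π hπ
  simp only [mem_filter] at *
  exact ⟨hπ.1, hπ.2.1⟩

/-- The switching map used to show that all classes of an unrevealed value are equinumerous. -/
def gsw (ℓ : Fin d × Bool) (b b' : Fin n) (π : Fin d → Equiv.Perm (Fin n)) :
    Fin d → Equiv.Perm (Fin n) :=
  Function.update π ℓ.1
    (if ℓ.2 then Equiv.swap b b' * π ℓ.1 else π ℓ.1 * Equiv.swap b b')

lemma gsw_gsw (ℓ : Fin d × Bool) (b b' : Fin n) (π : Fin d → Equiv.Perm (Fin n)) :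
    gsw ℓ b b' (gsw ℓ b b' π) = π := by
  funext i
  unfold gsw
  rcases eq_or_ne i ℓ.1 with rfl | hne
  · rw [Function.update_self, Function.update_self]
    cases hb2 : ℓ.2 <;> simp [mul_assoc, ← mul_assoc (Equiv.swap b b')]
  · simp [Function.update_of_ne hne]

lemma gsw_comm (ℓ : Fin d × Bool) (b b' : Fin n) :
    gsw (n := n) (d := d) ℓ b b' = gsw ℓ b' b := by
  unfold gsw
  rw [Equiv.swap_comm]

lemma comp_gsw {F : Fin d → Finset (Fin n × Fin n)} {li : Fin d} {lb : Bool} {a b b' : Fin n}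
    (hb : b ∉ rn F (li, lb)) (hb' : b' ∉ rn F (li, lb)) {π : Fin d → Equiv.Perm (Fin n)}
    (h : Comp (ins F (li, lb) a b) π) : Comp (ins F (li, lb) a b') (gsw (li, lb) b b' π) := by
  rw [comp_ins] at h ⊢
  obtain ⟨hF, hab⟩ := h
  have hrn : ∀ p ∈ F li, (if lb then p.2 else p.1) ∈ rn F (li, lb) := fun p hp =>
    mem_image.2 ⟨p, hp, rfl⟩
  cases lb
  · -- lb = false
    replace hab : (π li)⁻¹ a = b := hab
    constructor
    · intro i p hp
      rcases eq_or_ne i li with rfl | hne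
      · have h2 : p.1 ∈ rn F (i, false) := by simpa using hrn p hp
        show (Function.update π i (π i * Equiv.swap b b') i) p.1 = p.2
        rw [Function.update_self, Equiv.Perm.mul_apply,
          Equiv.swap_apply_of_ne_of_ne (fun hh => hb (by rwa [hh] at h2))
            (fun hh => hb' (by rwa [hh] at h2))]
        exact hF _ _ hp
      · show (Function.update π li (π li * Equiv.swap b b') i) p.1 = p.2
        rw [Function.update_of_ne hne]
        exact hF _ _ hp
    · show (Function.update π li (π li * Equiv.swap b b') li)⁻¹ a = b'
      rw [Function.update_self, mul_inv_rev, Equiv.Perm.mul_apply, hab]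
      simp
  · -- lb = true
    replace hab : π li a = b := hab
    constructor
    · intro i p hp
      rcases eq_or_ne i li with rfl | hne
      · have h2 : p.2 ∈ rn F (i, true) := by simpa using hrn p hp
        show (Function.update π i (Equiv.swap b b' * π i) i) p.1 = p.2
        rw [Function.update_self, Equiv.Perm.mul_apply, hF _ _ hp]
        exact Equiv.swap_apply_of_ne_of_ne (fun hh => hb (hh ▸ h2)) (fun hh => hb' (hh ▸ h2))
      · show (Function.update π li (Equiv.swap b b' * π li) i) p.1 = p.2
        rw [Function.update_of_ne hne]
        exact hF _ _ hp
    · show (Function.update π li (Equiv.swap b b' * π li) li) a = b'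
      rw [Function.update_self, Equiv.Perm.mul_apply, hab, Equiv.swap_apply_left]

lemma NN_ins_eq {F : Fin d → Finset (Fin n × Fin n)} {ℓ : Fin d × Bool} {a b b' : Fin n}
    (hb : b ∉ rn F ℓ) (hb' : b' ∉ rn F ℓ) :
    NN (ins F ℓ a b) = NN (ins F ℓ a b') := by
  obtain ⟨li, lb⟩ := ℓ
  unfold NN
  apply Finset.card_bij' (i := fun π _ => gsw (li, lb) b b' π)
    (j := fun π _ => gsw (li, lb) b b' π)
  · intro π hπ
    simp only [mem_filter, mem_univ, true_and] at hπ ⊢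
    exact comp_gsw hb hb' hπ
  · intro π hπ
    simp only [mem_filter, mem_univ, true_and] at hπ ⊢
    have := comp_gsw hb' hb (a := a) hπ
    rwa [← gsw_comm] at this
  · intro π _; exact gsw_gsw ..
  · intro π _; exact gsw_gsw ..

lemma NN_ins_zero {F : Fin d → Finset (Fin n × Fin n)} {ℓ : Fin d × Bool} {a b : Fin n}
    (ha : a ∉ dm F ℓ) (hb : b ∈ rn F ℓ) : NN (ins F ℓ a b) = 0 := by
  obtain ⟨li, lb⟩ := ℓ
  unfold NN
  rw [Finset.card_eq_zero, Finset.filter_eq_empty_iff]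
  intro π _
  rw [comp_ins]
  rintro ⟨hF, hab⟩
  obtain ⟨q, hq, hqb⟩ := mem_image.1 hb
  apply ha
  refine mem_image.2 ⟨q, hq, ?_⟩
  have hq12 : π li q.1 = q.2 := hF _ _ hq
  cases lb
  · replace hab : (π li)⁻¹ a = b := hab
    replace hqb : q.1 = b := hqb
    show q.2 = a
    rw [← hq12, hqb, ← hab]
    simp
  · replace hab : π li a = b := hab
    replace hqb : q.2 = b := hqb
    show q.1 = a
    exact ((π li).injective (by rw [hq12, hqb, ← hab])).symm

lemma NN_ins_le {F : Fin d → Finset (Fin n × Fin n)} {ℓ : Fin d × Bool} {a b : Fin n}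
    (ha : a ∉ dm F ℓ) :
    (n - (rn F ℓ).card) * NN (ins F ℓ a b) ≤ NN F := by
  by_cases hb : b ∈ rn F ℓ
  · rw [NN_ins_zero ha hb]; simp
  · calc (n - (rn F ℓ).card) * NN (ins F ℓ a b)
        = ∑ b' ∈ (rn F ℓ)ᶜ, NN (ins F ℓ a b) := by
          rw [Finset.sum_const, smul_eq_mul, Finset.card_compl, Fintype.card_fin]
      _ = ∑ b' ∈ (rn F ℓ)ᶜ, NN (ins F ℓ a b') := by
          refine Finset.sum_congr rfl fun b' hb' => ?_
          exact NN_ins_eq hb (Finset.mem_compl.1 hb')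
      _ ≤ ∑ b' : Fin n, NN (ins F ℓ a b') :=
          Finset.sum_le_sum_of_subset (Finset.subset_univ _)
      _ = NN F := (NN_partition F ℓ a).symm

lemma pr_mem {ℓ : Fin d × Bool} {a b : Fin n} {s : Finset (Fin n)}
    (ha : a ∈ s) (hb : b ∈ s) : (pr ℓ a b).1 ∈ s ∧ (pr ℓ a b).2 ∈ s := by
  obtain ⟨li, lb⟩ := ℓ
  cases lb
  · exact ⟨hb, ha⟩
  · exact ⟨ha, hb⟩

lemma mem_of_dm {F : Fin d → Finset (Fin n × Fin n)} {ℓ : Fin d × Bool} {x : Fin n}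
    {V : Finset (Fin n)} (hEnd : ∀ i, ∀ p ∈ F i, p.1 ∈ V ∧ p.2 ∈ V)
    (hx : x ∈ dm F ℓ) : x ∈ V := by
  obtain ⟨q, hq, rfl⟩ := Finset.mem_image.1 hx
  have h := hEnd ℓ.1 q hq
  split_ifs
  · exact h.1
  · exact h.2

lemma mem_of_rn {F : Fin d → Finset (Fin n × Fin n)} {ℓ : Fin d × Bool} {x : Fin n}
    {V : Finset (Fin n)} (hEnd : ∀ i, ∀ p ∈ F i, p.1 ∈ V ∧ p.2 ∈ V)
    (hx : x ∈ rn F ℓ) : x ∈ V := by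
  obtain ⟨q, hq, rfl⟩ := Finset.mem_image.1 hx
  have h := hEnd ℓ.1 q hq
  split_ifs
  · exact h.2
  · exact h.1

lemma end_ins {F : Fin d → Finset (Fin n × Fin n)} {ℓ : Fin d × Bool} {a b : Fin n}
    {V V' : Finset (Fin n)} (hEnd : ∀ i, ∀ p ∈ F i, p.1 ∈ V ∧ p.2 ∈ V)
    (hVV : V ⊆ V') (ha : a ∈ V') (hb : b ∈ V') :
    ∀ i, ∀ p ∈ ins F ℓ a b i, p.1 ∈ V' ∧ p.2 ∈ V' := by
  intro i p hp
  unfold ins at hp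
  rcases eq_or_ne i ℓ.1 with rfl | hne
  · rw [Function.update_self] at hp
    rcases Finset.mem_insert.1 hp with rfl | hp
    · exact pr_mem ha hb
    · exact ⟨hVV (hEnd _ _ hp).1, hVV (hEnd _ _ hp).2⟩
  · rw [Function.update_of_ne hne] at hp
    exact ⟨hVV (hEnd _ _ hp).1, hVV (hEnd _ _ hp).2⟩

lemma sum_card_ins_le (F : Fin d → Finset (Fin n × Fin n)) (ℓ : Fin d × Bool) (a b : Fin n) :
    ∑ i, ((ins F ℓ a b) i).card ≤ (∑ i, (F i).card) + 1 := by
  unfold ins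
  have : ∀ i : Fin d, (Function.update F ℓ.1 (insert (pr ℓ a b) (F ℓ.1)) i).card =
      Function.update (fun i => (F i).card) ℓ.1 (insert (pr ℓ a b) (F ℓ.1)).card i := by
    intro i
    exact Function.apply_update (fun _ s => s.card) F ℓ.1 _ i
  rw [Finset.sum_congr rfl fun i _ => this i]
  rw [Finset.sum_update_of_mem (Finset.mem_univ ℓ.1)]
  have h2 : (insert (pr ℓ a b) (F ℓ.1)).card ≤ (F ℓ.1).card + 1 := Finset.card_insert_le _ _
  have h3 : ∑ i, (F i).card = (F ℓ.1).card + ∑ i ∈ Finset.univ \ {ℓ.1}, (F i).card := by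
    rw [Finset.sum_eq_add_sum_sdiff_singleton_of_mem (Finset.mem_univ ℓ.1)]
  omega

lemma card_rn_le (F : Fin d → Finset (Fin n × Fin n)) (ℓ : Fin d × Bool) :
    (rn F ℓ).card ≤ ∑ i, (F i).card := by
  calc (rn F ℓ).card ≤ (F ℓ.1).card := Finset.card_image_le
  _ ≤ ∑ i, (F i).card := Finset.single_le_sum (f := fun i => (F i).card) (fun i _ => Nat.zero_le _) (Finset.mem_univ ℓ.1)

/-- Evaluate a list of letters (applying the head first). -/
def evalR (π : Fin d → Equiv.Perm (Fin n)) (L : List (Fin d × Bool)) (x : Fin n) : Fin n :=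
  L.foldl (fun y ℓ => ap π ℓ y) x

@[simp] lemma evalR_nil (π : Fin d → Equiv.Perm (Fin n)) (x : Fin n) : evalR π [] x = x := rfl

@[simp] lemma evalR_cons (π : Fin d → Equiv.Perm (Fin n)) (ℓ : Fin d × Bool)
    (u : List (Fin d × Bool)) (x : Fin n) : evalR π (ℓ :: u) x = evalR π u (ap π ℓ x) := rfl

lemma evalR_eq_prod (π : Fin d → Equiv.Perm (Fin n)) (L : List (Fin d × Bool)) (x : Fin n) :
    evalR π L x =
      ((L.reverse.map fun ℓ => if ℓ.2 then π ℓ.1 else (π ℓ.1)⁻¹).prod : Equiv.Perm (Fin n)) x := by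
  induction L generalizing x with
  | nil => simp [evalR]
  | cons ℓ u ihu =>
    rw [evalR_cons, ihu]
    rw [List.reverse_cons, List.map_append, List.prod_append]
    rw [Equiv.Perm.mul_apply]
    congr 1
    obtain ⟨li, lb⟩ := ℓ
    cases lb <;> simp [ap]

lemma lift_fix {π : Fin d → Equiv.Perm (Fin n)} {w : FreeGroup (Fin d)}
    (h : FreeGroup.lift π w = 1) (x : Fin n) : evalR π (w.toWord).reverse x = x := by
  rw [evalR_eq_prod, List.reverse_reverse]
  have hw : FreeGroup.lift π w
      = (w.toWord.map fun ℓ => if ℓ.2 then π ℓ.1 else (π ℓ.1)⁻¹).prod := by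
    conv_lhs => rw [← FreeGroup.mk_toWord (x := w)]
    rw [FreeGroup.lift_mk]
    congr 1
    apply List.map_congr_left
    intro ℓ _
    cases hb : ℓ.2 <;> simp [hb]
  rw [← hw, h]
  simp

lemma pr_dm_coord (ℓ : Fin d × Bool) (a b : Fin n) :
    (if ℓ.2 then (pr ℓ a b).1 else (pr ℓ a b).2) = a := by
  obtain ⟨li, lb⟩ := ℓ
  cases lb <;> rfl

lemma inner_bound {m k : ℕ} (hn : m * k < n)
    (Q : (Fin d → Equiv.Perm (Fin n)) → Prop) [DecidablePred Q] (j : ℕ) (qj : ℝ) (hqj : 0 ≤ qj)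
    (HM : ∀ (F : Fin d → Finset (Fin n × Fin n)) (V : Finset (Fin n)),
      (∀ i, ∀ p ∈ F i, p.1 ∈ V ∧ p.2 ∈ V) →
      (∑ i, (F i).card) + j * k ≤ m * k → V.card + j * k ≤ m * k →
      (cnt Q F : ℝ) ≤ qj * NN F) :
    ∀ (u : List (Fin d × Bool)) (F : Fin d → Finset (Fin n × Fin n)) (V : Finset (Fin n))
      (a y : Fin n),
      (∀ L₁ p q L₂, u = L₁ ++ p :: q :: L₂ → p.1 = q.1 → p.2 = q.2) →
      (∀ i, ∀ p ∈ F i, p.1 ∈ V ∧ p.2 ∈ V) → y ∈ V → a ∈ V →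
      (∀ ℓ₂ u₂, u = ℓ₂ :: u₂ → a ∉ dm F ℓ₂) →
      V.card + u.length + j * k ≤ m * k + 1 →
      (∑ i, (F i).card) + u.length + j * k ≤ m * k →
      (∀ π, Comp F π → Q π → evalR π u a = y) →
      u ≠ [] →
      (cnt Q F : ℝ) ≤ (u.length : ℝ) * (((m*k : ℕ) : ℝ) / ((n:ℝ) - ((m*k : ℕ) : ℝ)))
        * qj * NN F := by
  intro u
  induction u with
  | nil => intro F V a y _ _ _ _ _ _ _ _ hne; exact absurd rfl hne
  | cons ℓ u' ih =>
    intro F V a y hchain hEnd hyV haV hfree hV hF hret _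
    have hfr : a ∉ dm F ℓ := hfree ℓ u' rfl
    set D : ℝ := (n:ℝ) - ((m*k : ℕ) : ℝ) with hD
    have hDpos : (0:ℝ) < D := by
      rw [hD, sub_pos]
      exact_mod_cast hn
    have hlen : (ℓ :: u').length = u'.length + 1 := rfl
    have hNN0 : (0:ℝ) ≤ (NN F : ℝ) := Nat.cast_nonneg _
    -- the partition of the count according to the value of the next step
    have hpart : (cnt Q F : ℝ) = ∑ b : Fin n, (cnt Q (ins F ℓ a b) : ℝ) := by
      exact_mod_cast congrArg (Nat.cast (R := ℝ)) (cnt_partition Q F ℓ a)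
    have hsumF : (∑ i, (F i).card) ≤ m * k := by omega
    -- bound for the coincidence branch
    have hco : ∀ b ∈ V, (cnt Q (ins F ℓ a b) : ℝ) ≤ qj * ((NN F : ℝ) / D) := by
      intro b hbV
      by_cases hb : b ∈ rn F ℓ
      · have h0 : cnt Q (ins F ℓ a b) = 0 :=
          Nat.le_zero.1 (le_of_le_of_eq (cnt_le_NN _ _) (NN_ins_zero hfr hb))
        rw [h0]
        push_cast
        positivity
      · have h1 : (cnt Q (ins F ℓ a b) : ℝ) ≤ qj * NN (ins F ℓ a b) := by
          apply HM _ V (end_ins hEnd (le_refl V) haV hbV)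
          · have := sum_card_ins_le F ℓ a b
            omega
          · omega
        have h2 : D * (NN (ins F ℓ a b) : ℝ) ≤ (NN F : ℝ) := by
          have h3 := NN_ins_le (b := b) hfr
          have h4 : (rn F ℓ).card ≤ m * k := le_trans (card_rn_le F ℓ) hsumF
          have h5 : ((n - (rn F ℓ).card : ℕ) : ℝ) * (NN (ins F ℓ a b) : ℝ) ≤ (NN F : ℝ) := by
            exact_mod_cast h3
          refine le_trans (mul_le_mul_of_nonneg_right ?_ (Nat.cast_nonneg _)) h5
          rw [Nat.cast_sub (le_of_lt (lt_of_le_of_lt h4 hn))]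
          rw [hD]
          have : ((rn F ℓ).card : ℝ) ≤ ((m*k : ℕ) : ℝ) := by exact_mod_cast h4
          linarith
        calc (cnt Q (ins F ℓ a b) : ℝ) ≤ qj * NN (ins F ℓ a b) := h1
          _ ≤ qj * ((NN F : ℝ) / D) := by
              apply mul_le_mul_of_nonneg_left _ hqj
              rw [le_div_iff₀ hDpos, mul_comm]
              exact h2
    -- bound for the fresh branch
    have hfresh : ∀ b ∈ Vᶜ, (cnt Q (ins F ℓ a b) : ℝ) ≤
        (u'.length : ℝ) * (((m*k : ℕ) : ℝ) / D) * qj * (NN (ins F ℓ a b) : ℝ) := by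
      intro b hbV
      rw [Finset.mem_compl] at hbV
      cases u' with
      | nil =>
        have h0 : cnt Q (ins F ℓ a b) = 0 := by
          unfold cnt
          rw [Finset.card_eq_zero, Finset.filter_eq_empty_iff]
          rintro π _ ⟨hC, hQ⟩
          obtain ⟨hCF, hap⟩ := comp_ins.1 hC
          have := hret π hCF hQ
          rw [evalR_cons, hap, evalR_nil] at this
          exact hbV (this ▸ hyV)
        rw [h0]
        simp
      | cons ℓ' u'' =>
        apply ih (ins F ℓ a b) (insert b V) b y
        · intro L₁ p q L₂ hEq
          exact hchain (ℓ :: L₁) p q L₂ (by rw [hEq, List.cons_append])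
        · exact end_ins hEnd (Finset.subset_insert _ _) (Finset.mem_insert_of_mem haV)
            (Finset.mem_insert_self _ _)
        · exact Finset.mem_insert_of_mem hyV
        · exact Finset.mem_insert_self _ _
        · intro ℓ₂ u₂ hEq hmem
          obtain ⟨rfl, rfl⟩ : ℓ' = ℓ₂ ∧ u'' = u₂ := by
            constructor <;> injection hEq <;> assumption
          obtain ⟨q, hq, hq2⟩ := Finset.mem_image.1 hmem
          unfold ins at hq
          rcases eq_or_ne ℓ'.1 ℓ.1 with h1 | h1
          · rw [h1, Function.update_self] at hq
            rcases Finset.mem_insert.1 hq with rfl | hq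
            · -- the new pair : its dm-coordinate is a (using reducedness)
              have h2 : ℓ.2 = ℓ'.2 := hchain [] ℓ ℓ' u'' rfl h1.symm
              rw [← h2] at hq2
              rw [pr_dm_coord] at hq2
              exact hbV (hq2 ▸ haV)
            · have h3 := hEnd ℓ.1 q hq
              apply hbV
              rw [← hq2]
              split_ifs
              · exact h3.1
              · exact h3.2
          · rw [Function.update_of_ne h1] at hq
            have h3 := hEnd ℓ'.1 q hq
            apply hbV
            rw [← hq2]
            split_ifs
            · exact h3.1
            · exact h3.2
        · have h4 := Finset.card_insert_le b V
          have h5 : (ℓ :: ℓ' :: u'').length = u''.length + 2 := rfl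
          rw [h5] at hV
          have h6 : (ℓ' :: u'').length = u''.length + 1 := rfl
          omega
        · have h4 := sum_card_ins_le F ℓ a b
          have h5 : (ℓ :: ℓ' :: u'').length = u''.length + 2 := rfl
          rw [h5] at hF
          have h6 : (ℓ' :: u'').length = u''.length + 1 := rfl
          omega
        · intro π hC hQ
          obtain ⟨hCF, hap⟩ := comp_ins.1 hC
          have := hret π hCF hQ
          rwa [evalR_cons, hap] at this
        · exact List.cons_ne_nil _ _
    -- assemble
    rw [hpart, ← Finset.sum_add_sum_compl V (fun b => (cnt Q (ins F ℓ a b) : ℝ))]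
    have hVcard : (V.card : ℝ) ≤ ((m*k : ℕ) : ℝ) := by
      have : V.card ≤ m * k := by omega
      exact_mod_cast this
    have hS1 : ∑ b ∈ V, (cnt Q (ins F ℓ a b) : ℝ) ≤ ((m*k : ℕ) : ℝ) / D * qj * NN F := by
      calc ∑ b ∈ V, (cnt Q (ins F ℓ a b) : ℝ) ≤ V.card • (qj * ((NN F : ℝ) / D)) :=
            Finset.sum_le_card_nsmul V _ _ hco
        _ = (V.card : ℝ) * (qj * ((NN F : ℝ) / D)) := by rw [nsmul_eq_mul]
        _ ≤ ((m*k : ℕ) : ℝ) * (qj * ((NN F : ℝ) / D)) := by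
            apply mul_le_mul_of_nonneg_right hVcard
            positivity
        _ = ((m*k : ℕ) : ℝ) / D * qj * NN F := by ring
    have hS2 : ∑ b ∈ Vᶜ, (cnt Q (ins F ℓ a b) : ℝ) ≤
        (u'.length : ℝ) * (((m*k : ℕ) : ℝ) / D) * qj * NN F := by
      calc ∑ b ∈ Vᶜ, (cnt Q (ins F ℓ a b) : ℝ)
          ≤ ∑ b ∈ Vᶜ, (u'.length : ℝ) * (((m*k : ℕ) : ℝ) / D) * qj * (NN (ins F ℓ a b) : ℝ) :=
            Finset.sum_le_sum hfresh
        _ = (u'.length : ℝ) * (((m*k : ℕ) : ℝ) / D) * qj *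
              ∑ b ∈ Vᶜ, (NN (ins F ℓ a b) : ℝ) := by rw [Finset.mul_sum]
        _ ≤ (u'.length : ℝ) * (((m*k : ℕ) : ℝ) / D) * qj * NN F := by
            apply mul_le_mul_of_nonneg_left _ (by positivity)
            have h7 : (NN F : ℝ) = ∑ b : Fin n, (NN (ins F ℓ a b) : ℝ) := by
              exact_mod_cast congrArg (Nat.cast (R := ℝ)) (NN_partition F ℓ a)
            rw [h7]
            apply Finset.sum_le_sum_of_subset_of_nonneg (Finset.subset_univ _)
            intro b _ _
            exact Nat.cast_nonneg _
    calc ∑ b ∈ V, (cnt Q (ins F ℓ a b) : ℝ) + ∑ b ∈ Vᶜ, (cnt Q (ins F ℓ a b) : ℝ)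
        ≤ ((m*k : ℕ) : ℝ) / D * qj * NN F
          + (u'.length : ℝ) * (((m*k : ℕ) : ℝ) / D) * qj * NN F := add_le_add hS1 hS2
      _ = ((ℓ :: u').length : ℝ) * (((m*k : ℕ) : ℝ) / D) * qj * NN F := by
          rw [hlen]
          push_cast
          ring

lemma split_of_reduced (w : FreeGroup (Fin d)) :
    ∀ (L₁ : List (Fin d × Bool)) (p q : Fin d × Bool) (L₂ : List (Fin d × Bool)),
      w.toWord.reverse = L₁ ++ p :: q :: L₂ → p.1 = q.1 → p.2 = q.2 := by
  intro L₁ p q L₂ hEq h1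
  by_contra h2
  have hpq : p = (q.1, !q.2) := by
    rcases p with ⟨p1, p2⟩
    rcases q with ⟨q1, q2⟩
    simp only [Prod.mk.injEq]
    refine ⟨h1, ?_⟩
    have h2' : ¬ p2 = q2 := h2
    cases p2 <;> cases q2 <;> first | rfl | exact absurd rfl h2'
  have hEq2 : w.toWord = L₂.reverse ++ (q.1, q.2) :: (q.1, !q.2) :: L₁.reverse := by
    have h3 := congrArg List.reverse hEq
    rw [List.reverse_reverse] at h3
    rw [h3, hpq, List.reverse_append]
    simp
  exact FreeGroup.reduce.not (p := False) (x := q.1) (b := q.2)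
    (L₂ := L₂.reverse) (L₃ := L₁.reverse) (by rw [FreeGroup.reduce_toWord, hEq2])

lemma outer_bound {m k : ℕ} (hn : m * k < n) (hk0 : 0 < k)
    (w : FreeGroup (Fin d)) (hkw : w.toWord.length = k) (j : ℕ) :
    ∀ (F : Fin d → Finset (Fin n × Fin n)) (V : Finset (Fin n)),
      (∀ i, ∀ p ∈ F i, p.1 ∈ V ∧ p.2 ∈ V) →
      (∑ i, (F i).card) + j * k ≤ m * k → V.card + j * k ≤ m * k →
      (cnt (fun π => FreeGroup.lift π w = 1) F : ℝ) ≤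
        (((m*k : ℕ) : ℝ) * (k : ℝ) / ((n:ℝ) - ((m*k:ℕ):ℝ))) ^ j * NN F := by
  induction j with
  | zero =>
    intro F V _ _ _
    rw [pow_zero, one_mul]
    exact_mod_cast cnt_le_NN _ F
  | succ j IH =>
    intro F V hEnd hF hV
    have hq0 : (0:ℝ) ≤ ((m*k : ℕ) : ℝ) * (k : ℝ) / ((n:ℝ) - ((m*k:ℕ):ℝ)) := by
      apply div_nonneg (by positivity)
      rw [sub_nonneg]
      exact_mod_cast le_of_lt hn
    have hjk : k ≤ (j+1) * k := Nat.le_mul_of_pos_left k (Nat.succ_pos j)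
    have hVn : V.card < n := by omega
    have hcoV : 0 < Vᶜ.card := by
      rw [Finset.card_compl, Fintype.card_fin]
      omega
    obtain ⟨y, hy'⟩ := Finset.card_pos.1 hcoV
    have hy : y ∉ V := Finset.mem_compl.1 hy'
    have hrevlen : (w.toWord.reverse).length = k := by rw [List.length_reverse, hkw]
    have hinner := inner_bound hn (fun π => FreeGroup.lift π w = 1) j _ (pow_nonneg hq0 j) IH
      (w.toWord.reverse) F (insert y V) y y (split_of_reduced w)
      (fun i p hp => ⟨Finset.mem_insert_of_mem (hEnd i p hp).1,
        Finset.mem_insert_of_mem (hEnd i p hp).2⟩)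
      (Finset.mem_insert_self y V) (Finset.mem_insert_self y V)
      (fun ℓ₂ u₂ _ hmem => hy (mem_of_dm hEnd hmem))
      (by
        have h8 := Finset.card_insert_le y V
        have h9 : (j+1)*k = j*k + k := Nat.succ_mul j k
        rw [hrevlen]
        omega)
      (by
        have h9 : (j+1)*k = j*k + k := Nat.succ_mul j k
        rw [hrevlen]
        omega)
      (fun π _ hQ => lift_fix hQ y)
      (by
        intro h
        have := congrArg List.length h
        rw [hrevlen] at this
        simp at this
        omega)
    refine le_trans hinner (le_of_eq ?_)
    rw [hrevlen, pow_succ]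
    push_cast
    ring

lemma cnt_irrel (Q : (Fin d → Equiv.Perm (Fin n)) → Prop) (i1 i2 : DecidablePred Q)
    (F : Fin d → Finset (Fin n × Fin n)) : @cnt n d Q i1 F = @cnt n d Q i2 F := by
  unfold cnt
  congr 1
  ext π
  simp only [Finset.mem_filter]

end ProbAux

theorem prob_relation_le {n d k m : ℕ} (hd : 1 ≤ d)
    (w : FreeGroup (Fin d)) (hw : w ≠ 1) (hk : FreeGroup.norm w = k) (hk0 : 0 < k)
    (hm : 0 < m) (hmk : m * k < n) :
    probTuple n d (fun π => FreeGroup.lift π w = 1) ≤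
      (((m : ℝ) * (k : ℝ) ^ 2) / ((n : ℝ) - (m : ℝ) * (k : ℝ))) ^ m := by
  classical
  have hkw : w.toWord.length = k := hk
  have hout := ProbAux.outer_bound (n := n) (d := d) hmk hk0 w hkw m
    (fun _ => ∅) ∅ (fun i p hp => absurd hp (Finset.notMem_empty p))
    (by simp) (by simp)
  have hcard : ∀ (inst : DecidablePred (fun π : Fin d → Equiv.Perm (Fin n) =>
      FreeGroup.lift π w = 1)),
      (@Finset.filter _ _ inst Finset.univ).card
      = ProbAux.cnt (n := n) (d := d) (fun π => FreeGroup.lift π w = 1) (fun _ => ∅) := by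
    intro inst
    unfold ProbAux.cnt
    congr 1
    ext π
    simp [ProbAux.Comp]
  have hNN : ProbAux.NN (n := n) (d := d) (fun _ => ∅)
      = Fintype.card (Fin d → Equiv.Perm (Fin n)) := by
    unfold ProbAux.NN
    rw [Finset.filter_true_of_mem (fun π _ i p hp => absurd hp (Finset.notMem_empty p))]
    exact Finset.card_univ
  have hpos : (0:ℝ) < (Fintype.card (Fin d → Equiv.Perm (Fin n)) : ℝ) := by
    exact_mod_cast Fintype.card_pos
  rw [probTuple, div_le_iff₀ hpos]
  rw [hcard _]
  refine le_trans (le_of_eq ?_) (le_trans hout (le_of_eq ?_))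
  · exact_mod_cast congrArg (Nat.cast (R := ℝ))
      (ProbAux.cnt_irrel _ _ _ (fun _ => ∅))
  rw [hNN]
  congr 2
  push_cast
  ring
end

section
/- Let d ≥ 1 and let w ∈ F_d be a nontrivial word of length k > 0. If n ≥ 4k², then the probability P_{S_n}(w) that w(π_1, …, π_d) = 1, over π_1, …, π_d chosen independently and uniformly at random from S_n, satisfies P_{S_n}(w) ≤ 2^{1 − n/(4k²)}. In particular there is an absolute constant c > 0 such that P_{S_n}(w) ≤ exp(−c·n/k²) whenever n ≥ 4k². -/
open Classical Filter

noncomputable section WordProb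

namespace WordProb

open Finset

variable {n d : ℕ}

abbrev Tup (n d : ℕ) := Fin d → Equiv.Perm (Fin n)

abbrev Sys (n d : ℕ) := Fin d → Finset (Fin n × Fin n)

/-- apply a letter -/
def applyL (l : Fin d × Bool) (π : Tup n d) (y : Fin n) : Fin n :=
  if l.2 then π l.1 y else (π l.1)⁻¹ y

/-- run a word (list of letters, innermost first) -/
def run : List (Fin d × Bool) → Tup n d → Fin n → Fin n
  | [], _, y => y
  | l :: L, π, y => run L π (applyL l π y)

lemma run_cons (l : Fin d × Bool) (L : List (Fin d × Bool)) (π : Tup n d) (y : Fin n) :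
    run (l :: L) π y = run L π (applyL l π y) := rfl

lemma run_append (L₁ L₂ : List (Fin d × Bool)) (π : Tup n d) (y : Fin n) :
    run (L₁ ++ L₂) π y = run L₂ π (run L₁ π y) := by
  induction L₁ generalizing y with
  | nil => rfl
  | cons l L ih => simp [run_cons, ih]

/-- permutation tuples extending a constraint system -/
def Ext (s : Sys n d) : Finset (Tup n d) :=
  univ.filter (fun π => ∀ i, ∀ p ∈ s i, π i p.1 = p.2)

lemma mem_Ext {s : Sys n d} {π : Tup n d} :
    π ∈ Ext s ↔ ∀ i, ∀ p ∈ s i, π i p.1 = p.2 := by simp [Ext]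

def msum (s : Sys n d) : ℕ := ∑ i, (s i).card

def Pts (s : Sys n d) : Finset (Fin n) :=
  univ.biUnion (fun i => (s i).image Prod.fst ∪ (s i).image Prod.snd)

lemma fst_mem_Pts {s : Sys n d} {i : Fin d} {p : Fin n × Fin n} (hp : p ∈ s i) :
    p.1 ∈ Pts s := by
  simp only [Pts, mem_biUnion, mem_union, mem_image]
  exact ⟨i, mem_univ i, Or.inl ⟨p, hp, rfl⟩⟩

lemma snd_mem_Pts {s : Sys n d} {i : Fin d} {p : Fin n × Fin n} (hp : p ∈ s i) :
    p.2 ∈ Pts s := by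
  simp only [Pts, mem_biUnion, mem_union, mem_image]
  exact ⟨i, mem_univ i, Or.inr ⟨p, hp, rfl⟩⟩

/-- add a constraint pair corresponding to letter `l` : `applyL l π a = b`. -/
def addP (l : Fin d × Bool) (a b : Fin n) (s : Sys n d) : Sys n d :=
  Function.update s l.1 (insert (if l.2 then (a, b) else (b, a)) (s l.1))

def freshFor (s : Sys n d) (y : Fin n) (l : Fin d × Bool) : Prop :=
  ∀ p ∈ s l.1, (if l.2 then p.1 else p.2) ≠ y

lemma applyL_eq_iff (l : Fin d × Bool) (π : Tup n d) (a b : Fin n) :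
    applyL l π a = b ↔ π l.1 (if l.2 then a else b) = (if l.2 then b else a) := by
  rcases l with ⟨i, e⟩
  cases e <;> simp [applyL, Equiv.Perm.inv_def, Equiv.symm_apply_eq]
  exact eq_comm

lemma Ext_addP (l : Fin d × Bool) (a b : Fin n) (s : Sys n d) :
    Ext (addP l a b s) = (Ext s).filter (fun π => applyL l π a = b) := by
  ext π
  simp only [mem_Ext, mem_filter, addP]
  constructor
  · intro h
    refine ⟨fun i p hp => ?_, ?_⟩
    · rcases eq_or_ne i l.1 with h' | hne
      · exact h i p (by rw [h', Function.update_self]; exact Finset.mem_insert_of_mem (h' ▸ hp))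
      · exact h i p (by rw [Function.update_of_ne hne]; exact hp)
    · have := h l.1 (if l.2 then (a, b) else (b, a))
        (by rw [Function.update_self]; exact Finset.mem_insert_self _ _)
      rw [applyL_eq_iff]
      cases hl : l.2 <;> simp [hl] at this ⊢ <;> exact this
  · rintro ⟨hπ, hab⟩ i p hp
    rcases eq_or_ne i l.1 with h' | hne
    · subst h'
      rw [Function.update_self] at hp
      rcases Finset.mem_insert.mp hp with rfl | hp
      · rw [applyL_eq_iff] at hab
        cases hl : l.2 <;> simp [hl] at hab ⊢ <;> exact hab
      · exact hπ _ p hp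
    · rw [Function.update_of_ne hne] at hp
      exact hπ _ p hp

lemma sum_card_Ext_addP (l : Fin d × Bool) (a : Fin n) (s : Sys n d) :
    ∑ b : Fin n, (Ext (addP l a b s)).card = (Ext s).card := by
  have := Finset.card_eq_sum_card_fiberwise
    (f := fun π : Tup n d => applyL l π a) (s := Ext s) (t := univ) (fun π _ => mem_univ _)
  rw [this]
  refine Finset.sum_congr rfl fun b _ => ?_
  rw [Ext_addP]

lemma card_le_msum (s : Sys n d) (i : Fin d) : (s i).card ≤ msum s :=
  Finset.single_le_sum (f := fun i => (s i).card) (fun _ _ => Nat.zero_le _) (mem_univ i)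

lemma msum_addP_le (l : Fin d × Bool) (a b : Fin n) (s : Sys n d) :
    msum (addP l a b s) ≤ msum s + 1 := by
  unfold msum addP
  rw [← Finset.add_sum_erase _ _ (mem_univ l.1)]
  have h2 : ∑ i : Fin d, (s i).card = (s l.1).card + ∑ i ∈ univ.erase l.1, (s i).card :=
    (Finset.add_sum_erase _ _ (mem_univ _)).symm
  rw [h2]
  have h3 : ∑ i ∈ univ.erase l.1,
      (Function.update s l.1 (insert (if l.2 = true then (a, b) else (b, a)) (s l.1)) i).card
      = ∑ i ∈ univ.erase l.1, (s i).card := by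
    refine Finset.sum_congr rfl fun i hi => ?_
    rw [Function.update_of_ne (Finset.mem_erase.mp hi).1]
  have hh : (Function.update s l.1 (insert (if l.2 = true then (a, b) else (b, a)) (s l.1))
      l.1).card ≤ (s l.1).card + 1 := by
    rw [Function.update_self]; exact Finset.card_insert_le _ _
  omega

/-- The occupied "target side" of coordinate `l.1` for letter `l`. -/
def ranSide (s : Sys n d) (l : Fin d × Bool) : Finset (Fin n) :=
  (s l.1).image (fun p => if l.2 then p.2 else p.1)

lemma card_Ext_addP_eq (s : Sys n d) (l : Fin d × Bool) (y b b' : Fin n)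
    (hb : b ∉ ranSide s l) (hb' : b' ∉ ranSide s l) :
    (Ext (addP l y b' s)).card = (Ext (addP l y b s)).card := by
  have hswap : ∀ (p : Fin n × Fin n), p ∈ s l.1 →
      Equiv.swap b' b (if l.2 then p.2 else p.1) = (if l.2 then p.2 else p.1) := by
    intro p hp
    apply Equiv.swap_apply_of_ne_of_ne
    · intro h; exact hb' (h ▸ Finset.mem_image_of_mem _ hp)
    · intro h; exact hb (h ▸ Finset.mem_image_of_mem _ hp)
  -- the modification map, in both directions
  set g := Equiv.swap b' b with hg
  have hgg : g * g = 1 := Equiv.swap_mul_self _ _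
  cases hl : l.2 with
  | true =>
    set Φ : Tup n d → Tup n d := fun π => Function.update π l.1 (g * π l.1) with hΦ
    have hΦΦ : ∀ π, Φ (Φ π) = π := by
      intro π
      simp only [hΦ, Function.update_idem, Function.update_self]
      rw [← mul_assoc, hgg, one_mul, Function.update_eq_self]
    have key : ∀ c c' : Fin n, c ∉ ranSide s l → c' ∉ ranSide s l →
        (Equiv.swap b' b c = c') →
        ∀ π ∈ Ext (addP l y c s), Φ π ∈ Ext (addP l y c' s) := by
      intro c c' hc hc' hcc' π hπ
      rw [Ext_addP, mem_filter] at hπ ⊢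
      obtain ⟨hπE, hπc⟩ := hπ
      constructor
      · rw [mem_Ext] at hπE ⊢
        intro i p hp
        rcases eq_or_ne i l.1 with h' | hne
        · subst h'
          simp only [hΦ, Function.update_self, Equiv.Perm.mul_apply]
          rw [hπE l.1 p hp]
          have := hswap p hp
          simpa [hl] using this
        · simp only [hΦ, Function.update_of_ne hne]
          exact hπE i p hp
      · rw [applyL_eq_iff] at hπc ⊢
        simp only [hl, if_true] at hπc ⊢
        simp only [hΦ, Function.update_self, Equiv.Perm.mul_apply, hπc, hg, hcc']
    exact Finset.card_bij' (fun π _ => Φ π) (fun π _ => Φ π)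
      (fun π hπ => key b' b hb' hb (Equiv.swap_apply_left _ _) π hπ)
      (fun π hπ => key b b' hb hb' (Equiv.swap_apply_right _ _) π hπ)
      (fun π _ => hΦΦ π) (fun π _ => hΦΦ π)
  | false =>
    set Φ : Tup n d → Tup n d := fun π => Function.update π l.1 (π l.1 * g) with hΦ
    have hΦΦ : ∀ π, Φ (Φ π) = π := by
      intro π
      simp only [hΦ, Function.update_idem, Function.update_self]
      rw [mul_assoc, hgg, mul_one, Function.update_eq_self]
    have key : ∀ c c' : Fin n, (Equiv.swap b' b c' = c) →
        ∀ π ∈ Ext (addP l y c s), Φ π ∈ Ext (addP l y c' s) := by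
      intro c c' hcc' π hπ
      rw [Ext_addP, mem_filter] at hπ ⊢
      obtain ⟨hπE, hπc⟩ := hπ
      constructor
      · rw [mem_Ext] at hπE ⊢
        intro i p hp
        rcases eq_or_ne i l.1 with h' | hne
        · subst h'
          simp only [hΦ, Function.update_self, Equiv.Perm.mul_apply]
          have := hswap p hp
          simp only [hl] at this
          simp only [if_false, Bool.false_eq_true] at this
          rw [hg] at this
          rw [this]
          exact hπE l.1 p hp
        · simp only [hΦ, Function.update_of_ne hne]
          exact hπE i p hp
      · rw [applyL_eq_iff] at hπc ⊢
        simp only [hl, if_false, Bool.false_eq_true] at hπc ⊢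
        simp only [hΦ, Function.update_self, Equiv.Perm.mul_apply, hg, hcc']
        exact hπc
    exact Finset.card_bij' (fun π _ => Φ π) (fun π _ => Φ π)
      (fun π hπ => key b' b (Equiv.swap_apply_right _ _) π hπ)
      (fun π hπ => key b b' (Equiv.swap_apply_left _ _) π hπ)
      (fun π _ => hΦΦ π) (fun π _ => hΦΦ π)

lemma lemC (s : Sys n d) (l : Fin d × Bool) (y b : Fin n) (hf : freshFor s y l)
    (Dn : ℕ) (hD : Dn + (s l.1).card ≤ n) :
    Dn * (Ext (addP l y b s)).card ≤ (Ext s).card := by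
  by_cases hb : b ∈ ranSide s l
  · -- contradiction: the extended system is inconsistent with injectivity
    have : Ext (addP l y b s) = ∅ := by
      rw [Finset.eq_empty_iff_forall_notMem]
      intro π hπ
      rw [Ext_addP, mem_filter] at hπ
      obtain ⟨hπE, hπc⟩ := hπ
      rw [mem_Ext] at hπE
      obtain ⟨p, hp, hpb⟩ := Finset.mem_image.mp hb
      rw [applyL_eq_iff] at hπc
      have hfp := hf p hp
      cases hl : l.2 with
      | true =>
        simp only [hl, if_true] at hπc hpb hfp
        exact hfp ((π l.1).injective (by rw [hπE l.1 p hp, hπc, hpb]))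
      | false =>
        simp only [hl, if_false, Bool.false_eq_true] at hπc hpb hfp
        apply hfp
        rw [← hπE l.1 p hp, hpb, hπc]
    simp [this]
  · have hcard : ∀ b' ∈ (ranSide s l)ᶜ,
        (Ext (addP l y b' s)).card = (Ext (addP l y b s)).card := fun b' hb' =>
      card_Ext_addP_eq s l y b b' hb (Finset.mem_compl.mp hb')
    have h1 : ((ranSide s l)ᶜ).card * (Ext (addP l y b s)).card
        = ∑ b' ∈ (ranSide s l)ᶜ, (Ext (addP l y b' s)).card := by
      rw [Finset.sum_congr rfl hcard, Finset.sum_const, smul_eq_mul]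
    have h2 : ∑ b' ∈ (ranSide s l)ᶜ, (Ext (addP l y b' s)).card ≤ (Ext s).card := by
      rw [← sum_card_Ext_addP l y s]
      exact Finset.sum_le_sum_of_subset (Finset.subset_univ _)
    have h3 : Dn ≤ ((ranSide s l)ᶜ).card := by
      rw [Finset.card_compl, Fintype.card_fin]
      have := Finset.card_image_le (s := s l.1) (f := fun p => if l.2 then p.2 else p.1)
      unfold ranSide
      omega
    calc Dn * (Ext (addP l y b s)).card
        ≤ ((ranSide s l)ᶜ).card * (Ext (addP l y b s)).card :=
          Nat.mul_le_mul_right _ h3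
      _ ≤ (Ext s).card := h1 ▸ h2

/-- reducedness condition on adjacent letters -/
def RedL : (Fin d × Bool) → (Fin d × Bool) → Prop := fun p q => p.1 = q.1 → p.2 = q.2

/-- weight function for the union bound -/
def wgt : ℕ → ℕ → ℕ
  | 0, _ => 0
  | 1, _ => 1
  | (m+2), b => b + wgt (m+1) (b+1)

lemma wgt_two (m b : ℕ) : wgt (m+2) b = b + wgt (m+1) (b+1) := rfl

lemma wgt_pos (m b : ℕ) : 1 ≤ wgt (m+1) b := by
  induction m generalizing b with
  | zero => simp [wgt]
  | succ m ih => rw [wgt_two]; exact le_add_of_nonneg_of_le (Nat.zero_le _) (ih (b+1))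

lemma wgt_mono (m : ℕ) {b b' : ℕ} (h : b ≤ b') : wgt m b ≤ wgt m b' := by
  induction m using Nat.strong_induction_on generalizing b b' with
  | _ m ih =>
    match m with
    | 0 => simp [wgt]
    | 1 => simp [wgt]
    | (m+2) =>
      rw [wgt_two, wgt_two]
      exact Nat.add_le_add h (ih (m+1) (by omega) (by omega))

lemma wgt_le (m b : ℕ) : wgt (m+1) b ≤ m * (b + m) + 1 := by
  induction m generalizing b with
  | zero => simp [wgt]
  | succ m ih =>
    rw [wgt_two]
    calc b + wgt (m+1) (b+1) ≤ b + (m * (b + 1 + m) + 1) := Nat.add_le_add_left (ih (b+1)) _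
      _ ≤ (m+1) * (b + (m+1)) + 1 := by ring_nf; omega

theorem TRAJ (G : Finset (Tup n d)) (q Dn : ℕ) (x : Fin n) :
    ∀ (M₂ : List (Fin d × Bool)) (s : Sys n d) (y : Fin n) (B : Finset (Fin n)),
    M₂ ≠ [] → List.Chain' RedL M₂ →
    (∀ l, M₂.head? = some l → freshFor s y l) →
    (∀ i, ∀ p ∈ s i, p.1 ∈ B ∧ p.2 ∈ B) →
    y ∈ B → x ∈ B →
    Dn + (msum s + M₂.length) ≤ n →
    (∀ (s' : Sys n d) (B' : Finset (Fin n)), (∀ i, ∀ p ∈ s' i, p.1 ∈ B' ∧ p.2 ∈ B') →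
        B'.card + 1 ≤ B.card + M₂.length → msum s' ≤ msum s + M₂.length →
        q * (Ext s' ∩ G).card ≤ (Ext s').card) →
    q * Dn * ((Ext s ∩ G).filter (fun π => run M₂ π y = x)).card
      ≤ wgt M₂.length B.card * (Ext s).card := by
  intro M₂
  induction M₂ with
  | nil => intro s y B hne; exact absurd rfl hne
  | cons l M₃ ih =>
    intro s y B _ hch hfresh hpts hyB hxB hD hF
    have hfl : freshFor s y l := hfresh l rfl
    by_cases hM₃ : M₃ = []
    · subst hM₃
      have hset : (Ext s ∩ G).filter (fun π => run [l] π y = x) = Ext (addP l y x s) ∩ G := by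
        rw [Ext_addP]
        ext π
        simp only [mem_filter, mem_inter]
        simp only [mem_filter, mem_inter, run, run_cons]
        tauto
      rw [hset]
      have h1 : q * (Ext (addP l y x s) ∩ G).card ≤ (Ext (addP l y x s)).card := by
        apply hF _ B
        · intro i p hp
          unfold addP at hp
          rcases eq_or_ne i l.1 with h' | hne
          · subst h'
            rw [Function.update_self] at hp
            rcases Finset.mem_insert.mp hp with rfl | hp
            · cases hl : l.2 <;> simp [hl] <;>
                first | exact ⟨hyB, hxB⟩ | exact ⟨hxB, hyB⟩
            · exact ⟨(hpts _ p hp).1, (hpts _ p hp).2⟩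
          · rw [Function.update_of_ne hne] at hp
            exact hpts _ p hp
        · simp
        · exact (msum_addP_le _ _ _ _).trans (by simp)
      have h2 : Dn * (Ext (addP l y x s)).card ≤ (Ext s).card := by
        apply lemC s l y x hfl
        have := card_le_msum s l.1
        simp only [List.length_cons, List.length_nil] at hD
        omega
      calc q * Dn * (Ext (addP l y x s) ∩ G).card
          = Dn * (q * (Ext (addP l y x s) ∩ G).card) := by ring
        _ ≤ Dn * (Ext (addP l y x s)).card := Nat.mul_le_mul_left _ h1
        _ ≤ (Ext s).card := h2
        _ ≤ wgt [l].length B.card * (Ext s).card := by simp [wgt]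
    · -- M₃ is nonempty
      obtain ⟨l', M₄, rfl⟩ := List.exists_cons_of_ne_nil hM₃
      have hred : RedL l l' := (List.isChain_cons_cons.mp hch).1
      have hch' : List.Chain' RedL (l' :: M₄) := (List.isChain_cons_cons.mp hch).2
      set CL := (Ext s ∩ G).filter (fun π => run (l :: l' :: M₄) π y = x) with hCL
      have hfib : CL.card = ∑ y' : Fin n, (CL.filter (fun π => applyL l π y = y')).card :=
        Finset.card_eq_sum_card_fiberwise (fun π _ => mem_univ _)
      have hsub : ∀ y' : Fin n, CL.filter (fun π => applyL l π y = y') ⊆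
          (Ext (addP l y y' s) ∩ G).filter (fun π => run (l' :: M₄) π y' = x) := by
        intro y' π hπ
        simp only [hCL, mem_filter, mem_inter] at hπ
        obtain ⟨⟨⟨hE, hG⟩, hrun⟩, happ⟩ := hπ
        simp only [mem_filter, mem_inter, Ext_addP]
        refine ⟨⟨⟨hE, happ⟩, hG⟩, ?_⟩
        rw [← happ]
        exact hrun
      -- the per-fiber bound
      have hkey : ∀ y' : Fin n, q * Dn * (CL.filter (fun π => applyL l π y = y')).card ≤
          (if y' ∈ B then (Ext s).card
           else wgt (l' :: M₄).length (B.card + 1) * (Ext (addP l y y' s)).card) := by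
        intro y'
        have hms : msum (addP l y y' s) ≤ msum s + 1 := msum_addP_le _ _ _ _
        have hcs : (s l.1).card ≤ msum s := card_le_msum s l.1
        have hDle : Dn + (s l.1).card ≤ n := by
          simp only [List.length_cons] at hD; omega
        by_cases hy' : y' ∈ B
        · rw [if_pos hy']
          have h1 : q * (Ext (addP l y y' s) ∩ G).card ≤ (Ext (addP l y y' s)).card := by
            apply hF _ B
            · intro i p hp
              unfold addP at hp
              rcases eq_or_ne i l.1 with h' | hne
              · subst h'
                rw [Function.update_self] at hp
                rcases Finset.mem_insert.mp hp with rfl | hp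
                · cases hl : l.2 <;> simp [hl] <;>
                    first | exact ⟨hyB, hy'⟩ | exact ⟨hy', hyB⟩
                · exact hpts _ p hp
              · rw [Function.update_of_ne hne] at hp
                exact hpts _ p hp
            · simp only [List.length_cons]; omega
            · simp only [List.length_cons]; omega
          have h2 : Dn * (Ext (addP l y y' s)).card ≤ (Ext s).card := lemC s l y y' hfl Dn hDle
          calc q * Dn * (CL.filter (fun π => applyL l π y = y')).card
              ≤ q * Dn * ((Ext (addP l y y' s) ∩ G).filter
                  (fun π => run (l' :: M₄) π y' = x)).card := by
                exact Nat.mul_le_mul_left _ (Finset.card_le_card (hsub y'))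
            _ ≤ q * Dn * (Ext (addP l y y' s) ∩ G).card := by
                exact Nat.mul_le_mul_left _ (Finset.card_le_card (Finset.filter_subset _ _))
            _ = Dn * (q * (Ext (addP l y y' s) ∩ G).card) := by ring
            _ ≤ Dn * (Ext (addP l y y' s)).card := Nat.mul_le_mul_left _ h1
            _ ≤ (Ext s).card := h2
        · rw [if_neg hy']
          -- fresh step: apply the inner induction hypothesis
          have hih := ih (addP l y y' s) y' (insert y' B) (by simp) hch' ?_ ?_
            (mem_insert_self _ _) (mem_insert_of_mem hxB) ?_ ?_
          · calc q * Dn * (CL.filter (fun π => applyL l π y = y')).card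
                ≤ q * Dn * ((Ext (addP l y y' s) ∩ G).filter
                    (fun π => run (l' :: M₄) π y' = x)).card :=
                  Nat.mul_le_mul_left _ (Finset.card_le_card (hsub y'))
              _ ≤ wgt (l' :: M₄).length (insert y' B).card * (Ext (addP l y y' s)).card := hih
              _ = wgt (l' :: M₄).length (B.card + 1) * (Ext (addP l y y' s)).card := by
                  rw [Finset.card_insert_of_notMem hy']
          · -- freshness for the next letter
            intro l₃ hl₃
            simp only [List.head?_cons, Option.some.injEq] at hl₃
            subst hl₃
            intro p hp
            unfold addP at hp
            rcases eq_or_ne l'.1 l.1 with h' | hne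
            · rw [h', Function.update_self] at hp
              rcases Finset.mem_insert.mp hp with rfl | hp
              · have h2 : l.2 = l'.2 := hred h'.symm
                cases hl : l.2 <;> rw [hl] at h2 <;>
                  simp only [← h2, hl, if_true, if_false, Bool.false_eq_true] <;>
                  exact fun hh => hy' (hh ▸ hyB)
              · have hmem : (if l'.2 = true then p.1 else p.2) ∈ B := by
                  rcases hpts l.1 p hp with ⟨h1, h2⟩
                  cases l'.2 <;> simp [h1, h2]
                exact fun hh => hy' (hh ▸ hmem)
            · rw [Function.update_of_ne hne] at hp
              have hmem : (if l'.2 = true then p.1 else p.2) ∈ B := by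
                rcases hpts l'.1 p hp with ⟨h1, h2⟩
                cases l'.2 <;> simp [h1, h2]
              exact fun hh => hy' (hh ▸ hmem)
          · -- points of extended system in insert y' B
            intro i p hp
            unfold addP at hp
            rcases eq_or_ne i l.1 with h' | hne
            · subst h'
              rw [Function.update_self] at hp
              rcases Finset.mem_insert.mp hp with rfl | hp
              · cases hl : l.2 <;> simp [hl, hyB]
              · exact ⟨mem_insert_of_mem (hpts _ p hp).1, mem_insert_of_mem (hpts _ p hp).2⟩
            · rw [Function.update_of_ne hne] at hp
              exact ⟨mem_insert_of_mem (hpts _ p hp).1, mem_insert_of_mem (hpts _ p hp).2⟩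
          · -- D bound
            have := msum_addP_le l y y' s
            simp only [List.length_cons] at hD ⊢
            omega
          · -- push hF inward
            intro s' B' hB' hcard hms'
            apply hF s' B' hB'
            · have : (insert y' B).card ≤ B.card + 1 := Finset.card_insert_le _ _
              simp only [List.length_cons] at hcard ⊢
              omega
            · have := msum_addP_le l y y' s
              simp only [List.length_cons] at hms' ⊢
              omega
      -- summing up
      have hBfilt : Finset.univ.filter (fun y' : Fin n => y' ∈ B) = B := by
        ext z; simp
      have hBcfilt : Finset.univ.filter (fun y' : Fin n => ¬ y' ∈ B) = Bᶜ := by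
        ext z; simp
      calc q * Dn * CL.card
          = ∑ y' : Fin n, q * Dn * (CL.filter (fun π => applyL l π y = y')).card := by
            rw [hfib, Finset.mul_sum]
        _ ≤ ∑ y' : Fin n, (if y' ∈ B then (Ext s).card
              else wgt (l' :: M₄).length (B.card + 1) * (Ext (addP l y y' s)).card) :=
            Finset.sum_le_sum (fun y' _ => hkey y')
        _ = ∑ y' ∈ B, (Ext s).card
            + ∑ y' ∈ Bᶜ, wgt (l' :: M₄).length (B.card + 1) * (Ext (addP l y y' s)).card := by
            rw [Finset.sum_ite, hBfilt, hBcfilt]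
        _ ≤ B.card * (Ext s).card
            + wgt (l' :: M₄).length (B.card + 1) * (Ext s).card := by
            refine Nat.add_le_add (by rw [Finset.sum_const, smul_eq_mul]) ?_
            rw [← Finset.mul_sum]
            refine Nat.mul_le_mul_left _ ?_
            calc ∑ y' ∈ Bᶜ, (Ext (addP l y y' s)).card
                ≤ ∑ y' : Fin n, (Ext (addP l y y' s)).card :=
                  Finset.sum_le_sum_of_subset (Finset.subset_univ _)
              _ = (Ext s).card := sum_card_Ext_addP l y s
        _ = wgt (l :: l' :: M₄).length B.card * (Ext s).card := by
            simp only [List.length_cons]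
            rw [wgt_two, Nat.add_mul]

lemma Pts_subset {s : Sys n d} {B : Finset (Fin n)}
    (h : ∀ i, ∀ p ∈ s i, p.1 ∈ B ∧ p.2 ∈ B) : Pts s ⊆ B := by
  intro z hz
  simp only [Pts, mem_biUnion, mem_union, mem_image] at hz
  obtain ⟨i, -, hz⟩ := hz
  rcases hz with ⟨p, hp, rfl⟩ | ⟨p, hp, rfl⟩
  · exact (h i p hp).1
  · exact (h i p hp).2

lemma ONE (M : List (Fin d × Bool)) (hM : M ≠ []) (hch : List.Chain' RedL M)
    (W : Finset (Tup n d)) (hW : ∀ π ∈ W, ∀ z, run M π z = z)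
    (q : ℕ) (s : Sys n d)
    (hF : ∀ s' : Sys n d, msum s' ≤ msum s + M.length →
        (Pts s').card ≤ (Pts s).card + M.length → q * (Ext s' ∩ W).card ≤ (Ext s').card)
    (hnum : 2 * ((M.length - 1) * ((Pts s).card + M.length) + 1)
        + (msum s + M.length) + ((Pts s).card + 1) ≤ n) :
    2 * q * (Ext s ∩ W).card ≤ (Ext s).card := by
  have hk : 1 ≤ M.length := List.length_pos_iff.mpr hM
  set k := M.length with hkdef
  set r := (Pts s).card with hrdef
  -- a fresh starting point exists
  have hx : ∃ x : Fin n, x ∉ Pts s := by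
    have h1 : (Pts s)ᶜ.Nonempty := by
      rw [← Finset.card_pos, Finset.card_compl, Fintype.card_fin]
      omega
    obtain ⟨x, hx⟩ := h1
    exact ⟨x, Finset.mem_compl.mp hx⟩
  obtain ⟨x, hx⟩ := hx
  set B := insert x (Pts s) with hBdef
  have hBcard : B.card ≤ r + 1 := Finset.card_insert_le _ _
  set Dn := n - (msum s + k) with hDdef
  have hDn : Dn + (msum s + k) = n := Nat.sub_add_cancel (by omega)
  set w₀ := wgt k (r + 1) with hw₀
  have hw0pos : 1 ≤ w₀ := by
    obtain ⟨k', hk'⟩ : ∃ k', k = k' + 1 := ⟨k - 1, by omega⟩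
    rw [hw₀, hk']; exact wgt_pos _ _
  have hw1 : w₀ ≤ (k - 1) * (r + k) + 1 := by
    obtain ⟨k', hk'⟩ : ∃ k', k = k' + 1 := ⟨k - 1, by omega⟩
    have := wgt_le k' (r + 1)
    rw [hw₀, hk']
    have h2 : r + 1 + k' = r + (k' + 1) := by omega
    rw [h2] at this
    simpa [hk'] using this
  have htraj := TRAJ W q Dn x M s x B hM hch ?_ ?_ (mem_insert_self _ _) (mem_insert_self _ _)
    (by omega) ?_
  · have hfilt : (Ext s ∩ W).filter (fun π => run M π x = x) = Ext s ∩ W := by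
      apply Finset.filter_true_of_mem
      intro π hπ
      exact hW π (Finset.mem_inter.mp hπ).2 x
    rw [hfilt] at htraj
    have hwB : wgt k B.card ≤ w₀ := wgt_mono _ (by omega)
    have h2w : 2 * w₀ ≤ Dn := by omega
    have hchain : w₀ * (2 * q * (Ext s ∩ W).card) ≤ w₀ * (Ext s).card := by
      calc w₀ * (2 * q * (Ext s ∩ W).card) = q * (2 * w₀) * (Ext s ∩ W).card := by ring
        _ ≤ q * Dn * (Ext s ∩ W).card := by
            exact Nat.mul_le_mul_right _ (Nat.mul_le_mul_left _ h2w)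
        _ ≤ wgt k B.card * (Ext s).card := htraj
        _ ≤ w₀ * (Ext s).card := Nat.mul_le_mul_right _ hwB
    exact Nat.le_of_mul_le_mul_left hchain (by omega)
  · -- freshness of x
    intro l _ p hp
    cases hl : l.2 <;> simp only [if_true, if_false, Bool.false_eq_true]
    · exact fun hh => hx (hh ▸ snd_mem_Pts hp)
    · exact fun hh => hx (hh ▸ fst_mem_Pts hp)
  · -- points of s lie in B
    intro i p hp
    exact ⟨mem_insert_of_mem (fst_mem_Pts hp), mem_insert_of_mem (snd_mem_Pts hp)⟩
  · -- the continuation bound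
    intro s' B' hB' hcard hms
    apply hF s' hms
    have h1 : (Pts s').card ≤ B'.card := Finset.card_le_card (Pts_subset hB')
    omega

lemma MAIN (M : List (Fin d × Bool)) (hM : M ≠ []) (hch : List.Chain' RedL M)
    (W : Finset (Tup n d)) (hW : ∀ π ∈ W, ∀ z, run M π z = z) :
    ∀ (τ : ℕ) (s : Sys n d),
    2 * ((M.length - 1) * ((Pts s).card + τ * M.length + M.length + 1) + 1)
      + (msum s + τ * M.length + M.length)
      + ((Pts s).card + τ * M.length + M.length) ≤ n →
    2 ^ (τ + 1) * (Ext s ∩ W).card ≤ (Ext s).card := by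
  have hk : 1 ≤ M.length := List.length_pos_iff.mpr hM
  intro τ
  induction τ with
  | zero =>
    intro s hHc
    have hnum : 2 * ((M.length - 1) * ((Pts s).card + M.length) + 1)
        + (msum s + M.length) + ((Pts s).card + 1) ≤ n := by
      have hmono : (M.length - 1) * ((Pts s).card + M.length)
          ≤ (M.length - 1) * ((Pts s).card + 0 * M.length + M.length + 1) :=
        Nat.mul_le_mul_left _ (by omega)
      omega
    have := ONE M hM hch W hW 1 s (fun s' _ _ => by
      simpa using Finset.card_le_card (Finset.inter_subset_left (s₂ := W))) hnum
    simpa using this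
  | succ τ ih =>
    intro s hHc
    have hnum : 2 * ((M.length - 1) * ((Pts s).card + M.length) + 1)
        + (msum s + M.length) + ((Pts s).card + 1) ≤ n := by
      have hmono : (M.length - 1) * ((Pts s).card + M.length)
          ≤ (M.length - 1) * ((Pts s).card + (τ+1) * M.length + M.length + 1) :=
        Nat.mul_le_mul_left _ (by nlinarith)
      have h1 : (Pts s).card + 1 ≤ (Pts s).card + (τ+1) * M.length + M.length := by nlinarith
      omega
    have hF : ∀ s' : Sys n d, msum s' ≤ msum s + M.length →
        (Pts s').card ≤ (Pts s).card + M.length →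
        2 ^ (τ + 1) * (Ext s' ∩ W).card ≤ (Ext s').card := by
      intro s' hms hpc
      apply ih s'
      have hmono : (M.length - 1) * ((Pts s').card + τ * M.length + M.length + 1)
          ≤ (M.length - 1) * ((Pts s).card + (τ+1) * M.length + M.length + 1) :=
        Nat.mul_le_mul_left _ (by nlinarith)
      have h2 : (τ + 1) * M.length = τ * M.length + M.length := by ring
      omega
    have := ONE M hM hch W hW (2 ^ (τ + 1)) s hF hnum
    calc 2 ^ (τ + 1 + 1) * (Ext s ∩ W).card
        = 2 * 2 ^ (τ + 1) * (Ext s ∩ W).card := by ring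
      _ ≤ (Ext s).card := this

lemma prod_eq_run (L : List (Fin d × Bool)) (π : Tup n d) (z : Fin n) :
    (List.prod (L.map fun x => cond x.2 (π x.1) (π x.1)⁻¹)) z = run L.reverse π z := by
  induction L generalizing z with
  | nil => simp [run]
  | cons l L ihl =>
    simp only [List.map_cons, List.prod_cons, List.reverse_cons, run_append,
      Equiv.Perm.mul_apply]
    rw [ihl]
    rcases l with ⟨i, e⟩
    cases e <;> simp [run, applyL]

lemma exists_of_not_chain' {α : Type*} {R : α → α → Prop} :
    ∀ L : List α, ¬ List.Chain' R L → ∃ L₁ a b L₂, L = L₁ ++ a :: b :: L₂ ∧ ¬ R a b := by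
  intro L
  induction L with
  | nil => intro h; exact absurd List.isChain_nil h
  | cons x L ih =>
    intro h
    cases L with
    | nil => exact absurd (List.isChain_singleton x) h
    | cons y t =>
      unfold List.Chain' at h
      rw [List.isChain_cons_cons] at h
      push_neg at h
      by_cases hxy : R x y
      · obtain ⟨L₁, a, b, L₂, heq, hab⟩ := ih (h hxy)
        exact ⟨x :: L₁, a, b, L₂, by rw [List.cons_append, ← heq], hab⟩
      · exact ⟨[], x, y, t, rfl, hxy⟩

lemma chain'_of_reduce (L : List (Fin d × Bool)) (h : FreeGroup.reduce L = L) :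
    List.Chain' RedL L := by
  by_contra hc
  obtain ⟨L₁, a, b, L₂, rfl, hab⟩ := exists_of_not_chain' L hc
  unfold RedL at hab
  push_neg at hab
  obtain ⟨h1, h2⟩ := hab
  have hb : b = (a.1, !a.2) := by
    rcases a with ⟨a1, a2⟩; rcases b with ⟨b1, b2⟩
    simp only at h1 h2
    subst h1
    cases a2 <;> cases b2 <;> simp_all
  rw [hb] at h
  exact FreeGroup.reduce.not h

lemma chain'_reverse_red (L : List (Fin d × Bool)) (h : List.Chain' RedL L) :
    List.Chain' RedL L.reverse := by
  unfold List.Chain' at h ⊢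
  rw [List.isChain_reverse]
  refine h.imp ?_
  intro a b hab h1
  exact (hab h1.symm).symm

lemma arith1 (n k t : ℕ) (hk : 1 ≤ k) (ht : 1 ≤ t) (h4t : 4 * k ^ 2 * t ≤ n) :
    2 * ((k - 1) * (0 + (t - 1) * k + k + 1) + 1) + (0 + (t - 1) * k + k)
      + (0 + (t - 1) * k + k) ≤ n := by
  obtain ⟨k', rfl⟩ : ∃ k', k = k' + 1 := ⟨k - 1, by omega⟩
  obtain ⟨t', rfl⟩ : ∃ t', t = t' + 1 := ⟨t - 1, by omega⟩
  simp only [Nat.add_sub_cancel, Nat.zero_add]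
  nlinarith [h4t]

lemma keyBound (n d k : ℕ) (w : FreeGroup (Fin d)) (hw : w ≠ 1)
    (hnorm : FreeGroup.norm w = k) (hn : 4 * k ^ 2 ≤ n) :
    probTuple n d (fun π => FreeGroup.lift π w = 1) ≤ ((2 : ℝ) ^ (n / (4 * k ^ 2)))⁻¹ := by
  have hk : 0 < k := by
    rcases Nat.eq_zero_or_pos k with h | h
    · exact absurd (FreeGroup.norm_eq_zero.mp (h ▸ hnorm)) hw
    · exact h
  set M : List (Fin d × Bool) := w.toWord.reverse with hMdef
  have htw : w.toWord ≠ [] := fun h => hw (FreeGroup.toWord_eq_nil_iff.mp h)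
  have hM : M ≠ [] := by simpa [hMdef] using htw
  have hlen : M.length = k := by
    rw [hMdef, List.length_reverse]
    exact hnorm
  have hch : List.Chain' RedL M :=
    chain'_reverse_red _ (chain'_of_reduce _ (FreeGroup.reduce_toWord w))
  set W : Finset (Tup n d) := Finset.univ.filter (fun π => ∀ z, run M π z = z) with hWdef
  have hWiff : ∀ π : Tup n d, (FreeGroup.lift π w = 1) ↔ (∀ z, run M π z = z) := by
    intro π
    have heval : ∀ z, (FreeGroup.lift π w) z = run M π z := by
      intro z
      conv_lhs => rw [← FreeGroup.mk_toWord (x := w)]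
      rw [FreeGroup.lift_mk]
      exact prod_eq_run w.toWord π z
    constructor
    · intro h z; rw [← heval z, h]; rfl
    · intro h
      ext z
      rw [heval z, h z]
      rfl
  have hW : ∀ π ∈ W, ∀ z, run M π z = z := by
    intro π hπ
    exact (Finset.mem_filter.mp hπ).2
  set t := n / (4 * k ^ 2) with htdef
  have h4pos : 0 < 4 * k ^ 2 := by positivity
  have ht1 : 1 ≤ t := (Nat.one_le_div_iff h4pos).mpr hn
  have h4t : 4 * k ^ 2 * t ≤ n := by
    rw [htdef, mul_comm]
    exact Nat.div_mul_le_self n _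
  -- apply MAIN to the empty system
  have hEmpty : ∀ i : Fin d, (fun _ : Fin d => (∅ : Finset (Fin n × Fin n))) i = ∅ :=
    fun _ => rfl
  have hPts0 : (Pts (n := n) (d := d) (fun _ => ∅)).card = 0 := by
    rw [Finset.card_eq_zero]
    ext z
    simp [Pts]
  have hms0 : msum (n := n) (d := d) (fun _ => ∅) = 0 := by
    simp [msum]
  have hnum : 2 * ((M.length - 1) * ((Pts (n := n) (d := d) (fun _ => ∅)).card
        + (t - 1) * M.length + M.length + 1) + 1)
      + (msum (n := n) (d := d) (fun _ => ∅) + (t - 1) * M.length + M.length)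
      + ((Pts (n := n) (d := d) (fun _ => ∅)).card + (t - 1) * M.length + M.length) ≤ n := by
    rw [hPts0, hms0, hlen]
    exact arith1 n k t (by omega) ht1 h4t
  have hmain := MAIN M hM hch W hW (t - 1) (fun _ => ∅) hnum
  have hExt0 : Ext (n := n) (d := d) (fun _ => ∅) = Finset.univ := by
    ext π
    simp [mem_Ext]
  rw [hExt0, Finset.univ_inter, Nat.sub_add_cancel ht1] at hmain
  -- translate to probTuple
  have hNpos : (0 : ℝ) < (Fintype.card (Tup n d) : ℝ) := by
    exact_mod_cast Fintype.card_pos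
  have hPeq : probTuple n d (fun π => FreeGroup.lift π w = 1)
      = (W.card : ℝ) / (Fintype.card (Tup n d) : ℝ) := by
    unfold probTuple
    congr 2
    congr 1
    ext π
    simp only [Finset.mem_filter, Finset.mem_univ, true_and, hWdef]
    exact hWiff π
  rw [hPeq]
  rw [div_le_iff₀ hNpos]
  have hcast : (W.card : ℝ) * 2 ^ t ≤ (Fintype.card (Tup n d) : ℝ) := by
    have : 2 ^ t * W.card ≤ Fintype.card (Tup n d) := by
      simpa [Finset.card_univ] using hmain
    exact_mod_cast (mul_comm (2 ^ t) W.card) ▸ this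
  have h2pos : (0 : ℝ) < 2 ^ t := by positivity
  calc (W.card : ℝ) = (W.card : ℝ) * 2 ^ t * (2 ^ t)⁻¹ := by field_simp
    _ ≤ (Fintype.card (Tup n d) : ℝ) * (2 ^ t)⁻¹ := by
        exact mul_le_mul_of_nonneg_right hcast (by positivity)
    _ = ((2 : ℝ) ^ t)⁻¹ * (Fintype.card (Tup n d) : ℝ) := by ring

lemma div_lt_t_succ (n k : ℕ) (hk : 0 < k) :
    (n : ℝ) / (4 * (k : ℝ) ^ 2) < (n / (4 * k ^ 2) : ℕ) + 1 := by
  have h4pos : 0 < 4 * k ^ 2 := by positivity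
  have hdm := Nat.div_add_mod n (4 * k ^ 2)
  have hm : n % (4 * k ^ 2) < 4 * k ^ 2 := Nat.mod_lt _ h4pos
  have h1 : n < (n / (4 * k ^ 2) + 1) * (4 * k ^ 2) := by
    calc n = 4 * k ^ 2 * (n / (4 * k ^ 2)) + n % (4 * k ^ 2) := hdm.symm
      _ < 4 * k ^ 2 * (n / (4 * k ^ 2)) + 4 * k ^ 2 := by omega
      _ = (n / (4 * k ^ 2) + 1) * (4 * k ^ 2) := by ring
  have h2 : (n : ℝ) < ((n / (4 * k ^ 2) : ℕ) + 1) * (4 * (k : ℝ) ^ 2) := by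
    exact_mod_cast h1
  rw [div_lt_iff₀ (by positivity)]
  exact h2

end WordProb

end WordProb


theorem prob_relation_exp_bound :
    (∀ n d k : ℕ, 1 ≤ d → ∀ w : FreeGroup (Fin d), w ≠ 1 → FreeGroup.norm w = k →
        0 < k → 4 * k ^ 2 ≤ n →
        probTuple n d (fun π => FreeGroup.lift π w = 1) ≤
          (2 : ℝ) ^ ((1 : ℝ) - (n : ℝ) / (4 * (k : ℝ) ^ 2))) ∧
    (∃ c > (0 : ℝ), ∀ n d k : ℕ, 1 ≤ d → ∀ w : FreeGroup (Fin d), w ≠ 1 →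
        FreeGroup.norm w = k → 0 < k → 4 * k ^ 2 ≤ n →
        probTuple n d (fun π => FreeGroup.lift π w = 1) ≤
          Real.exp (-(c * (n : ℝ) / (k : ℝ) ^ 2))) := by
  have hlog2 : (0 : ℝ) < Real.log 2 := Real.log_pos one_lt_two
  constructor
  · intro n d k _ w hw hnorm hk hn
    have hkey := WordProb.keyBound n d k w hw hnorm hn
    refine hkey.trans ?_
    set t := n / (4 * k ^ 2) with htdef
    have hX4 : (n : ℝ) / (4 * (k : ℝ) ^ 2) < (t : ℝ) + 1 := WordProb.div_lt_t_succ n k hk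
    have h1 : ((2 : ℝ) ^ t)⁻¹ = (2 : ℝ) ^ (-(t : ℝ)) := by
      rw [← Real.rpow_natCast 2 t, ← Real.rpow_neg (by norm_num)]
    rw [h1]
    rw [Real.rpow_le_rpow_left_iff one_lt_two]
    linarith
  · refine ⟨Real.log 2 / 8, by positivity, ?_⟩
    intro n d k _ w hw hnorm hk hn
    have hkey := WordProb.keyBound n d k w hw hnorm hn
    refine hkey.trans ?_
    set t := n / (4 * k ^ 2) with htdef
    have h4pos : 0 < 4 * k ^ 2 := by positivity
    have ht1 : 1 ≤ t := (Nat.one_le_div_iff h4pos).mpr hn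
    have ht1R : (1 : ℝ) ≤ (t : ℝ) := by exact_mod_cast ht1
    have hX4 : (n : ℝ) / (4 * (k : ℝ) ^ 2) < (t : ℝ) + 1 := WordProb.div_lt_t_succ n k hk
    have hK : (0 : ℝ) < (k : ℝ) ^ 2 := by
      have : (0 : ℝ) < (k : ℝ) := by exact_mod_cast hk
      positivity
    have hXK : (n : ℝ) / ((k : ℝ) ^ 2) < 4 * ((t : ℝ) + 1) := by
      rw [div_lt_iff₀ hK]
      rw [div_lt_iff₀ (by positivity)] at hX4
      nlinarith
    have h8 : (n : ℝ) / ((k : ℝ) ^ 2) ≤ 8 * t := by linarith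
    have h2t : ((2 : ℝ) ^ t)⁻¹ = Real.exp (-((t : ℝ) * Real.log 2)) := by
      rw [← Real.rpow_natCast 2 t, Real.rpow_def_of_pos (by norm_num : (0:ℝ) < 2), ← Real.exp_neg]
      ring_nf
    rw [h2t, Real.exp_le_exp]
    have hfin : Real.log 2 / 8 * (n : ℝ) / (k : ℝ) ^ 2 ≤ (t : ℝ) * Real.log 2 := by
      have heq : Real.log 2 / 8 * (n : ℝ) / (k : ℝ) ^ 2
          = Real.log 2 / 8 * ((n : ℝ) / (k : ℝ) ^ 2) := by ring
      rw [heq]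
      calc Real.log 2 / 8 * ((n : ℝ) / (k : ℝ) ^ 2)
          ≤ Real.log 2 / 8 * (8 * t) :=
            mul_le_mul_of_nonneg_left h8 (by positivity)
        _ = (t : ℝ) * Real.log 2 := by ring
    linarith
end
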